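/- arXiv:2101.01994 — 7 statements merged into one kernel-verified Lean document; each statement's English description precedes it below -/
import Mathlib

section
/- Let E be a Banach space (over ℝ or ℂ) and let F be a maximal convex subset of the unit sphere S(E). Then there exists an extreme point φ of the closed unit ball B(E*) of the dual space E* such that φ⁻¹(1) ∩ S(E) = F. -/
open RCLike

/-- If `a • z + b • w = 1` with `a, b > 0`, `a + b = 1`, and `‖z‖, ‖w‖ ≤ 1`,
then `z = w = 1`. -/
private lemma aux_combo_eq_one {𝕜 : Type*} [RCLike 𝕜] {a b : ℝ} {z w : 𝕜}
    (ha : 0 < a) (hb : 0 < b) (hab : a + b = 1) (hz : ‖z‖ ≤ 1) (hw : ‖w‖ ≤ 1)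
    (h : a • z + b • w = 1) : z = 1 ∧ w = 1 := by
  have hre : a * re z + b * re w = 1 := by
    have := congrArg (re : 𝕜 → ℝ) h
    simpa [RCLike.smul_re] using this
  have hz1 : re z ≤ 1 := (re_le_norm z).trans hz
  have hw1 : re w ≤ 1 := (re_le_norm w).trans hw
  have hrez : re z = 1 := by nlinarith
  have hrew : re w = 1 := by nlinarith
  constructor
  · have : ((re z : ℝ) : 𝕜) = z := re_eq_self_of_le (by rw [hrez]; exact hz)
    rw [hrez] at this; simpa using this.symm
  · have : ((re w : ℝ) : 𝕜) = w := re_eq_self_of_le (by rw [hrew]; exact hw)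
    rw [hrew] at this; simpa using this.symm

/-- For a maximal convex subset `F` of the unit sphere of a (real or complex) Banach
space `E` there is an extreme point `φ` of the closed unit ball of the dual `E*` with
`φ⁻¹(1) ∩ S(E) = F`. -/
theorem maximal_convex_subset_eq_extreme_functional_slice
    {𝕜 : Type*} [RCLike 𝕜] {E : Type*} [NormedAddCommGroup E] [NormedSpace 𝕜 E]
    [NormedSpace ℝ E] [IsScalarTower ℝ 𝕜 E] [CompleteSpace E]
    (F : Set E) (hFsub : F ⊆ Metric.sphere (0 : E) 1) (hFconv : Convex ℝ F)
    (hFmax : ∀ G : Set E, G ⊆ Metric.sphere (0 : E) 1 → Convex ℝ G → F ⊆ G → F = G) :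
    ∃ φ : E →L[𝕜] 𝕜,
      φ ∈ Set.extremePoints ℝ (Metric.closedBall (0 : E →L[𝕜] 𝕜) 1) ∧
      {e : E | φ e = 1} ∩ Metric.sphere (0 : E) 1 = F := by
  classical
  by_cases hFne : F.Nonempty
  swap
  · -- `F` is empty, so the sphere is empty and every functional vanishes.
    rw [Set.not_nonempty_iff_eq_empty] at hFne
    subst hFne
    have hsph : Metric.sphere (0 : E) 1 = ∅ := by
      by_contra h
      obtain ⟨e, he⟩ := Set.nonempty_iff_ne_empty.2 h
      have := hFmax {e} (Set.singleton_subset_iff.2 he) (convex_singleton e)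
        (Set.empty_subset _)
      exact (Set.singleton_nonempty e).ne_empty this.symm
    have hzero : ∀ x : E, x = 0 := by
      intro x
      by_contra hx
      have hnx : ‖x‖ ≠ 0 := norm_ne_zero_iff.2 hx
      have : (‖x‖⁻¹ • x : E) ∈ Metric.sphere (0 : E) 1 := by
        simp [norm_smul, abs_of_nonneg (inv_nonneg.2 (norm_nonneg x)),
          inv_mul_cancel₀ hnx]
      rw [hsph] at this; exact this
    have hdual : ∀ ψ : E →L[𝕜] 𝕜, ψ = 0 := by
      intro ψ; ext x; rw [hzero x]; simp
    refine ⟨0, ⟨by simp, ?_⟩, by rw [hsph]; simp⟩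
    intro x₁ _ x₂ _ _
    exact hdual x₁
  obtain ⟨e₀, he₀⟩ := hFne
  -- Step 1: separate the open unit ball from `F`.
  have hdisj : Disjoint (Metric.ball (0 : E) 1) F := by
    rw [Set.disjoint_left]
    intro x hx hxF
    have h1 : ‖x‖ < 1 := by simpa using hx
    have h2 : ‖x‖ = 1 := by simpa using hFsub hxF
    linarith
  obtain ⟨f, u, hfu, huf⟩ :=
    _root_.geometric_hahn_banach_open (convex_ball (0 : E) 1) Metric.isOpen_ball hFconv hdisj
  have hu0 : 0 < u := by simpa using hfu 0 (by simp)
  -- On the closed ball, `f ≤ u`.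
  have hcb : ∀ x ∈ Metric.closedBall (0 : E) 1, f x ≤ u := by
    intro x hx
    have hclosed : IsClosed {y : E | f y ≤ u} := isClosed_le f.continuous continuous_const
    have hsub : Metric.ball (0 : E) 1 ⊆ {y : E | f y ≤ u} := fun y hy => (hfu y hy).le
    have := closure_minimal hsub hclosed
    rw [closure_ball (0 : E) one_ne_zero] at this
    exact this hx
  have habs : ∀ x : E, ‖x‖ = 1 → |f x| ≤ u := by
    intro x hx
    have h1 : f x ≤ u := hcb x (by simp [hx])
    have h2 : f (-x) ≤ u := hcb (-x) (by simp [hx])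
    rw [map_neg] at h2
    exact abs_le.2 ⟨by linarith, h1⟩
  have hfF : ∀ x ∈ F, f x = u := by
    intro x hx
    have h1 : u ≤ f x := huf x hx
    have h2 : f x ≤ u := by
      have := habs x (by simpa using hFsub hx)
      exact (abs_le.1 this).2
    linarith
  -- Step 2: normalize and extend to a `𝕜`-linear functional of norm ≤ 1 equal to 1 on F.
  set g : E →L[ℝ] ℝ := u⁻¹ • f with hg
  have hgnorm : ‖g‖ ≤ 1 := by
    refine ContinuousLinearMap.opNorm_le_of_unit_norm zero_le_one ?_
    intro x hx
    have : ‖g x‖ = u⁻¹ * |f x| := by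
      simp [hg, abs_mul, abs_of_nonneg (inv_nonneg.2 hu0.le), hu0.le]
    rw [this]
    calc u⁻¹ * |f x| ≤ u⁻¹ * u :=
          mul_le_mul_of_nonneg_left (habs x hx) (inv_nonneg.2 hu0.le)
      _ = 1 := inv_mul_cancel₀ hu0.ne'
  have hgF : ∀ x ∈ F, g x = 1 := by
    intro x hx
    simp [hg, hfF x hx, inv_mul_cancel₀ hu0.ne']
  set φ₀ : E →L[𝕜] 𝕜 := g.extendTo𝕜' with hφ₀
  have hφ₀norm : ‖φ₀‖ ≤ 1 := by rw [hφ₀]; exact (StrongDual.norm_extendRCLike (𝕜 := 𝕜) g).le.trans hgnorm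
  have hφ₀F : ∀ x ∈ F, φ₀ x = 1 := by
    intro x hx
    have hre : re (φ₀ x) = g x := g.toLinearMap.extendTo𝕜'_apply_re (𝕜 := 𝕜) x
    have hre1 : re (φ₀ x) = 1 := by rw [hre, hgF x hx]
    have hnorm : ‖φ₀ x‖ ≤ 1 := by
      calc ‖φ₀ x‖ ≤ ‖φ₀‖ * ‖x‖ := φ₀.le_opNorm x
        _ ≤ 1 * 1 := by
            refine mul_le_mul hφ₀norm ?_ (norm_nonneg _) zero_le_one
            simpa using (hFsub hx).le
        _ = 1 := one_mul 1
    have := re_eq_self_of_le (a := φ₀ x) (by rw [hre1]; exact hnorm)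
    rw [hre1] at this
    simpa using this.symm
  -- Step 3: the face of functionals equal to 1 on F; Krein–Milman in the weak-* topology.
  set S : Set (WeakDual 𝕜 E) :=
    WeakDual.toStrongDual ⁻¹' Metric.closedBall 0 1 ∩ {ψ : WeakDual 𝕜 E | ∀ x ∈ F, ψ x = 1}
    with hSdef
  have hScomp : IsCompact S := by
    refine (WeakDual.isCompact_closedBall (0 : StrongDual 𝕜 E) 1).inter_right ?_
    have : {ψ : WeakDual 𝕜 E | ∀ x ∈ F, ψ x = 1} = ⋂ x ∈ F, {ψ : WeakDual 𝕜 E | ψ x = 1} := by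
      ext ψ; simp
    rw [this]
    exact isClosed_biInter fun x _ => isClosed_eq (WeakDual.eval_continuous x) continuous_const
  have hψ₀S : (WeakDual.toStrongDual.symm φ₀ : WeakDual 𝕜 E) ∈ S :=
    ⟨by simpa [Metric.mem_closedBall, dist_zero_right] using hφ₀norm, fun x hx => hφ₀F x hx⟩
  haveI : LocallyConvexSpace ℝ (WeakDual 𝕜 E) := WeakBilin.locallyConvexSpace
  obtain ⟨ψ, hψext⟩ := hScomp.extremePoints_nonempty ⟨_, hψ₀S⟩
  obtain ⟨hψS, hψext⟩ := hψext
  set φ : E →L[𝕜] 𝕜 := WeakDual.toStrongDual ψ with hφdef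
  have hφnorm : ‖φ‖ ≤ 1 := by
    have := hψS.1
    simpa [Metric.mem_closedBall, dist_zero_right] using this
  have hφF : ∀ x ∈ F, φ x = 1 := hψS.2
  refine ⟨φ, ?_, ?_⟩
  · -- φ is an extreme point of the closed unit ball.
    refine mem_extremePoints.2 ⟨by simpa [Metric.mem_closedBall, dist_zero_right] using
      hφnorm, ?_⟩
    intro x₁ hx₁ x₂ hx₂ hseg
    obtain ⟨a, b, ha, hb, hab, hsum⟩ := hseg
    rw [Metric.mem_closedBall, dist_zero_right] at hx₁ hx₂
    -- x₁ and x₂ are also equal to 1 on F.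
    have hx₁F : ∀ x ∈ F, x₁ x = 1 ∧ x₂ x = 1 := by
      intro x hx
      have hxx : ‖x‖ = 1 := by simpa using hFsub hx
      have h1 : ‖x₁ x‖ ≤ 1 := by
        calc ‖x₁ x‖ ≤ ‖x₁‖ * ‖x‖ := x₁.le_opNorm x
          _ ≤ 1 := by rw [hxx, mul_one]; exact hx₁
      have h2 : ‖x₂ x‖ ≤ 1 := by
        calc ‖x₂ x‖ ≤ ‖x₂‖ * ‖x‖ := x₂.le_opNorm x
          _ ≤ 1 := by rw [hxx, mul_one]; exact hx₂
      have hcombo : a • x₁ x + b • x₂ x = 1 := by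
        have := congrArg (fun (h : E →L[𝕜] 𝕜) => h x) hsum
        simp only [ContinuousLinearMap.add_apply, ContinuousLinearMap.coe_smul',
          Pi.smul_apply] at this
        rw [this]
        exact hφF x hx
      exact aux_combo_eq_one ha hb hab h1 h2 hcombo
    -- So their weak-* versions lie in S, and ψ is in the open segment between them.
    have hψ₁S : (WeakDual.toStrongDual.symm x₁ : WeakDual 𝕜 E) ∈ S :=
      ⟨by simpa [Metric.mem_closedBall, dist_zero_right] using hx₁,
        fun x hx => (hx₁F x hx).1⟩
    have hψ₂S : (WeakDual.toStrongDual.symm x₂ : WeakDual 𝕜 E) ∈ S :=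
      ⟨by simpa [Metric.mem_closedBall, dist_zero_right] using hx₂,
        fun x hx => (hx₁F x hx).2⟩
    have hseg' : ψ ∈ openSegment ℝ (WeakDual.toStrongDual.symm x₁ : WeakDual 𝕜 E)
        (WeakDual.toStrongDual.symm x₂) := ⟨a, b, ha, hb, hab, hsum⟩
    exact ⟨hψext hψ₁S hψ₂S hseg', hψext hψ₂S hψ₁S
      ⟨b, a, hb, ha, (add_comm b a).trans hab, (add_comm (b • x₂) (a • x₁)).trans hsum⟩⟩
  · -- The slice equals F.
    set G : Set E := {e : E | φ e = 1} ∩ Metric.sphere (0 : E) 1 with hGdef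
    have hGsub : G ⊆ Metric.sphere (0 : E) 1 := Set.inter_subset_right
    have hGconv : Convex ℝ G := by
      rintro x ⟨hx1, hx2⟩ y ⟨hy1, hy2⟩ a b ha hb hab
      have hφm : φ (a • x + b • y) = 1 := by
        rw [map_add, φ.map_smul_of_tower, φ.map_smul_of_tower, hx1, hy1, ← add_smul, hab,
          one_smul]
      refine ⟨hφm, ?_⟩
      have hx2' : ‖x‖ = 1 := by simpa using hx2
      have hy2' : ‖y‖ = 1 := by simpa using hy2
      have hle : ‖a • x + b • y‖ ≤ 1 := by
        calc ‖a • x + b • y‖ ≤ ‖a • x‖ + ‖b • y‖ := norm_add_le _ _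
          _ = a * ‖x‖ + b * ‖y‖ := by
              rw [norm_smul, norm_smul, Real.norm_eq_abs, Real.norm_eq_abs,
                abs_of_nonneg ha, abs_of_nonneg hb]
          _ = 1 := by rw [hx2', hy2', mul_one, mul_one, hab]
      have hge : 1 ≤ ‖a • x + b • y‖ := by
        have h1 : ‖φ (a • x + b • y)‖ = 1 := by rw [hφm]; simp
        have h2 : ‖φ (a • x + b • y)‖ ≤ ‖φ‖ * ‖a • x + b • y‖ := φ.le_opNorm _
        calc (1 : ℝ) = ‖φ (a • x + b • y)‖ := h1.symm
          _ ≤ ‖φ‖ * ‖a • x + b • y‖ := h2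
          _ ≤ 1 * ‖a • x + b • y‖ :=
              mul_le_mul_of_nonneg_right hφnorm (norm_nonneg _)
          _ = ‖a • x + b • y‖ := one_mul _
      simp [le_antisymm hle hge]
    have hFG : F ⊆ G := fun x hx => ⟨hφF x hx, hFsub hx⟩
    exact (hFmax G hGsub hGconv hFG).symm
end

section
/- Let A be a uniform algebra on a compact Hausdorff space X. A subset F of S(A) is a maximal convex subset of S(A) if and only if there exist a point x ∈ Ch(A) and a unimodular complex number λ ∈ 𝕋 such that F = {f ∈ S(A) : f(x) = λ}. -/
open scoped ComplexConjugate

/-- A peaking function for the set `K` in a (sub)algebra `A` of `C(X, ℂ)`: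
`f ∈ A`, `‖f‖ = 1`, `K = f⁻¹(1)` and `{x : |f(x)| = 1} = f⁻¹(1) = K`. -/
def IsPeakingFunction {X : Type*} [TopologicalSpace X] [CompactSpace X]
    (A : Subalgebra ℂ C(X, ℂ)) (f : C(X, ℂ)) (K : Set X) : Prop :=
  f ∈ A ∧ ‖f‖ = 1 ∧ K = {x | f x = 1} ∧ {x | ‖f x‖ = 1} = K

/-- A peak set for `A`. -/
def IsPeakSet {X : Type*} [TopologicalSpace X] [CompactSpace X]
    (A : Subalgebra ℂ C(X, ℂ)) (K : Set X) : Prop :=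
  ∃ f, IsPeakingFunction A f K

/-- A weak peak set for `A`: an intersection of a nonempty family of peak sets. -/
def IsWeakPeakSet {X : Type*} [TopologicalSpace X] [CompactSpace X]
    (A : Subalgebra ℂ C(X, ℂ)) (K : Set X) : Prop :=
  ∃ S : Set (Set X), S.Nonempty ∧ (∀ E ∈ S, IsPeakSet A E) ∧ K = ⋂₀ S

/-- The Choquet boundary of a uniform algebra: the set of weak peak points. -/
def choquetBdry {X : Type*} [TopologicalSpace X] [CompactSpace X]
    (A : Subalgebra ℂ C(X, ℂ)) : Set X :=
  {x | IsWeakPeakSet A {x}}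

/-- The unit sphere `S(A)` of `A`, as a subset of `C(X, ℂ)`. -/
def uaSphere {X : Type*} [TopologicalSpace X] [CompactSpace X]
    (A : Subalgebra ℂ C(X, ℂ)) : Set C(X, ℂ) :=
  {f | f ∈ A ∧ ‖f‖ = 1}

/-- The set `F_{x,λ} = {f ∈ S(A) : f x = λ}`. -/
def uaSlice {X : Type*} [TopologicalSpace X] [CompactSpace X]
    (A : Subalgebra ℂ C(X, ℂ)) (x : X) (lam : ℂ) : Set C(X, ℂ) :=
  {f | f ∈ uaSphere A ∧ f x = lam}

noncomputable def Complex.abs : AbsoluteValue ℂ ℝ where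
  toFun z := ‖z‖
  map_mul' := norm_mul
  nonneg' := norm_nonneg
  eq_zero' _ := norm_eq_zero
  add_le' := norm_add_le

theorem Complex.norm_eq_abs (z : ℂ) : ‖z‖ = Complex.abs z := rfl

@[simp]
theorem Complex.abs_conj (z : ℂ) : Complex.abs (conj z) = Complex.abs z := Complex.norm_conj z

@[simp]
theorem Complex.abs_two : Complex.abs 2 = 2 := Complex.norm_two

@[simp]
theorem Complex.abs_ofReal (r : ℝ) : Complex.abs r = |r| := by
  show ‖(r : ℂ)‖ = |r|
  simp

theorem Complex.continuous_abs : Continuous Complex.abs := continuous_norm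

theorem Complex.sq_abs (z : ℂ) : Complex.abs z ^ 2 = Complex.normSq z := Complex.sq_norm z

theorem Complex.re_le_abs (z : ℂ) : z.re ≤ Complex.abs z := Complex.re_le_norm z

theorem Complex.abs_apply (z : ℂ) : Complex.abs z = Real.sqrt (Complex.normSq z) := by
  show ‖z‖ = _
  exact Complex.norm_def z
open scoped ComplexConjugate

private lemma mcs_abs_add {a b : ℂ} (ha : Complex.abs a ≤ 1) (hb : Complex.abs b ≤ 1)
    (h : Complex.abs (a + b) = 2) : a = b ∧ Complex.abs a = 1 := by
  have hre : (a * (starRingEnd ℂ) b).re ≤ 1 := by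
    refine le_trans (Complex.re_le_abs _) ?_
    rw [map_mul, Complex.abs_conj]
    exact mul_le_one₀ ha (Complex.abs.nonneg _) hb
  have hns : Complex.normSq (a + b) = 4 := by
    have h2 := Complex.sq_abs (a + b)
    rw [h] at h2; nlinarith
  have hnsa : Complex.normSq a ≤ 1 := by
    have := Complex.sq_abs a
    nlinarith [Complex.abs.nonneg a]
  have hnsb : Complex.normSq b ≤ 1 := by
    have := Complex.sq_abs b
    nlinarith [Complex.abs.nonneg b]
  rw [Complex.normSq_add] at hns
  have h3 : Complex.normSq a = 1 := by linarith
  have h4 : (a * (starRingEnd ℂ) b).re = 1 := by linarith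
  have h5 : Complex.normSq b = 1 := by linarith
  constructor
  · have : Complex.normSq (a - b) = 0 := by rw [Complex.normSq_sub]; linarith
    have := Complex.normSq_eq_zero.mp this
    exact sub_eq_zero.mp this
  · rw [Complex.abs_apply, h3, Real.sqrt_one]

private lemma mcs_one_add {w : ℂ} (hw : Complex.abs w ≤ 1)
    (h : Complex.abs (1 + w) = 2) : w = 1 := by
  have := mcs_abs_add (by simp) hw h
  exact this.1.symm

private lemma mcs_norm_exists {X : Type*} [TopologicalSpace X] [CompactSpace X] [Nonempty X]
    (f : C(X, ℂ)) : ∃ x, Complex.abs (f x) = ‖f‖ := by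
  obtain ⟨x, -, hx⟩ := isCompact_univ.exists_isMaxOn (Set.univ_nonempty)
    (Complex.continuous_abs.comp f.continuous).continuousOn
  refine ⟨x, le_antisymm ?_ ?_⟩
  · rw [← Complex.norm_eq_abs]; exact f.norm_coe_le_norm x
  · have h0 : (0:ℝ) ≤ Complex.abs (f x) := Complex.abs.nonneg _
    rw [ContinuousMap.norm_le _ h0]
    intro y
    rw [Complex.norm_eq_abs]
    exact hx (Set.mem_univ y)

private lemma mcs_norm_one {X : Type*} [TopologicalSpace X] [CompactSpace X] [Nonempty X] :
    ‖(1 : C(X, ℂ))‖ = 1 := by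
  obtain ⟨x, hx⟩ := mcs_norm_exists (1 : C(X, ℂ))
  rw [← hx]; simp
section Aux
variable {X : Type*} [TopologicalSpace X] [CompactSpace X] {A : Subalgebra ℂ C(X, ℂ)}

private lemma mcs_peaking_of (q : C(X, ℂ)) (hq : q ∈ A) (hle : ∀ w, Complex.abs (q w) ≤ 1)
    (x₀ : X) (h1 : q x₀ = 1) (h2 : ∀ w, Complex.abs (q w) = 1 → q w = 1) :
    IsPeakingFunction A q {w | q w = 1} := by
  refine ⟨hq, ?_, rfl, ?_⟩
  · refine le_antisymm ((ContinuousMap.norm_le _ zero_le_one).mpr fun w => by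
      rw [Complex.norm_eq_abs]; exact hle w) ?_
    have := q.norm_coe_le_norm x₀
    rw [h1] at this; simpa using this
  · ext w
    constructor
    · exact h2 w
    · intro hw
      simp only [Set.mem_setOf_eq] at hw ⊢
      rw [hw]; simp

private lemma mcs_peaking_congr {q : C(X, ℂ)} {S S' : Set X}
    (h : IsPeakingFunction A q S) (hS : S = S') : IsPeakingFunction A q S' := hS ▸ h

/-- The standard peaking function `(1 + conj lam • f)/2` for the set `{f = lam}`. -/
private lemma mcs_peak {f : C(X, ℂ)} (hfA : f ∈ A) (hf : ∀ x, Complex.abs (f x) ≤ 1)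
    {lam : ℂ} (hlam : Complex.abs lam = 1) {x₀ : X} (hx₀ : f x₀ = lam) :
    IsPeakingFunction A ((2⁻¹ : ℂ) • ((1 : C(X, ℂ)) + (conj lam : ℂ) • f)) {x | f x = lam} := by
  set q : C(X, ℂ) := (2⁻¹ : ℂ) • ((1 : C(X, ℂ)) + (conj lam : ℂ) • f) with hqdef
  have hmul : lam * conj lam = 1 := by
    rw [Complex.mul_conj]
    norm_cast
    rw [← Complex.sq_abs, hlam]; norm_num
  have happ : ∀ w, q w = 2⁻¹ * (1 + conj lam * f w) := by
    intro w
    simp [hqdef, smul_eq_mul]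
    ring
  have habsc : ∀ w, Complex.abs (conj lam * f w) = Complex.abs (f w) := by
    intro w
    rw [map_mul, Complex.abs_conj, hlam, one_mul]
  have hcm : ∀ w, conj lam * f w = 1 → f w = lam := by
    intro w hw
    have : lam * (conj lam * f w) = lam * 1 := by rw [hw]
    rwa [← mul_assoc, hmul, one_mul, mul_one] at this
  have key : ∀ w, q w = 1 ↔ f w = lam := by
    intro w
    rw [happ]
    constructor
    · intro hw
      have h2 : (1 : ℂ) + conj lam * f w = 2 := by
        field_simp at hw
        linear_combination hw
      have : conj lam * f w = 1 := by linear_combination h2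
      exact hcm w this
    · intro hw
      rw [hw, mul_comm (conj lam) lam, hmul]
      norm_num
  have hqA : q ∈ A := A.smul_mem (A.add_mem (one_mem A) (A.smul_mem hfA _)) _
  have hle : ∀ w, Complex.abs (q w) ≤ 1 := by
    intro w
    rw [happ, map_mul]
    have : Complex.abs (1 + conj lam * f w) ≤ 2 := by
      calc Complex.abs (1 + conj lam * f w) ≤ Complex.abs 1 + Complex.abs (conj lam * f w) :=
            Complex.abs.add_le _ _
        _ ≤ 1 + 1 := by rw [habsc]; simpa using hf w
        _ = 2 := by norm_num
    have h2 : Complex.abs (2⁻¹ : ℂ) = 2⁻¹ := by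
      rw [map_inv₀, Complex.abs_two]
    rw [h2]
    nlinarith [Complex.abs.nonneg (1 + conj lam * f w)]
  have h2 : ∀ w, Complex.abs (q w) = 1 → q w = 1 := by
    intro w hw
    rw [key]
    rw [happ, map_mul, map_inv₀, Complex.abs_two] at hw
    have habs2 : Complex.abs (1 + conj lam * f w) = 2 := by
      field_simp at hw
      linarith
    have := mcs_one_add (by rw [habsc]; exact hf w) habs2
    exact hcm w this
  have := mcs_peaking_of q hqA hle x₀ (by rw [key]; exact hx₀) h2
  refine mcs_peaking_congr this ?_
  ext w; rw [Set.mem_setOf_eq, Set.mem_setOf_eq, key]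

/-- Intersection of two peak sets containing a common point is a peak set. -/
private lemma mcs_peak_inter {E₁ E₂ : Set X} (h₁ : IsPeakSet A E₁) (h₂ : IsPeakSet A E₂)
    {x : X} (hx₁ : x ∈ E₁) (hx₂ : x ∈ E₂) : IsPeakSet A (E₁ ∩ E₂) := by
  obtain ⟨p₁, hp₁A, hp₁n, hE₁, hE₁'⟩ := h₁
  obtain ⟨p₂, hp₂A, hp₂n, hE₂, hE₂'⟩ := h₂
  have hle₁ : ∀ w, Complex.abs (p₁ w) ≤ 1 := fun w => by
    rw [← Complex.norm_eq_abs, ← hp₁n]; exact p₁.norm_coe_le_norm w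
  have hle₂ : ∀ w, Complex.abs (p₂ w) ≤ 1 := fun w => by
    rw [← Complex.norm_eq_abs, ← hp₂n]; exact p₂.norm_coe_le_norm w
  set q : C(X, ℂ) := (2⁻¹ : ℂ) • (p₁ + p₂) with hqdef
  have happ : ∀ w, q w = 2⁻¹ * (p₁ w + p₂ w) := fun w => by
    simp [hqdef, smul_eq_mul]; ring
  have hagree : ∀ w, Complex.abs (p₁ w + p₂ w) = 2 → p₁ w = 1 ∧ p₂ w = 1 := by
    intro w hw
    obtain ⟨heq, habs⟩ := mcs_abs_add (hle₁ w) (hle₂ w) hw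
    have hw₁ : w ∈ E₁ := by rw [← hE₁']; exact habs
    have hp1 : p₁ w = 1 := by rw [hE₁] at hw₁; exact hw₁
    exact ⟨hp1, by rw [← heq, hp1]⟩
  have key : ∀ w, q w = 1 ↔ w ∈ E₁ ∩ E₂ := by
    intro w
    constructor
    · intro hw
      have habs : Complex.abs (p₁ w + p₂ w) = 2 := by
        have : p₁ w + p₂ w = 2 := by
          rw [happ] at hw
          field_simp at hw
          linear_combination hw
        rw [this, Complex.abs_two]
      obtain ⟨hp1, hp2⟩ := hagree w habs
      exact ⟨by rw [hE₁]; exact hp1, by rw [hE₂]; exact hp2⟩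
    · rintro ⟨hw₁, hw₂⟩
      rw [hE₁] at hw₁; rw [hE₂] at hw₂
      rw [happ, Set.mem_setOf_eq.mp hw₁, Set.mem_setOf_eq.mp hw₂]
      norm_num
  have hle : ∀ w, Complex.abs (q w) ≤ 1 := by
    intro w
    rw [happ, map_mul, map_inv₀, Complex.abs_two]
    have := Complex.abs.add_le (p₁ w) (p₂ w)
    nlinarith [hle₁ w, hle₂ w, Complex.abs.nonneg (p₁ w + p₂ w)]
  have h2 : ∀ w, Complex.abs (q w) = 1 → q w = 1 := by
    intro w hw
    rw [happ, map_mul, map_inv₀, Complex.abs_two] at hw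
    have habs : Complex.abs (p₁ w + p₂ w) = 2 := by field_simp at hw; linarith
    obtain ⟨hp1, hp2⟩ := hagree w habs
    rw [happ, hp1, hp2]; norm_num
  refine ⟨q, mcs_peaking_congr
    (mcs_peaking_of q (A.smul_mem (A.add_mem hp₁A hp₂A) _) hle x
      ((key x).mpr ⟨hx₁, hx₂⟩) h2) ?_⟩
  ext w; rw [Set.mem_setOf_eq, key]

/-- Slices are convex subsets of the sphere. -/
private lemma mcs_slice_sub (x : X) (lam : ℂ) : uaSlice A x lam ⊆ uaSphere A :=
  fun _ hf => hf.1

private lemma mcs_slice_conv [Nonempty X] (x : X) {lam : ℂ} (hlam : Complex.abs lam = 1) :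
    Convex ℝ (uaSlice A x lam) := by
  rintro f ⟨⟨hfA, hfn⟩, hfx⟩ g ⟨⟨hgA, hgn⟩, hgx⟩ a b ha hb hab
  have hmemA : a • f + b • g ∈ A := by
    rw [← algebraMap_smul ℂ a f, ← algebraMap_smul ℂ b g]
    exact A.add_mem (A.smul_mem hfA _) (A.smul_mem hgA _)
  have hval : (a • f + b • g) x = lam := by
    simp only [ContinuousMap.add_apply, ContinuousMap.smul_apply]
    rw [hfx, hgx, Complex.real_smul, Complex.real_smul, ← add_mul]
    norm_cast
    rw [hab]; norm_num
  have hnle : ‖a • f + b • g‖ ≤ 1 := by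
    calc ‖a • f + b • g‖ ≤ ‖a • f‖ + ‖b • g‖ := norm_add_le _ _
      _ = |a| * ‖f‖ + |b| * ‖g‖ := by rw [norm_smul, norm_smul, Real.norm_eq_abs, Real.norm_eq_abs]
      _ = 1 := by rw [hfn, hgn, abs_of_nonneg ha, abs_of_nonneg hb]; ring_nf; exact hab
  have hnge : (1:ℝ) ≤ ‖a • f + b • g‖ := by
    have := (a • f + b • g).norm_coe_le_norm x
    rw [hval, Complex.norm_eq_abs, hlam] at this
    exact this
  exact ⟨⟨hmemA, le_antisymm hnle hnge⟩, hval⟩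

private lemma mcs_peakset_closed {E : Set X} (h : IsPeakSet A E) : IsClosed E := by
  obtain ⟨p, -, -, hE, -⟩ := h
  rw [hE]
  exact isClosed_eq p.continuous continuous_const

/-- The reverse direction: a slice at a weak peak point absorbs any convex superset
within the sphere. -/
private lemma mcs_slice_maximal [Nonempty X] {x : X} (hx : IsWeakPeakSet A {x})
    {lam : ℂ} (hlam : Complex.abs lam = 1) :
    ∀ G : Set C(X, ℂ), G ⊆ uaSphere A → Convex ℝ G → uaSlice A x lam ⊆ G →
      G ⊆ uaSlice A x lam := by
  intro G hGsub hGconv hFG g hg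
  obtain ⟨hgA, hgn⟩ := hGsub hg
  obtain ⟨S₀, hS₀ne, hS₀pk, hxeq⟩ := hx
  have hxmem : x ∈ ⋂₀ S₀ := hxeq ▸ Set.mem_singleton x
  -- index type of peak sets containing x
  let ι := {E : Set X // IsPeakSet A E ∧ x ∈ E}
  obtain ⟨E₀, hE₀⟩ := hS₀ne
  have : Nonempty ι := ⟨⟨E₀, hS₀pk E₀ hE₀, Set.mem_sInter.mp hxmem E₀ hE₀⟩⟩
  let Z : ι → Set X := fun E => E.1 ∩ {y | g y = lam}
  have hZne : ∀ E : ι, (Z E).Nonempty := by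
    rintro ⟨E, hE, hxE⟩
    obtain ⟨p, hpA, hpn, hEeq, hEeq'⟩ := hE
    have hple : ∀ w, Complex.abs (p w) ≤ 1 := fun w => by
      rw [← Complex.norm_eq_abs, ← hpn]; exact p.norm_coe_le_norm w
    have hpx : p x = 1 := by rw [hEeq] at hxE; exact hxE
    have hlampF : lam • p ∈ uaSlice A x lam := by
      refine ⟨⟨A.smul_mem hpA _, ?_⟩, ?_⟩
      · rw [norm_smul, Complex.norm_eq_abs, hlam, one_mul, hpn]
      · simp [hpx]
    have hm : (2⁻¹ : ℝ) • g + (2⁻¹ : ℝ) • (lam • p) ∈ G :=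
      hGconv hg (hFG hlampF) (by norm_num) (by norm_num) (by norm_num)
    obtain ⟨-, hmn⟩ := hGsub hm
    obtain ⟨y, hy⟩ := mcs_norm_exists ((2⁻¹ : ℝ) • g + (2⁻¹ : ℝ) • (lam • p))
    rw [hmn] at hy
    have hval : ((2⁻¹ : ℝ) • g + (2⁻¹ : ℝ) • (lam • p)) y = 2⁻¹ * (g y + lam * p y) := by
      simp only [ContinuousMap.add_apply, ContinuousMap.smul_apply, Complex.real_smul,
        smul_eq_mul]
      push_cast
      ring
    rw [hval, map_mul, map_inv₀, Complex.abs_two] at hy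
    have habs : Complex.abs (g y + lam * p y) = 2 := by field_simp at hy; linarith
    have hgley : Complex.abs (g y) ≤ 1 := by
      rw [← Complex.norm_eq_abs, ← hgn]; exact g.norm_coe_le_norm y
    obtain ⟨heq, habs1⟩ := mcs_abs_add hgley
      (by rw [map_mul, hlam, one_mul]; exact hple y) habs
    have hpy1 : Complex.abs (p y) = 1 := by
      have : Complex.abs (lam * p y) = 1 := by rw [← heq]; exact habs1
      rwa [map_mul, hlam, one_mul] at this
    have hyE : y ∈ E := by rw [← hEeq']; exact hpy1
    have hpy : p y = 1 := by rw [hEeq] at hyE; exact hyE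
    refine ⟨y, hyE, ?_⟩
    show g y = lam
    rw [heq, hpy, mul_one]
  have hZdir : Directed (· ⊇ ·) Z := by
    rintro E E'
    refine ⟨⟨E.1 ∩ E'.1, mcs_peak_inter E.2.1 E'.2.1 E.2.2 E'.2.2, E.2.2, E'.2.2⟩, ?_, ?_⟩
    · exact Set.inter_subset_inter_left _ Set.inter_subset_left
    · exact Set.inter_subset_inter_left _ Set.inter_subset_right
  have hZcl : ∀ E : ι, IsClosed (Z E) :=
    fun E => (mcs_peakset_closed E.2.1).inter (isClosed_eq g.continuous continuous_const)
  have hZcp : ∀ E : ι, IsCompact (Z E) := fun E => (hZcl E).isCompact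
  obtain ⟨y, hy⟩ :=
    IsCompact.nonempty_iInter_of_directed_nonempty_isCompact_isClosed Z hZdir hZne hZcp hZcl
  have hyx : y = x := by
    have : y ∈ ⋂₀ S₀ := by
      refine Set.mem_sInter.mpr fun E hE => ?_
      have := Set.mem_iInter.mp hy ⟨E, hS₀pk E hE, Set.mem_sInter.mp hxmem E hE⟩
      exact this.1
    rw [← hxeq] at this
    exact this
  have := (Set.mem_iInter.mp hy (Classical.arbitrary ι)).2
  rw [hyx] at this
  exact ⟨⟨hgA, hgn⟩, this⟩

private lemma mcs_geom_partial (n : ℕ) :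
    ∑ i ∈ Finset.range n, ((2:ℝ)⁻¹) ^ (i + 1) = 1 - ((2:ℝ)⁻¹) ^ n := by
  induction n with
  | zero => simp
  | succ k ih =>
    rw [Finset.sum_range_succ, ih]
    ring

private lemma mcs_hasSum_half : HasSum (fun m : ℕ => ((2:ℝ)⁻¹) ^ (m + 1)) 1 := by
  have h := (hasSum_geometric_of_lt_one (by norm_num : (0:ℝ) ≤ 2⁻¹) (by norm_num)).mul_left 2⁻¹
  have : (fun m : ℕ => 2⁻¹ * ((2:ℝ)⁻¹) ^ m) = fun m : ℕ => ((2:ℝ)⁻¹) ^ (m + 1) := by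
    funext m; rw [pow_succ]; ring
  rw [this] at h
  rw [show (1:ℝ) = 2⁻¹ * (1 - 2⁻¹)⁻¹ by norm_num]
  exact h

set_option maxHeartbeats 2000000 in
/-- The forward direction. -/
private lemma mcs_forward [Nonempty X] (hA : IsClosed (A : Set C(X, ℂ)))
    (hAsep : ∀ x₁ x₂ : X, x₁ ≠ x₂ → ∃ f ∈ A, f x₁ ≠ f x₂)
    {F : Set C(X, ℂ)} (hF1 : F ⊆ uaSphere A) (hF2 : Convex ℝ F)
    (hmax : ∀ G : Set C(X, ℂ), G ⊆ uaSphere A → Convex ℝ G → F ⊆ G → F = G) :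
    ∃ x ∈ choquetBdry A, ∃ lam : ℂ, Complex.abs lam = 1 ∧ F = uaSlice A x lam := by
  classical
  -- F is nonempty
  have hFne : F.Nonempty := by
    rcases Set.eq_empty_or_nonempty F with h | h
    · exfalso
      have h1 := hmax {(1 : C(X, ℂ))}
        (Set.singleton_subset_iff.mpr ⟨one_mem A, mcs_norm_one⟩)
        (convex_singleton _) (h ▸ Set.empty_subset _)
      rw [h] at h1
      exact (Set.singleton_nonempty _).ne_empty h1.symm
    · exact h
  obtain ⟨f₀, hf₀⟩ := hFne
  -- basic facts
  have hnorm1 : ∀ f ∈ F, ∀ y, Complex.abs (f y) ≤ 1 := by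
    intro f hf y
    rw [← Complex.norm_eq_abs, ← (hF1 hf).2]
    exact f.norm_coe_le_norm y
  have hmidmem : ∀ f ∈ F, ∀ g ∈ F, (2⁻¹ : ℝ) • f + (2⁻¹ : ℝ) • g ∈ F := fun f hf g hg =>
    hF2 hf hg (by norm_num) (by norm_num) (by norm_num)
  have hmidval : ∀ (f g : C(X, ℂ)) (y : X),
      ((2⁻¹ : ℝ) • f + (2⁻¹ : ℝ) • g) y = 2⁻¹ * (f y + g y) := by
    intro f g y
    simp only [ContinuousMap.add_apply, ContinuousMap.smul_apply, Complex.real_smul]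
    push_cast
    ring
  have hagree : ∀ f ∈ F, ∀ g ∈ F, ∀ y,
      Complex.abs (((2⁻¹ : ℝ) • f + (2⁻¹ : ℝ) • g) y) = 1 →
      f y = g y ∧ Complex.abs (f y) = 1 := by
    intro f hf g hg y hy
    rw [hmidval, map_mul, map_inv₀, Complex.abs_two] at hy
    have habs : Complex.abs (f y + g y) = 2 := by field_simp at hy; linarith
    exact mcs_abs_add (hnorm1 f hf y) (hnorm1 g hg y) habs
  -- the common unimodular-value point x₀
  have hFneType : Nonempty F := ⟨⟨f₀, hf₀⟩⟩
  obtain ⟨x₀, hx₀⟩ : (⋂ f : F, {y | f.1 y = f₀ y ∧ Complex.abs (f₀ y) = 1}).Nonempty := by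
    set C : F → Set X := fun f => {y | f.1 y = f₀ y ∧ Complex.abs (f₀ y) = 1} with hCdef
    have hCcl : ∀ f, IsClosed (C f) := by
      intro f
      have he : C f = {y | f.1 y = f₀ y} ∩ {y | Complex.abs (f₀ y) = 1} := rfl
      rw [he]
      exact (isClosed_eq f.1.continuous f₀.continuous).inter
        (isClosed_eq (Complex.continuous_abs.comp f₀.continuous) continuous_const)
    have hCne : ∀ f, (C f).Nonempty := by
      rintro ⟨f, hf⟩
      have hm := hmidmem f hf f₀ hf₀
      obtain ⟨y, hy⟩ := mcs_norm_exists ((2⁻¹:ℝ) • f + (2⁻¹:ℝ) • f₀)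
      rw [(hF1 hm).2] at hy
      obtain ⟨heq, habs⟩ := hagree f hf f₀ hf₀ y hy
      exact ⟨y, heq, by rw [← heq]; exact habs⟩
    have hCdirected : Directed (· ⊇ ·) C := by
      rintro ⟨f, hf⟩ ⟨g, hg⟩
      have hm := hmidmem f hf g hg
      refine ⟨⟨_, hm⟩, ?_, ?_⟩ <;> rintro y ⟨hy1, hy2⟩
      · have habsmid : Complex.abs (((2⁻¹:ℝ) • f + (2⁻¹:ℝ) • g) y) = 1 := by
          rw [hy1]; exact hy2
        obtain ⟨heq, -⟩ := hagree f hf g hg y habsmid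
        have h2 : f y = ((2⁻¹:ℝ) • f + (2⁻¹:ℝ) • g) y := by
          rw [hmidval, ← heq]; ring
        exact ⟨h2.trans hy1, hy2⟩
      · have habsmid : Complex.abs (((2⁻¹:ℝ) • f + (2⁻¹:ℝ) • g) y) = 1 := by
          rw [hy1]; exact hy2
        obtain ⟨heq, -⟩ := hagree f hf g hg y habsmid
        have h2 : g y = ((2⁻¹:ℝ) • f + (2⁻¹:ℝ) • g) y := by
          rw [hmidval, heq]; ring
        exact ⟨h2.trans hy1, hy2⟩
    exact IsCompact.nonempty_iInter_of_directed_nonempty_isCompact_isClosed C hCdirected hCne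
      (fun f => (hCcl f).isCompact) hCcl
  set lam : ℂ := f₀ x₀ with hlamdef
  have hall : ∀ f ∈ F, f x₀ = lam := fun f hf => (Set.mem_iInter.mp hx₀ ⟨f, hf⟩).1
  have hlam : Complex.abs lam = 1 := (Set.mem_iInter.mp hx₀ ⟨f₀, hf₀⟩).2
  -- the weak peak set K
  set K : Set X := {y | ∀ f ∈ F, f y = lam} with hKdef
  have hx₀K : x₀ ∈ K := hall
  have hKcl : IsClosed K := by
    have : K = ⋂ f : F, {y | f.1 y = lam} := by
      ext y; simp [hKdef, Set.mem_iInter, Subtype.forall]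
    rw [this]
    exact isClosed_iInter fun f => isClosed_eq f.1.continuous continuous_const
  have hKslice : ∀ y ∈ K, F = uaSlice A y lam := by
    intro y hy
    exact hmax _ (mcs_slice_sub y lam) (mcs_slice_conv y hlam) fun f hf => ⟨hF1 hf, hy f hf⟩
  -- property P: every peak set meeting K contains K
  have hP : ∀ (p : C(X, ℂ)) (E : Set X), IsPeakingFunction A p E →
      ∀ x₁ ∈ E, x₁ ∈ K → K ⊆ E := by
    intro p E hpk x₁ hx₁E hx₁K w hwK
    obtain ⟨hpA, hpn, hEeq, hEeq'⟩ := hpk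
    have hpx₁ : p x₁ = 1 := by rw [hEeq] at hx₁E; exact hx₁E
    have hlamne : lam ≠ 0 := by
      intro h; rw [h] at hlam; simp at hlam
    have hmemF : lam • p ∈ F := by
      rw [hKslice x₁ hx₁K]
      refine ⟨⟨A.smul_mem hpA _, ?_⟩, ?_⟩
      · rw [norm_smul, Complex.norm_eq_abs, hlam, one_mul, hpn]
      · simp [hpx₁]
    have hval : (lam • p) w = lam := hwK _ hmemF
    have : lam * p w = lam * 1 := by
      simpa [ContinuousMap.smul_apply, smul_eq_mul] using hval
    have := mul_left_cancel₀ hlamne this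
    rw [hEeq]; exact this
  -- directedness: disjoint closed sets are avoided by a single level set
  have hdir : ∀ D : Set X, IsClosed D → D ∩ K = ∅ →
      ∃ f, f ∈ F ∧ {y | f y = lam} ∩ D = ∅ := by
    intro D hD hDK
    by_contra hcon
    push_neg at hcon
    set Z : F → Set X := fun f => {y | f.1 y = lam} ∩ D with hZdef
    have hZne : ∀ f : F, (Z f).Nonempty := fun f => hcon f.1 f.2
    have hZcl : ∀ f : F, IsClosed (Z f) := fun f =>
      (isClosed_eq f.1.continuous continuous_const).inter hD
    have hZdir : Directed (· ⊇ ·) Z := by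
      rintro ⟨f, hf⟩ ⟨g, hg⟩
      have hm := hmidmem f hf g hg
      refine ⟨⟨_, hm⟩, ?_, ?_⟩ <;> rintro y ⟨hy1, hy2⟩
      · have hy1' : ((2⁻¹:ℝ) • f + (2⁻¹:ℝ) • g) y = lam := hy1
        have habsmid : Complex.abs (((2⁻¹:ℝ) • f + (2⁻¹:ℝ) • g) y) = 1 := by
          rw [hy1']; exact hlam
        obtain ⟨heq, -⟩ := hagree f hf g hg y habsmid
        have h2 : f y = ((2⁻¹:ℝ) • f + (2⁻¹:ℝ) • g) y := by
          rw [hmidval, ← heq]; ring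
        exact ⟨h2.trans hy1', hy2⟩
      · have hy1' : ((2⁻¹:ℝ) • f + (2⁻¹:ℝ) • g) y = lam := hy1
        have habsmid : Complex.abs (((2⁻¹:ℝ) • f + (2⁻¹:ℝ) • g) y) = 1 := by
          rw [hy1']; exact hlam
        obtain ⟨heq, -⟩ := hagree f hf g hg y habsmid
        have h2 : g y = ((2⁻¹:ℝ) • f + (2⁻¹:ℝ) • g) y := by
          rw [hmidval, heq]; ring
        exact ⟨h2.trans hy1', hy2⟩
    obtain ⟨y, hy⟩ :=
      IsCompact.nonempty_iInter_of_directed_nonempty_isCompact_isClosed Z hZdir hZne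
        (fun f => (hZcl f).isCompact) hZcl
    have hyK : y ∈ K := fun f hf => (Set.mem_iInter.mp hy ⟨f, hf⟩).1
    have hyD : y ∈ D := (Set.mem_iInter.mp hy ⟨f₀, hf₀⟩).2
    exact (Set.eq_empty_iff_forall_notMem.mp hDK y) ⟨hyD, hyK⟩
  -- Lemma H: peaking-style functions for K
  have hH : ∀ D : Set X, IsClosed D → D ∩ K = ∅ → ∀ η : ℝ, 0 < η →
      ∃ h : C(X, ℂ), h ∈ A ∧ (∀ w ∈ K, h w = 1) ∧ (∀ w, Complex.abs (h w) ≤ 1) ∧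
        (∀ w ∈ D, Complex.abs (h w) ≤ η) := by
    intro D hD hDK η hη
    rcases Set.eq_empty_or_nonempty D with hDe | hDne
    · refine ⟨1, one_mem A, fun w _ => rfl, fun w => by simp, fun w hw => ?_⟩
      rw [hDe] at hw
      exact absurd hw (Set.notMem_empty w)
    · obtain ⟨f, hf, hfD⟩ := hdir D hD hDK
      obtain ⟨hqA, hqn, hqE, hqE'⟩ := mcs_peak (hF1 hf).1 (hnorm1 f hf) hlam (hall f hf)
      set q := (2⁻¹ : ℂ) • ((1 : C(X, ℂ)) + (conj lam : ℂ) • f) with hqdef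
      have hqle : ∀ w, Complex.abs (q w) ≤ 1 := fun w => by
        rw [← Complex.norm_eq_abs, ← hqn]; exact q.norm_coe_le_norm w
      have hqK : ∀ w ∈ K, q w = 1 := by
        intro w hw
        have h1 : w ∈ {y | f y = lam} := hw f hf
        rw [hqE] at h1
        exact h1
      have hqD : ∀ w ∈ D, Complex.abs (q w) < 1 := by
        intro w hw
        rcases lt_or_eq_of_le (hqle w) with h | h
        · exact h
        · exfalso
          have h1 : w ∈ {x | f x = lam} := by rw [← hqE']; exact h
          exact (Set.eq_empty_iff_forall_notMem.mp hfD w) ⟨h1, hw⟩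
      obtain ⟨w₀, hw₀D, hw₀max⟩ := (hD.isCompact).exists_isMaxOn hDne
        ((Complex.continuous_abs.comp q.continuous).continuousOn)
      have hρ1 : Complex.abs (q w₀) < 1 := hqD w₀ hw₀D
      obtain ⟨k, hk⟩ := exists_pow_lt_of_lt_one hη hρ1
      refine ⟨q ^ k, pow_mem hqA k, ?_, ?_, ?_⟩
      · intro w hw
        rw [ContinuousMap.pow_apply, hqK w hw, one_pow]
      · intro w
        rw [ContinuousMap.pow_apply, map_pow]
        exact pow_le_one₀ (Complex.abs.nonneg _) (hqle w)
      · intro w hw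
        rw [ContinuousMap.pow_apply, map_pow]
        calc Complex.abs (q w) ^ k ≤ Complex.abs (q w₀) ^ k :=
              pow_le_pow_left₀ (Complex.abs.nonneg _) (hw₀max hw) k
          _ ≤ η := le_of_lt hk
  -- K is a singleton
  have hsing : ∀ y ∈ K, ∀ z ∈ K, y = z := by
    intro y hy z hz
    by_contra hne
    obtain ⟨v, hvA, hvne⟩ := hAsep y z hne
    set d : ℂ := v z - v y with hd
    have hdne : d ≠ 0 := sub_ne_zero.mpr (Ne.symm hvne)
    set u : C(X, ℂ) := d⁻¹ • (v - (v y) • (1 : C(X, ℂ))) with hu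
    have huA : u ∈ A := A.smul_mem (A.sub_mem hvA (A.smul_mem (one_mem A) _)) _
    have huy : u y = 0 := by
      simp [hu, ContinuousMap.smul_apply, ContinuousMap.sub_apply, ContinuousMap.one_apply,
        smul_eq_mul]
    have huz : u z = 1 := by
      have : u z = d⁻¹ * (v z - v y) := by
        simp [hu, ContinuousMap.smul_apply, ContinuousMap.sub_apply, ContinuousMap.one_apply,
          smul_eq_mul]
      rw [this, ← hd]
      exact inv_mul_cancel₀ hdne
    -- max of |u| on K
    obtain ⟨xs, hxsK, hxsmax⟩ := (hKcl.isCompact).exists_isMaxOn ⟨y, hy⟩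
      ((Complex.continuous_abs.comp u.continuous).continuousOn)
    set c : ℝ := Complex.abs (u xs) with hc
    have hc1 : (1:ℝ) ≤ c := by
      have h1 := hxsmax hz
      simpa [huz] using h1
    have hc0 : (0:ℝ) < c := lt_of_lt_of_le one_pos hc1
    have hcK : ∀ w ∈ K, Complex.abs (u w) ≤ c := fun w hw => hxsmax hw
    have hun : (1:ℝ) ≤ ‖u‖ := by
      have h1 := u.norm_coe_le_norm z
      rw [huz] at h1
      simpa using h1
    set η : ℝ := min 2⁻¹ (c / ‖u‖) with hηdef
    have hη0 : 0 < η := lt_min (by norm_num) (div_pos hc0 (lt_of_lt_of_le one_pos hun))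
    have hη2 : η ≤ 2⁻¹ := min_le_left _ _
    -- level sets
    set D : ℕ → Set X := fun m => {w | c / (1 - ((2:ℝ)⁻¹) ^ (m + 2)) ≤ Complex.abs (u w)}
      with hDdef
    have hpow4 : ∀ m : ℕ, ((2:ℝ)⁻¹) ^ (m + 2) ≤ 4⁻¹ := by
      intro m
      calc ((2:ℝ)⁻¹) ^ (m + 2) ≤ ((2:ℝ)⁻¹) ^ 2 :=
            pow_le_pow_of_le_one (by norm_num) (by norm_num) (by omega)
        _ = 4⁻¹ := by norm_num
    have hpow0 : ∀ m : ℕ, (0:ℝ) < ((2:ℝ)⁻¹) ^ (m + 2) := fun m => pow_pos (by norm_num) _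
    have hDcl : ∀ m, IsClosed (D m) := fun m =>
      isClosed_le continuous_const (Complex.continuous_abs.comp u.continuous)
    have hDK : ∀ m, D m ∩ K = ∅ := by
      intro m
      apply Set.eq_empty_iff_forall_notMem.mpr
      rintro w ⟨hw1, hw2⟩
      have h1 : c < c / (1 - ((2:ℝ)⁻¹) ^ (m + 2)) := by
        rw [lt_div_iff₀ (by linarith [hpow4 m])]
        nlinarith [hpow0 m]
      exact absurd (le_trans hw1 (hcK w hw2)) (not_le.mpr h1)
    choose h hhA hh1 hhle hhD using fun m => hH (D m) (hDcl m) (hDK m) η hη0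
    set a : ℕ → ℝ := fun m => ((2:ℝ)⁻¹) ^ (m + 1) with hadef
    have ha0 : ∀ m, (0:ℝ) ≤ a m := fun m => le_of_lt (pow_pos (by norm_num) _)
    have hsa : Summable a := mcs_hasSum_half.summable
    have hsF : Summable (fun m => a m • h m) := by
      refine Summable.of_norm_bounded hsa fun m => ?_
      rw [norm_smul, Real.norm_eq_abs, abs_of_nonneg (ha0 m)]
      have h1 : ‖h m‖ ≤ 1 := (ContinuousMap.norm_le _ zero_le_one).mpr fun w => by
        rw [Complex.norm_eq_abs]; exact hhle m w
      nlinarith [ha0 m, norm_nonneg (h m)]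
    set g : C(X, ℂ) := ∑' m, a m • h m with hgdef
    have hgs : HasSum (fun m => a m • h m) g := hsF.hasSum
    have hgA : g ∈ A := by
      refine hA.mem_of_tendsto hgs.tendsto_sum_nat (Filter.Eventually.of_forall fun n => ?_)
      refine A.sum_mem fun i _ => ?_
      rw [← algebraMap_smul ℂ (a i) (h i)]
      exact A.smul_mem (hhA i) _
    have hval : ∀ w, HasSum (fun m => a m • (h m) w) (g w) := by
      intro w
      have h1 := (ContinuousMap.evalCLM ℝ w).hasSum hgs
      simpa using h1
    have hgK : ∀ w ∈ K, g w = 1 := by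
      intro w hw
      have h1 := hval w
      have e : (fun m : ℕ => a m • (h m) w) = fun m : ℕ => a m • (1:ℂ) := by
        funext m; rw [hh1 m w hw]
      rw [e] at h1
      have h2 : HasSum (fun m : ℕ => a m • (1:ℂ)) ((1:ℝ) • (1:ℂ)) :=
        mcs_hasSum_half.smul_const 1
      have := h1.unique h2
      simpa using this
    -- the crucial pointwise bound
    have hbound : ∀ w, Complex.abs (u w) * Complex.abs (g w) ≤ c := by
      intro w
      have hnorm_eq : (fun m => ‖a m • (h m) w‖) = fun m => a m * Complex.abs ((h m) w) := by
        funext m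
        rw [norm_smul, Real.norm_eq_abs, abs_of_nonneg (ha0 m), Complex.norm_eq_abs]
      have hsv : Summable (fun m => a m * Complex.abs ((h m) w)) := by
        refine Summable.of_nonneg_of_le
          (fun m => mul_nonneg (ha0 m) (Complex.abs.nonneg _)) (fun m => ?_) hsa
        exact mul_le_of_le_one_right (ha0 m) (hhle m w)
      have hgwle : Complex.abs (g w) ≤ ∑' m, a m * Complex.abs ((h m) w) := by
        rw [← Complex.norm_eq_abs, ← (hval w).tsum_eq]
        calc ‖∑' m, a m • (h m) w‖ ≤ ∑' m, ‖a m • (h m) w‖ :=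
              norm_tsum_le_tsum_norm (by rw [hnorm_eq]; exact hsv)
          _ = ∑' m, a m * Complex.abs ((h m) w) := by rw [hnorm_eq]
      rcases le_or_gt (Complex.abs (u w)) c with hcase | hcase
      · have h1 : ∑' m, a m * Complex.abs ((h m) w) ≤ 1 := by
          have h2 := Summable.tsum_le_tsum (f := fun m => a m * Complex.abs ((h m) w)) (g := a)
            (fun m => by
              show a m * Complex.abs ((h m) w) ≤ a m
              exact mul_le_of_le_one_right (ha0 m) (hhle m w)) hsv hsa
          rw [mcs_hasSum_half.tsum_eq] at h2
          exact h2
        calc Complex.abs (u w) * Complex.abs (g w) ≤ Complex.abs (u w) * 1 := by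
              nlinarith [Complex.abs.nonneg (u w), le_trans hgwle h1,
                Complex.abs.nonneg (g w)]
          _ ≤ c := by rw [mul_one]; exact hcase
      · -- hard case: |u w| > c
        set t : ℝ := c / Complex.abs (u w) with htdef
        have huw0 : (0:ℝ) < Complex.abs (u w) := lt_trans hc0 hcase
        have ht0 : 0 < t := div_pos hc0 huw0
        have ht1 : t < 1 := (div_lt_one huw0).mpr hcase
        have hex : ∃ m : ℕ, ((2:ℝ)⁻¹) ^ (m + 2) ≤ 1 - t := by
          obtain ⟨n, hn⟩ := exists_pow_lt_of_lt_one (by linarith : (0:ℝ) < 1 - t)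
            (by norm_num : (2:ℝ)⁻¹ < 1)
          exact ⟨n, le_trans (pow_le_pow_of_le_one (by norm_num) (by norm_num) (by omega))
            (le_of_lt hn)⟩
        set m₀ := Nat.find hex with hm₀def
        have hm₀ : ((2:ℝ)⁻¹) ^ (m₀ + 2) ≤ 1 - t := Nat.find_spec hex
        have hwD : ∀ m, m₀ ≤ m → w ∈ D m := by
          intro m hm
          show c / (1 - ((2:ℝ)⁻¹) ^ (m + 2)) ≤ Complex.abs (u w)
          have h1 : ((2:ℝ)⁻¹) ^ (m + 2) ≤ 1 - t :=
            le_trans (pow_le_pow_of_le_one (by norm_num) (by norm_num) (by omega)) hm₀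
          have h2 : t ≤ 1 - ((2:ℝ)⁻¹) ^ (m + 2) := by linarith
          have h3 : c / (1 - ((2:ℝ)⁻¹) ^ (m + 2)) ≤ c / t :=
            div_le_div_of_nonneg_left (le_of_lt hc0) ht0 h2
          have h4 : c / t = Complex.abs (u w) := by
            rw [htdef]
            field_simp
          linarith
        set bnd : ℕ → ℝ := fun m => if m < m₀ then a m else a m * η with hbnddef
        have hbnd_nonneg : ∀ m, 0 ≤ bnd m := by
          intro m
          show (0:ℝ) ≤ if m < m₀ then a m else a m * η
          split
          · exact ha0 m
          · exact mul_nonneg (ha0 m) (le_of_lt hη0)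
        have hsbnd : Summable bnd := by
          refine Summable.of_nonneg_of_le hbnd_nonneg (fun m => ?_) (hsa.mul_right (max 1 η))
          show (if m < m₀ then a m else a m * η) ≤ a m * max 1 η
          split
          · calc a m = a m * 1 := (mul_one _).symm
              _ ≤ a m * max 1 η := by
                exact mul_le_mul_of_nonneg_left (le_max_left _ _) (ha0 m)
          · exact mul_le_mul_of_nonneg_left (le_max_right _ _) (ha0 m)
        have hle_bnd : ∑' m, a m * Complex.abs ((h m) w) ≤ ∑' m, bnd m := by
          refine Summable.tsum_le_tsum (fun m => ?_) hsv hsbnd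
          show a m * Complex.abs ((h m) w) ≤ if m < m₀ then a m else a m * η
          split
          · exact mul_le_of_le_one_right (ha0 m) (hhle m w)
          · rename_i hmge
            exact mul_le_mul_of_nonneg_left (hhD m w (hwD m (le_of_not_gt hmge))) (ha0 m)
        have hbnd_val : ∑' m, bnd m = (1 - ((2:ℝ)⁻¹) ^ m₀) + ((2:ℝ)⁻¹) ^ m₀ * η := by
          have hsplit := Summable.sum_add_tsum_nat_add (f := bnd) m₀ hsbnd
          have h1 : ∑ i ∈ Finset.range m₀, bnd i = 1 - ((2:ℝ)⁻¹) ^ m₀ := by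
            rw [← mcs_geom_partial m₀]
            refine Finset.sum_congr rfl fun i hi => ?_
            show (if i < m₀ then a i else a i * η) = ((2:ℝ)⁻¹) ^ (i + 1)
            rw [if_pos (Finset.mem_range.mp hi)]
          have h2 : ∑' i : ℕ, bnd (i + m₀) = ((2:ℝ)⁻¹) ^ m₀ * η := by
            have e : (fun i : ℕ => bnd (i + m₀)) =
                fun i : ℕ => ((2:ℝ)⁻¹) ^ (i + 1) * (((2:ℝ)⁻¹) ^ m₀ * η) := by
              funext i
              show (if i + m₀ < m₀ then a (i + m₀) else a (i + m₀) * η) = _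
              rw [if_neg (by omega)]
              show ((2:ℝ)⁻¹) ^ (i + m₀ + 1) * η = _
              rw [show i + m₀ + 1 = (i + 1) + m₀ by omega, pow_add]
              ring
            rw [e, tsum_mul_right, mcs_hasSum_half.tsum_eq, one_mul]
          rw [← hsplit, h1, h2]
        have hkey : (1 - ((2:ℝ)⁻¹) ^ m₀) + ((2:ℝ)⁻¹) ^ m₀ * η ≤ t := by
          have hmain : 1 - t ≤ (1 - η) * ((2:ℝ)⁻¹) ^ m₀ := by
            rcases Nat.eq_zero_or_pos m₀ with h0 | h0
            · rw [h0, pow_zero, mul_one]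
              have hηt : η ≤ t := by
                have h5 : c / ‖u‖ ≤ t := by
                  rw [htdef]
                  refine div_le_div_of_nonneg_left (le_of_lt hc0) huw0 ?_
                  rw [← Complex.norm_eq_abs]
                  exact u.norm_coe_le_norm w
                exact le_trans (min_le_right _ _) h5
              linarith
            · obtain ⟨k, hk⟩ : ∃ k, m₀ = k + 1 := ⟨m₀ - 1, by omega⟩
              have h6 : ¬(((2:ℝ)⁻¹) ^ (k + 2) ≤ 1 - t) :=
                Nat.find_min hex (by omega)
              push_neg at h6
              rw [hk]
              have h7 : ((2:ℝ)⁻¹) ^ (k + 2) = 2⁻¹ * ((2:ℝ)⁻¹) ^ (k + 1) := by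
                rw [pow_succ]; ring
              nlinarith [pow_pos (show (0:ℝ) < 2⁻¹ by norm_num) (k + 1)]
          nlinarith [pow_pos (show (0:ℝ) < 2⁻¹ by norm_num) m₀]
        have hfinal : Complex.abs (g w) ≤ t :=
          le_trans hgwle (le_trans hle_bnd (by rw [hbnd_val]; exact hkey))
        calc Complex.abs (u w) * Complex.abs (g w) ≤ Complex.abs (u w) * t := by
              nlinarith [Complex.abs.nonneg (g w)]
          _ = c := by
              rw [htdef]
              field_simp
    -- build the contradiction
    have hgKxs : g xs = 1 := hgK xs hxsK
    set φ : C(X, ℂ) := ((c : ℂ))⁻¹ • (u * g) with hφdef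
    have hφA : φ ∈ A := A.smul_mem (A.mul_mem huA hgA) _
    have hcabs : Complex.abs (((c:ℝ) : ℂ))⁻¹ = c⁻¹ := by
      rw [map_inv₀, Complex.abs_ofReal, abs_of_pos hc0]
    have hφle : ∀ w, Complex.abs (φ w) ≤ 1 := by
      intro w
      have h1 : φ w = ((c:ℝ):ℂ)⁻¹ * (u w * g w) := by
        simp [hφdef, ContinuousMap.smul_apply, ContinuousMap.mul_apply, smul_eq_mul]
      rw [h1, map_mul, hcabs, map_mul]
      have h2 := hbound w
      have hcinv : (0:ℝ) ≤ c⁻¹ := le_of_lt (inv_pos.mpr hc0)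
      calc c⁻¹ * (Complex.abs (u w) * Complex.abs (g w)) ≤ c⁻¹ * c := by nlinarith
        _ = 1 := inv_mul_cancel₀ (ne_of_gt hc0)
    have hφxs : φ xs = ((c:ℝ):ℂ)⁻¹ * u xs := by
      simp [hφdef, ContinuousMap.smul_apply, ContinuousMap.mul_apply, smul_eq_mul, hgKxs]
    have hμ : Complex.abs (φ xs) = 1 := by
      rw [hφxs, map_mul, hcabs, ← hc]
      exact inv_mul_cancel₀ (ne_of_gt hc0)
    have hpkμ := mcs_peak hφA hφle hμ (rfl : φ xs = φ xs)
    have hKE : K ⊆ {x | φ x = φ xs} :=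
      hP _ _ hpkμ xs rfl hxsK
    have hφy : φ y = 0 := by
      simp [hφdef, ContinuousMap.smul_apply, ContinuousMap.mul_apply, smul_eq_mul, huy]
    have h0 : (0:ℂ) = φ xs := by rw [← hφy]; exact hKE hy
    rw [← h0] at hμ
    simp at hμ
  have hK1 : K = {x₀} := by
    apply Set.eq_singleton_iff_unique_mem.mpr
    exact ⟨hx₀K, fun y hy => hsing y hy x₀ hx₀K⟩
  -- x₀ is a weak peak point
  have hwp : IsWeakPeakSet A {x₀} := by
    refine ⟨(fun f : C(X, ℂ) => {y | f y = lam}) '' F, ⟨_, f₀, hf₀, rfl⟩, ?_, ?_⟩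
    · rintro E ⟨f, hf, rfl⟩
      exact ⟨_, mcs_peak (hF1 hf).1 (hnorm1 f hf) hlam (hall f hf)⟩
    · rw [← hK1]
      ext y
      simp only [Set.sInter_image, Set.mem_iInter, Set.mem_setOf_eq]
      exact ⟨fun hy f hf => hy f hf, fun hy f hf => hy f hf⟩
  exact ⟨x₀, hwp, lam, hlam, hKslice x₀ hx₀K⟩

end Aux

/-- A subset `F` of the unit sphere of a uniform algebra `A` is a maximal convex subset
of `S(A)` iff `F = {f ∈ S(A) : f x = λ}` for some Choquet boundary point `x` and some
unimodular `λ`. -/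
theorem maximal_convex_subset_iff_slice
    {X : Type*} [TopologicalSpace X] [CompactSpace X] [T2Space X] [Nonempty X]
    (A : Subalgebra ℂ C(X, ℂ)) (hA : IsClosed (A : Set C(X, ℂ)))
    (hAsep : ∀ x₁ x₂ : X, x₁ ≠ x₂ → ∃ f ∈ A, f x₁ ≠ f x₂)
    (F : Set C(X, ℂ)) :
    (F ⊆ uaSphere A ∧ Convex ℝ F ∧
        (∀ G : Set C(X, ℂ), G ⊆ uaSphere A → Convex ℝ G → F ⊆ G → F = G)) ↔
      ∃ x ∈ choquetBdry A, ∃ lam : ℂ, ‖lam‖ = 1 ∧ F = uaSlice A x lam := by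
  constructor
  · rintro ⟨hF1, hF2, hmax⟩
    exact mcs_forward hA hAsep hF1 hF2 hmax
  · rintro ⟨x, hx, lam, hlam, rfl⟩
    refine ⟨mcs_slice_sub x lam, mcs_slice_conv x hlam, ?_⟩
    intro G hG1 hG2 hFG
    exact Set.Subset.antisymm hFG (mcs_slice_maximal hx hlam G hG1 hG2 hFG)
end

section
/- Let A be a uniform algebra on a compact Hausdorff space X and let y₁, y₂ ∈ Ch(A) be distinct points. Then for any pair of unimodular complex numbers μ₁, μ₂ ∈ 𝕋 there exists g ∈ S(A) such that g(y₁) = μ₁ and g(y₂) = μ₂. -/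
open scoped ComplexConjugate

private lemma mobius_num_le_den {a z : ℂ} (ha : ‖a‖ < 1) (hz : ‖z‖ ≤ 1) :
    ‖z - a‖ ≤ ‖1 - conj a * z‖ := by
  have key : Complex.normSq (1 - conj a * z) - Complex.normSq (z - a)
      = (1 - Complex.normSq a) * (1 - Complex.normSq z) := by
    simp [Complex.normSq_apply, Complex.sub_re, Complex.sub_im, Complex.mul_re, Complex.mul_im]
    ring
  have h1 : Complex.normSq a < 1 := by
    have := Complex.sq_norm a; nlinarith [norm_nonneg a]
  have h2 : Complex.normSq z ≤ 1 := by
    have := Complex.sq_norm z; nlinarith [norm_nonneg z]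
  rw [Complex.norm_def, Complex.norm_def]
  apply Real.sqrt_le_sqrt
  nlinarith [Complex.normSq_nonneg (z - a)]

private lemma mobius_den_lb {a z : ℂ} (ha : ‖a‖ < 1) (hz : ‖z‖ ≤ 1) :
    1 - ‖a‖ ≤ ‖1 - conj a * z‖ := by
  have h := norm_add_le (1 - conj a * z) (conj a * z)
  simp only [sub_add_cancel, norm_one, norm_mul, Complex.norm_conj] at h
  nlinarith [norm_nonneg a, norm_nonneg z]

/-- Lemma L: small on a compact set away from a weak peak point. -/
private lemma exists_small_on_compact {X : Type*} [TopologicalSpace X] [CompactSpace X]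
    (A : Subalgebra ℂ C(X, ℂ)) {y : X} (hy : y ∈ choquetBdry A)
    {K : Set X} (hK : IsClosed K) (hKne : K.Nonempty) (hyK : y ∉ K)
    {η : ℝ} (hη : 0 < η) :
    ∃ F : C(X, ℂ), F ∈ A ∧ (∀ x, ‖F x‖ ≤ 1) ∧ F y = 1 ∧
      ∀ x ∈ K, ‖F x‖ ≤ η := by
  classical
  obtain ⟨S, hSne, hSpk, hSint⟩ := hy
  have hφ : ∀ E : S, IsPeakingFunction A (hSpk E.1 E.2).choose E.1 :=
    fun E => (hSpk E.1 E.2).choose_spec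
  set φ : S → C(X, ℂ) := fun E => (hSpk E.1 E.2).choose with hφdef
  -- peak sets are closed
  have hcl : ∀ E : S, IsClosed (E.1 : Set X) := by
    intro E
    have h := (hφ E).2.2.1
    rw [h]
    exact isClosed_eq (map_continuous (φ E)) continuous_const
  -- y belongs to every E
  have hyE : ∀ E : S, y ∈ (E.1 : Set X) := by
    intro E
    have : y ∈ ⋂₀ S := by rw [← hSint]; exact rfl
    exact this E.1 E.2
  have hφy : ∀ E : S, φ E y = 1 := by
    intro E
    have h := (hφ E).2.2.1
    have := hyE E
    rw [h] at this
    exact this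
  have hφle : ∀ (E : S) x, ‖φ E x‖ ≤ 1 := by
    intro E x
    have h := (φ E).norm_coe_le_norm x
    rw [(hφ E).2.1] at h
    exact h
  -- cover K by complements
  have hcover : K ⊆ ⋃ E : S, (E.1 : Set X)ᶜ := by
    intro x hx
    by_contra h
    simp only [Set.mem_iUnion, Set.mem_compl_iff, not_exists, not_not] at h
    have hmem : x ∈ ⋂₀ S := fun E hE => h ⟨E, hE⟩
    rw [← hSint] at hmem
    exact hyK (hmem ▸ hx)
  obtain ⟨t, ht⟩ := hK.isCompact.elim_finite_subcover (fun E : S => (E.1 : Set X)ᶜ)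
    (fun E => (hcl E).isOpen_compl) hcover
  obtain ⟨E₀, hE₀⟩ := hSne
  set t' : Finset S := insert ⟨E₀, hE₀⟩ t with ht'def
  have hcard : 0 < t'.card := Finset.card_pos.mpr ⟨_, Finset.mem_insert_self _ _⟩
  have hcardC : ((t'.card : ℂ)) ≠ 0 := by exact_mod_cast hcard.ne'
  set f : C(X, ℂ) := ((t'.card : ℂ))⁻¹ • ∑ E ∈ t', φ E with hfdef
  have hfx : ∀ x, f x = ((t'.card : ℂ))⁻¹ * ∑ E ∈ t', φ E x := by
    intro x; simp [hfdef]
  have hfy : f y = 1 := by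
    rw [hfx, Finset.sum_congr rfl (fun E _ => hφy E), Finset.sum_const, nsmul_eq_mul, mul_one,
      inv_mul_cancel₀ hcardC]
  have hfabs : ∀ x, ‖f x‖ ≤ 1 := by
    intro x
    rw [hfx, norm_mul, norm_inv]
    have h1 : ‖∑ E ∈ t', φ E x‖ ≤ (t'.card : ℝ) := by
      calc ‖∑ E ∈ t', φ E x‖ ≤ ∑ E ∈ t', ‖φ E x‖ :=
            norm_sum_le _ _
        _ ≤ ∑ _E ∈ t', (1 : ℝ) := Finset.sum_le_sum fun E _ => hφle E x
        _ = (t'.card : ℝ) := by simp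
    have h2 : ‖(t'.card : ℂ)‖ = (t'.card : ℝ) := by
      simp
    rw [h2]
    rw [inv_mul_le_iff₀ (by exact_mod_cast hcard), mul_one]
    exact h1
  have hfK : ∀ x ∈ K, ‖f x‖ < 1 := by
    intro x hx
    have := ht hx
    simp only [Set.mem_iUnion, Set.mem_compl_iff] at this
    obtain ⟨E, hEt, hxE⟩ := this
    have hEt' : E ∈ t' := Finset.mem_insert_of_mem hEt
    have hlt : ‖φ E x‖ < 1 := by
      rcases lt_or_eq_of_le (hφle E x) with h | h
      · exact h
      · exfalso
        have habs := (hφ E).2.2.2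
        have : x ∈ {x | ‖φ E x‖ = 1} := h
        rw [habs] at this
        exact hxE this
    rw [hfx, norm_mul, norm_inv]
    have h2 : ‖(t'.card : ℂ)‖ = (t'.card : ℝ) := by simp
    rw [h2, inv_mul_lt_iff₀ (by exact_mod_cast hcard), mul_one]
    calc ‖∑ E ∈ t', φ E x‖ ≤ ∑ E ∈ t', ‖φ E x‖ :=
          norm_sum_le _ _
      _ < ∑ _E ∈ t', (1 : ℝ) := by
          apply Finset.sum_lt_sum (fun E _ => hφle E x) ⟨E, hEt', hlt⟩
      _ = (t'.card : ℝ) := by simp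
  -- sup over K
  obtain ⟨x₀, hx₀K, hmax⟩ := hK.isCompact.exists_isMaxOn hKne
    ((continuous_norm.comp (map_continuous f)).continuousOn)
  set s : ℝ := ‖f x₀‖ with hsdef
  have hs1 : s < 1 := hfK x₀ hx₀K
  obtain ⟨N, hN⟩ := exists_pow_lt_of_lt_one hη hs1
  refine ⟨f ^ N, ?_, ?_, ?_, ?_⟩
  · apply pow_mem
    exact A.smul_mem (A.sum_mem fun E _ => (hφ E).1) _
  · intro x
    rw [ContinuousMap.pow_apply, norm_pow]
    exact pow_le_one₀ (norm_nonneg _) (hfabs x)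
  · rw [ContinuousMap.pow_apply, hfy, one_pow]
  · intro x hx
    rw [ContinuousMap.pow_apply, norm_pow]
    calc (‖f x‖) ^ N ≤ s ^ N :=
          pow_le_pow_left₀ (norm_nonneg _) (hmax hx) N
      _ ≤ η := hN.le

/-- Möbius lemma: exact zero at `y'`, value 1 at `y`, modulus controlled by `|F|`. -/
private lemma exists_mobius_pair {X : Type*} [TopologicalSpace X] [CompactSpace X]
    (A : Subalgebra ℂ C(X, ℂ)) (hA : IsClosed (A : Set C(X, ℂ)))
    {F : C(X, ℂ)} (hFA : F ∈ A) (hF1 : ∀ x, ‖F x‖ ≤ 1)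
    {y y' : X} (hFy : F y = 1) (hFy' : ‖F y'‖ < 1) :
    ∃ u : C(X, ℂ), u ∈ A ∧ u y = 1 ∧ u y' = 0 ∧ (∀ x, ‖u x‖ ≤ 1) ∧
      (∀ x, ‖u x‖
        ≤ (‖F x‖ + ‖F y'‖) / (1 - ‖F y'‖)) := by
  set a : ℂ := F y' with hadef
  have ha : ‖a‖ < 1 := hFy'
  have hFnorm : ‖F‖ ≤ 1 := by
    rw [ContinuousMap.norm_le _ zero_le_one]
    exact hF1
  set c : C(X, ℂ) := (conj a) • F with hcdef
  have hcA : c ∈ A := A.smul_mem hFA _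
  have hcx : ∀ x, c x = conj a * F x := fun x => rfl
  have hcnorm : ‖c‖ < 1 := by
    rw [hcdef, norm_smul]
    calc ‖conj a‖ * ‖F‖ ≤ ‖conj a‖ * 1 := by
          exact mul_le_mul_of_nonneg_left hFnorm (norm_nonneg _)
      _ = ‖a‖ := by rw [mul_one]; simp
      _ < 1 := ha
  set inv : C(X, ℂ) := ∑' i : ℕ, c ^ i with hinvdef
  have hmul : inv * (1 - c) = 1 := geom_series_mul_neg c hcnorm
  have hinvA : inv ∈ A := by
    have hsum : HasSum (fun i : ℕ => c ^ i) inv :=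
      (summable_geometric_of_norm_lt_one hcnorm).hasSum
    exact hA.mem_of_tendsto hsum
      (Filter.Eventually.of_forall fun s => A.sum_mem fun i _ => A.pow_mem hcA i)
  have hden : ∀ x, (1 : ℂ) - conj a * F x ≠ 0 := by
    intro x
    have h := mobius_den_lb ha (hF1 x)
    intro h0
    rw [h0] at h
    simp at h
    linarith
  have hinvx : ∀ x, inv x = (1 - conj a * F x)⁻¹ := by
    intro x
    have := congrArg (fun g : C(X, ℂ) => g x) hmul
    simp only [ContinuousMap.mul_apply, ContinuousMap.sub_apply, ContinuousMap.one_apply] at this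
    rw [hcx] at this
    exact eq_inv_of_mul_eq_one_left this
  have h1a : (1 : ℂ) - a ≠ 0 := by
    intro h
    have : a = 1 := by linear_combination -h
    rw [this] at ha; simp at ha
  have h1ca : (1 : ℂ) - conj a ≠ 0 := by
    have := hden y
    rwa [hFy, mul_one] at this
  set w : ℂ := (1 - conj a) / (1 - a) with hwdef
  have hwabs : ‖w‖ = 1 := by
    rw [hwdef, norm_div]
    have : (1 : ℂ) - conj a = conj (1 - a) := by
      simp [map_sub]
    rw [this, Complex.norm_conj, div_self]
    intro h
    exact h1a (norm_eq_zero.mp h)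
  refine ⟨w • ((F - algebraMap ℂ C(X, ℂ) a) * inv), ?_, ?_, ?_, ?_, ?_⟩
  · exact A.smul_mem (A.mul_mem (A.sub_mem hFA (A.algebraMap_mem a)) hinvA) _
  · simp only [ContinuousMap.smul_apply, ContinuousMap.mul_apply, ContinuousMap.sub_apply,
      algebraMap_apply, smul_eq_mul, smul_eq_mul, mul_one]
    rw [hFy, hinvx y, hFy, mul_one, hwdef]
    field_simp
  · simp only [ContinuousMap.smul_apply, ContinuousMap.mul_apply, ContinuousMap.sub_apply,
      algebraMap_apply, smul_eq_mul, smul_eq_mul, mul_one]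
    rw [← hadef, sub_self, zero_mul, mul_zero]
  · intro x
    simp only [ContinuousMap.smul_apply, ContinuousMap.mul_apply, ContinuousMap.sub_apply,
      algebraMap_apply, smul_eq_mul, smul_eq_mul, mul_one]
    rw [norm_mul, norm_mul, hwabs, one_mul, hinvx x, norm_inv]
    rw [mul_inv_le_iff₀ (norm_pos_iff.mpr (hden x)), one_mul]
    exact mobius_num_le_den ha (hF1 x)
  · intro x
    simp only [ContinuousMap.smul_apply, ContinuousMap.mul_apply, ContinuousMap.sub_apply,
      algebraMap_apply, smul_eq_mul, smul_eq_mul, mul_one]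
    rw [norm_mul, norm_mul, hwabs, one_mul, hinvx x, norm_inv, ← div_eq_mul_inv]
    apply div_le_div₀ (by positivity) ?_ (by linarith) (mobius_den_lb ha (hF1 x))
    calc ‖F x - a‖ ≤ ‖F x‖ + ‖a‖ := by
          have := norm_sub_le (F x) a
          simpa using this
      _ = ‖F x‖ + ‖F y'‖ := by rw [← hadef]

/-- Base pair: exact values, sum of moduli ≤ 1 + η, small on a given closed set. -/
private lemma exists_base_pair {X : Type*} [TopologicalSpace X] [CompactSpace X] [T2Space X]
    (A : Subalgebra ℂ C(X, ℂ)) (hA : IsClosed (A : Set C(X, ℂ)))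
    {y₁ y₂ : X} (hy₁ : y₁ ∈ choquetBdry A) (hy₂ : y₂ ∈ choquetBdry A) (hne : y₁ ≠ y₂)
    {C : Set X} (hC : IsClosed C) (hC1 : y₁ ∉ C) (hC2 : y₂ ∉ C)
    {η : ℝ} (hη : 0 < η) (hη1 : η ≤ 1) :
    ∃ u v : C(X, ℂ), u ∈ A ∧ v ∈ A ∧ u y₁ = 1 ∧ u y₂ = 0 ∧ v y₁ = 0 ∧ v y₂ = 1 ∧
      (∀ x, ‖u x‖ ≤ 1) ∧ (∀ x, ‖v x‖ ≤ 1) ∧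
      (∀ x, ‖u x‖ + ‖v x‖ ≤ 1 + η) ∧
      (∀ x ∈ C, ‖u x‖ ≤ η ∧ ‖v x‖ ≤ η) := by
  have hη16 : (0:ℝ) < η / 16 := by linarith
  -- first function, small on C ∪ {y₂}
  have hK₁cl : IsClosed (C ∪ {y₂}) := hC.union isClosed_singleton
  have hK₁ne : (C ∪ {y₂}).Nonempty := ⟨y₂, Or.inr rfl⟩
  have hyK₁ : y₁ ∉ C ∪ {y₂} := by
    rintro (h | h)
    · exact hC1 h
    · exact hne h
  obtain ⟨F₁, hF₁A, hF₁le, hF₁y₁, hF₁K⟩ := exists_small_on_compact A hy₁ hK₁cl hK₁ne hyK₁ hη16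
  -- W = C ∪ {|F₁| ≥ η/8}
  set W : Set X := C ∪ {x | η / 8 ≤ ‖F₁ x‖} with hWdef
  have hWcl : IsClosed W :=
    hC.union (isClosed_le continuous_const (continuous_norm.comp (map_continuous F₁)))
  have hy₁W : y₁ ∈ W := by
    refine Or.inr ?_
    simp only [Set.mem_setOf_eq, hF₁y₁, norm_one]
    linarith
  have hWne : W.Nonempty := ⟨y₁, hy₁W⟩
  have hy₂W : y₂ ∉ W := by
    rintro (h | h)
    · exact hC2 h
    · have := hF₁K y₂ (Or.inr rfl)
      simp only [Set.mem_setOf_eq] at h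
      linarith
  obtain ⟨F₂, hF₂A, hF₂le, hF₂y₂, hF₂K⟩ := exists_small_on_compact A hy₂ hWcl hWne hy₂W hη16
  -- Möbius corrections
  have ha : ‖F₁ y₂‖ < 1 := by
    have := hF₁K y₂ (Or.inr rfl); linarith
  have hb : ‖F₂ y₁‖ < 1 := by
    have := hF₂K y₁ hy₁W; linarith
  obtain ⟨u, huA, huy₁, huy₂, hule, hubd⟩ := exists_mobius_pair A hA hF₁A hF₁le hF₁y₁ ha
  obtain ⟨v, hvA, hvy₂, hvy₁, hvle, hvbd⟩ := exists_mobius_pair A hA hF₂A hF₂le hF₂y₂ hb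
  have haη : ‖F₁ y₂‖ ≤ η / 16 := hF₁K y₂ (Or.inr rfl)
  have hbη : ‖F₂ y₁‖ ≤ η / 16 := hF₂K y₁ hy₁W
  have habs0 : (0:ℝ) ≤ ‖F₁ y₂‖ := norm_nonneg _
  have hbabs0 : (0:ℝ) ≤ ‖F₂ y₁‖ := norm_nonneg _
  -- if |F₁ x| ≤ η/8 then |u x| ≤ η
  have hukey : ∀ x, ‖F₁ x‖ ≤ η / 8 → ‖u x‖ ≤ η := by
    intro x hx
    refine le_trans (hubd x) ?_
    rw [div_le_iff₀ (by linarith)]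
    nlinarith
  -- if x ∈ W then |v x| ≤ η
  have hvkey : ∀ x ∈ W, ‖v x‖ ≤ η := by
    intro x hx
    refine le_trans (hvbd x) ?_
    rw [div_le_iff₀ (by linarith)]
    have := hF₂K x hx
    nlinarith
  refine ⟨u, v, huA, hvA, huy₁, huy₂, hvy₁, hvy₂, hule, hvle, ?_, ?_⟩
  · intro x
    rcases le_or_gt (‖F₁ x‖) (η / 8) with h | h
    · have := hukey x h
      have := hvle x
      linarith
    · have hxW : x ∈ W := Or.inr (le_of_lt h)
      have := hvkey x hxW
      have := hule x
      linarith
  · intro x hx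
    constructor
    · exact hukey x (le_trans (hF₁K x (Or.inl hx)) (by linarith))
    · exact hvkey x (Or.inl hx)

/-- One improvement step: halve the defect with a small move. -/
private lemma step_lemma {X : Type*} [TopologicalSpace X] [CompactSpace X] [T2Space X]
    (A : Subalgebra ℂ C(X, ℂ)) (hA : IsClosed (A : Set C(X, ℂ)))
    {y₁ y₂ : X} (hy₁ : y₁ ∈ choquetBdry A) (hy₂ : y₂ ∈ choquetBdry A) (hne : y₁ ≠ y₂)
    {ε : ℝ} (hε : 0 < ε) (hε1 : ε ≤ 1)
    {u v : C(X, ℂ)} (huA : u ∈ A) (hvA : v ∈ A)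
    (huy₁ : u y₁ = 1) (huy₂ : u y₂ = 0) (hvy₁ : v y₁ = 0) (hvy₂ : v y₂ = 1)
    (hule : ∀ x, ‖u x‖ ≤ 1) (hvle : ∀ x, ‖v x‖ ≤ 1)
    (hsum : ∀ x, ‖u x‖ + ‖v x‖ ≤ 1 + ε) :
    ∃ u' v' : C(X, ℂ), u' ∈ A ∧ v' ∈ A ∧ u' y₁ = 1 ∧ u' y₂ = 0 ∧ v' y₁ = 0 ∧ v' y₂ = 1 ∧
      (∀ x, ‖u' x‖ ≤ 1) ∧ (∀ x, ‖v' x‖ ≤ 1) ∧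
      (∀ x, ‖u' x‖ + ‖v' x‖ ≤ 1 + ε / 2) ∧
      ‖u' - u‖ ≤ ε ∧ ‖v' - v‖ ≤ ε := by
  set B : Set X := {x | 1 + ε / 4 ≤ ‖u x‖ + ‖v x‖} with hBdef
  have hBcl : IsClosed B := isClosed_le continuous_const
    ((continuous_norm.comp (map_continuous u)).add
      (continuous_norm.comp (map_continuous v)))
  have hy₁B : y₁ ∉ B := by
    simp only [hBdef, Set.mem_setOf_eq, huy₁, hvy₁, norm_one, norm_zero]
    intro h; linarith
  have hy₂B : y₂ ∉ B := by
    simp only [hBdef, Set.mem_setOf_eq, huy₂, hvy₂, norm_one, norm_zero]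
    intro h; linarith
  obtain ⟨p, q, hpA, hqA, hpy₁, hpy₂, hqy₁, hqy₂, hple, hqle, hpqsum, hpqB⟩ :=
    exists_base_pair A hA hy₁ hy₂ hne hBcl hy₁B hy₂B (by linarith : (0:ℝ) < ε / 4)
      (by linarith)
  set s : ℂ := ((ε / 2 : ℝ) : ℂ) with hsdef
  have hsabs : ‖s‖ = ε / 2 := by
    rw [hsdef, Complex.norm_real, Real.norm_eq_abs, abs_of_pos (by linarith)]
  have h1sabs : ‖1 - s‖ = 1 - ε / 2 := by
    have : (1 : ℂ) - s = ((1 - ε / 2 : ℝ) : ℂ) := by rw [hsdef]; push_cast; ring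
    rw [this, Complex.norm_real, Real.norm_eq_abs, abs_of_nonneg (by linarith)]
  have keyabs : ∀ z w : ℂ, ‖(1 - s) * z + s * w‖
      ≤ (1 - ε / 2) * ‖z‖ + ε / 2 * ‖w‖ := by
    intro z w
    calc ‖(1 - s) * z + s * w‖
        ≤ ‖(1 - s) * z‖ + ‖s * w‖ := norm_add_le _ _
      _ = (1 - ε / 2) * ‖z‖ + ε / 2 * ‖w‖ := by
          rw [norm_mul, norm_mul, hsabs, h1sabs]
  refine ⟨(1 - s) • u + s • p, (1 - s) • v + s • q, ?_, ?_, ?_, ?_, ?_, ?_, ?_, ?_, ?_, ?_, ?_⟩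
  · exact A.add_mem (A.smul_mem huA _) (A.smul_mem hpA _)
  · exact A.add_mem (A.smul_mem hvA _) (A.smul_mem hqA _)
  · simp only [ContinuousMap.add_apply, ContinuousMap.smul_apply, smul_eq_mul, huy₁, hpy₁]
    ring
  · simp only [ContinuousMap.add_apply, ContinuousMap.smul_apply, smul_eq_mul, huy₂, hpy₂]
    ring
  · simp only [ContinuousMap.add_apply, ContinuousMap.smul_apply, smul_eq_mul, hvy₁, hqy₁]
    ring
  · simp only [ContinuousMap.add_apply, ContinuousMap.smul_apply, smul_eq_mul, hvy₂, hqy₂]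
    ring
  · intro x
    simp only [ContinuousMap.add_apply, ContinuousMap.smul_apply, smul_eq_mul]
    refine le_trans (keyabs _ _) ?_
    have := hule x; have := hple x
    nlinarith
  · intro x
    simp only [ContinuousMap.add_apply, ContinuousMap.smul_apply, smul_eq_mul]
    refine le_trans (keyabs _ _) ?_
    have := hvle x; have := hqle x
    nlinarith
  · intro x
    simp only [ContinuousMap.add_apply, ContinuousMap.smul_apply, smul_eq_mul]
    have h1 := keyabs (u x) (p x)
    have h2 := keyabs (v x) (q x)
    rcases le_or_gt (1 + ε / 4) (‖u x‖ + ‖v x‖) with h | h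
    · have hxB : x ∈ B := h
      obtain ⟨hpB, hqB⟩ := hpqB x hxB
      have := hsum x
      nlinarith
    · have := hpqsum x
      nlinarith
  · have hdiff : (1 - s) • u + s • p - u = s • (p - u) := by
      ext x
      simp only [ContinuousMap.sub_apply, ContinuousMap.add_apply, ContinuousMap.smul_apply,
        smul_eq_mul]
      ring
    rw [hdiff, norm_smul]
    have hs : ‖s‖ = ε / 2 := hsabs
    have hpu : ‖p - u‖ ≤ 2 := by
      refine le_trans (norm_sub_le _ _) ?_
      have h1 : ‖p‖ ≤ 1 := (ContinuousMap.norm_le _ zero_le_one).mpr hple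
      have h2 : ‖u‖ ≤ 1 := (ContinuousMap.norm_le _ zero_le_one).mpr hule
      linarith
    rw [hs]
    nlinarith
  · have hdiff : (1 - s) • v + s • q - v = s • (q - v) := by
      ext x
      simp only [ContinuousMap.sub_apply, ContinuousMap.add_apply, ContinuousMap.smul_apply,
        smul_eq_mul]
      ring
    rw [hdiff, norm_smul]
    have hpu : ‖q - v‖ ≤ 2 := by
      refine le_trans (norm_sub_le _ _) ?_
      have h1 : ‖q‖ ≤ 1 := (ContinuousMap.norm_le _ zero_le_one).mpr hqle
      have h2 : ‖v‖ ≤ 1 := (ContinuousMap.norm_le _ zero_le_one).mpr hvle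
      linarith
    have hs2 : ‖s‖ = ε / 2 := hsabs
    rw [hs2]
    nlinarith

/-- For two distinct Choquet boundary points `y₁, y₂` of a uniform algebra `A` and any
unimodular `μ₁, μ₂` there is `g ∈ S(A)` with `g y₁ = μ₁` and `g y₂ = μ₂`. -/
theorem exists_sphere_elt_with_unimodular_values
    {X : Type*} [TopologicalSpace X] [CompactSpace X] [T2Space X] [Nonempty X]
    (A : Subalgebra ℂ C(X, ℂ)) (hA : IsClosed (A : Set C(X, ℂ)))
    (hAsep : ∀ x₁ x₂ : X, x₁ ≠ x₂ → ∃ f ∈ A, f x₁ ≠ f x₂)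
    (y₁ y₂ : X) (hy₁ : y₁ ∈ choquetBdry A) (hy₂ : y₂ ∈ choquetBdry A) (hne : y₁ ≠ y₂)
    (μ₁ μ₂ : ℂ) (hμ₁ : ‖μ₁‖ = 1) (hμ₂ : ‖μ₂‖ = 1) :
    ∃ g ∈ uaSphere A, g y₁ = μ₁ ∧ g y₂ = μ₂ := by
  classical
  -- invariant predicate
  set P : ℕ → C(X, ℂ) × C(X, ℂ) → Prop := fun n p =>
    p.1 ∈ A ∧ p.2 ∈ A ∧ p.1 y₁ = 1 ∧ p.1 y₂ = 0 ∧ p.2 y₁ = 0 ∧ p.2 y₂ = 1 ∧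
    (∀ x, ‖p.1 x‖ ≤ 1) ∧ (∀ x, ‖p.2 x‖ ≤ 1) ∧
    (∀ x, ‖p.1 x‖ + ‖p.2 x‖ ≤ 1 + (1/2 : ℝ) ^ (n + 1)) with hPdef
  -- initial pair
  have hinit : ∃ p, P 0 p := by
    obtain ⟨u, v, h1, h2, h3, h4, h5, h6, h7, h8, h9, _⟩ :=
      exists_base_pair A hA hy₁ hy₂ hne isClosed_empty (Set.notMem_empty y₁)
        (Set.notMem_empty y₂) (by norm_num : (0:ℝ) < 1/2) (by norm_num)
    exact ⟨(u, v), h1, h2, h3, h4, h5, h6, h7, h8, by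
      intro x
      have := h9 x
      norm_num at this ⊢
      linarith⟩
  -- the improvement step
  have hstep' : ∀ n (p : {q // P n q}), ∃ r : {q // P (n + 1) q},
      ‖r.1.1 - p.1.1‖ ≤ (1/2 : ℝ) ^ n ∧ ‖r.1.2 - p.1.2‖ ≤ (1/2 : ℝ) ^ n := by
    intro n ⟨⟨u, v⟩, m1, m2, e1, e2, e3, e4, l1, l2, hs⟩
    have hεpos : (0:ℝ) < (1/2 : ℝ) ^ (n + 1) := by positivity
    have hεle : ((1:ℝ)/2) ^ (n + 1) ≤ 1 := pow_le_one₀ (by norm_num) (by norm_num)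
    obtain ⟨u', v', m1', m2', e1', e2', e3', e4', l1', l2', hs', hd1, hd2⟩ :=
      step_lemma A hA hy₁ hy₂ hne hεpos hεle m1 m2 e1 e2 e3 e4 l1 l2 hs
    have hhalf : ((1:ℝ)/2) ^ (n + 1) / 2 = (1/2 : ℝ) ^ (n + 1 + 1) := by
      rw [pow_succ]; ring
    have hle : ((1:ℝ)/2) ^ (n + 1) ≤ (1/2 : ℝ) ^ n := by
      rw [pow_succ]
      nlinarith [pow_pos (by norm_num : (0:ℝ) < 1/2) n]
    exact ⟨⟨(u', v'), m1', m2', e1', e2', e3', e4', l1', l2', by rw [← hhalf]; exact hs'⟩,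
      le_trans hd1 hle, le_trans hd2 hle⟩
  -- build the sequence
  let f : ∀ n, {q // P n q} := fun n =>
    Nat.rec ⟨hinit.choose, hinit.choose_spec⟩ (fun n p => (hstep' n p).choose) n
  have hf : ∀ n, ‖(f (n + 1)).1.1 - (f n).1.1‖ ≤ (1/2 : ℝ) ^ n ∧
      ‖(f (n + 1)).1.2 - (f n).1.2‖ ≤ (1/2 : ℝ) ^ n :=
    fun n => (hstep' n (f n)).choose_spec
  -- Cauchy sequences
  have hcu : CauchySeq (fun n => (f n).1.1) := by
    apply cauchySeq_of_le_geometric (1/2 : ℝ) 1 (by norm_num)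
    intro n
    rw [dist_eq_norm, norm_sub_rev, one_mul]
    exact (hf n).1
  have hcv : CauchySeq (fun n => (f n).1.2) := by
    apply cauchySeq_of_le_geometric (1/2 : ℝ) 1 (by norm_num)
    intro n
    rw [dist_eq_norm, norm_sub_rev, one_mul]
    exact (hf n).2
  obtain ⟨U, hU⟩ := cauchySeq_tendsto_of_complete hcu
  obtain ⟨V, hV⟩ := cauchySeq_tendsto_of_complete hcv
  -- evaluation limits
  have hev : ∀ (x : X) (W : C(X, ℂ)) (w : ℕ → C(X, ℂ)), Filter.Tendsto w Filter.atTop (nhds W)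
      → Filter.Tendsto (fun n => w n x) Filter.atTop (nhds (W x)) :=
    fun x W w h => ((continuous_eval_const x).tendsto W).comp h
  have hUA : U ∈ A := hA.mem_of_tendsto hU (Filter.Eventually.of_forall fun n => (f n).2.1)
  have hVA : V ∈ A := hA.mem_of_tendsto hV (Filter.Eventually.of_forall fun n => (f n).2.2.1)
  have hUy₁ : U y₁ = 1 := by
    have h1 := hev y₁ U _ hU
    rw [show (fun n => (f n).1.1 y₁) = fun _ => (1 : ℂ) from
      funext fun n => (f n).2.2.2.1] at h1
    exact tendsto_nhds_unique h1 tendsto_const_nhds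
  have hUy₂ : U y₂ = 0 := by
    have h1 := hev y₂ U _ hU
    rw [show (fun n => (f n).1.1 y₂) = fun _ => (0 : ℂ) from
      funext fun n => (f n).2.2.2.2.1] at h1
    exact tendsto_nhds_unique h1 tendsto_const_nhds
  have hVy₁ : V y₁ = 0 := by
    have h1 := hev y₁ V _ hV
    rw [show (fun n => (f n).1.2 y₁) = fun _ => (0 : ℂ) from
      funext fun n => (f n).2.2.2.2.2.1] at h1
    exact tendsto_nhds_unique h1 tendsto_const_nhds
  have hVy₂ : V y₂ = 1 := by
    have h1 := hev y₂ V _ hV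
    rw [show (fun n => (f n).1.2 y₂) = fun _ => (1 : ℂ) from
      funext fun n => (f n).2.2.2.2.2.2.1] at h1
    exact tendsto_nhds_unique h1 tendsto_const_nhds
  -- the key pointwise bound
  have hsumUV : ∀ x, ‖U x‖ + ‖V x‖ ≤ 1 := by
    intro x
    have h1 : Filter.Tendsto (fun n => ‖(f n).1.1 x‖ + ‖(f n).1.2 x‖)
        Filter.atTop (nhds (‖U x‖ + ‖V x‖)) :=
      ((continuous_norm.tendsto _).comp (hev x U _ hU)).add
        ((continuous_norm.tendsto _).comp (hev x V _ hV))
    have h2 : Filter.Tendsto (fun n : ℕ => 1 + (1/2 : ℝ) ^ (n + 1)) Filter.atTop (nhds 1) := by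
      have h3 : Filter.Tendsto (fun n : ℕ => (1/2 : ℝ) ^ (n + 1)) Filter.atTop (nhds 0) :=
        (tendsto_pow_atTop_nhds_zero_of_lt_one (by norm_num) (by norm_num)).comp
          (Filter.tendsto_add_atTop_nat 1)
      simpa using tendsto_const_nhds.add h3
    exact le_of_tendsto_of_tendsto' h1 h2 fun n => (f n).2.2.2.2.2.2.2.2.2 x
  -- conclusion
  refine ⟨μ₁ • U + μ₂ • V, ⟨A.add_mem (A.smul_mem hUA μ₁) (A.smul_mem hVA μ₂), ?_⟩, ?_, ?_⟩
  · apply le_antisymm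
    · rw [ContinuousMap.norm_le _ zero_le_one]
      intro x
      simp only [ContinuousMap.add_apply, ContinuousMap.smul_apply, smul_eq_mul]
      calc ‖μ₁ * U x + μ₂ * V x‖ ≤ ‖μ₁ * U x‖ + ‖μ₂ * V x‖ := norm_add_le _ _
        _ = ‖U x‖ + ‖V x‖ := by
            simp [map_mul, hμ₁, hμ₂]
        _ ≤ 1 := hsumUV x
    · have h := (μ₁ • U + μ₂ • V).norm_coe_le_norm y₁
      have h2 : (μ₁ • U + μ₂ • V) y₁ = μ₁ := by
        simp [ContinuousMap.add_apply, ContinuousMap.smul_apply, hUy₁, hVy₁]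
      rw [h2] at h
      rw [hμ₁] at h
      exact h
  · simp [ContinuousMap.add_apply, ContinuousMap.smul_apply, hUy₁, hVy₁]
  · simp [ContinuousMap.add_apply, ContinuousMap.smul_apply, hUy₂, hVy₂]
end

section
/- Let A be a uniform algebra on a compact Hausdorff space X, let E ⊆ X be a weak peak set for A, and let h ∈ A satisfy |h(y)| ≤ 1 for every y ∈ E. Then there exists u ∈ A with ‖u‖ ≤ 1 such that u(y) = 1 for every y ∈ E and ‖hu‖ ≤ 1 (so hu ∈ A agrees with h on E and has supremum norm at most 1). -/
open scoped ComplexConjugate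

lemma sum_half_pow (k : ℕ) : ∑ i ∈ Finset.range k, (1/2:ℝ)^(i+1) = 1 - (1/2)^k := by
  induction k with
  | zero => simp
  | succ k ih => rw [Finset.sum_range_succ, ih, pow_succ]; ring

lemma tsum_half_pow : ∑' n : ℕ, (1/2:ℝ)^(n+1) = 1 := by
  simp_rw [pow_succ]
  rw [tsum_mul_right, tsum_geometric_of_lt_one (by norm_num) (by norm_num)]
  norm_num

lemma summable_half_pow : Summable (fun n : ℕ => (1/2:ℝ)^(n+1)) := by
  simp_rw [pow_succ]
  exact (summable_geometric_of_lt_one (by norm_num) (by norm_num)).mul_right _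

lemma tsum_chalf_pow : ∑' n : ℕ, (1/2:ℂ)^(n+1) = 1 := by
  simp_rw [pow_succ]
  rw [tsum_mul_right, tsum_geometric_of_norm_lt_one (by norm_num)]
  norm_num

lemma summable_chalf_pow : Summable (fun n : ℕ => (1/2:ℂ)^(n+1)) := by
  simp_rw [pow_succ]
  exact (summable_geometric_of_norm_lt_one (show ‖(1/2:ℂ)‖ < 1 by norm_num)).mul_right _


section UAAux

variable {X : Type*} [TopologicalSpace X] [CompactSpace X] [Nonempty X]
variable (A : Subalgebra ℂ C(X, ℂ))

lemma isClosed_of_isPeakSet {K : Set X} (hK : IsPeakSet A K) : IsClosed K := by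
  obtain ⟨f, _, _, hK1, _⟩ := hK
  rw [hK1]
  exact isClosed_eq (map_continuous f) continuous_const

lemma abs_le_one_of_peaking {f : C(X, ℂ)} (hfn : ‖f‖ = 1) (x : X) : ‖f x‖ ≤ 1 := by
  rw [← hfn]; exact f.norm_coe_le_norm x

lemma isPeakSet_inter {K L : Set X} (hK : IsPeakSet A K) (hL : IsPeakSet A L)
    (hne : (K ∩ L).Nonempty) : IsPeakSet A (K ∩ L) := by
  obtain ⟨f, hfA, hfn, hfK, hfKa⟩ := hK
  obtain ⟨g, hgA, hgn, hgL, hgLa⟩ := hL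
  set p : C(X, ℂ) := (2⁻¹ : ℂ) • (f + g) with hp
  have hpx : ∀ x : X, p x = 2⁻¹ * (f x + g x) := fun x => rfl
  -- if |p x| = 1 then x ∈ K ∩ L
  have claim1 : ∀ x : X, ‖p x‖ = 1 → x ∈ K ∩ L := by
    intro x hx
    rw [hpx, norm_mul] at hx
    have h2 : ‖f x + g x‖ = 2 := by
      have : ‖(2⁻¹ : ℂ)‖ = 2⁻¹ := by norm_num
      rw [this] at hx; linarith
    have hfle := abs_le_one_of_peaking hfn x
    have hgle := abs_le_one_of_peaking hgn x
    have htri := norm_add_le (f x) (g x)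
    have hfx1 : ‖f x‖ = 1 := by linarith [htri, h2]
    have hgx1 : ‖g x‖ = 1 := by linarith [htri, h2]
    exact ⟨hfKa ▸ hfx1, hgLa ▸ hgx1⟩
  -- on K ∩ L, p = 1
  have claim2 : ∀ x ∈ K ∩ L, p x = 1 := by
    rintro x ⟨hxK, hxL⟩
    have hfx : f x = 1 := by rw [hfK] at hxK; exact hxK
    have hgx : g x = 1 := by rw [hgL] at hxL; exact hxL
    rw [hpx, hfx, hgx]; norm_num
  obtain ⟨x₀, hx₀⟩ := hne
  refine ⟨p, A.smul_mem (A.add_mem hfA hgA) _, ?_, ?_, ?_⟩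
  · refine le_antisymm ?_ ?_
    · rw [ContinuousMap.norm_le _ zero_le_one]
      intro x
      rw [hpx, norm_mul]
      have : ‖(2⁻¹ : ℂ)‖ = 2⁻¹ := by norm_num
      rw [this]
      have := norm_add_le (f x) (g x)
      have hfle := abs_le_one_of_peaking hfn x
      have hgle := abs_le_one_of_peaking hgn x
      linarith
    · calc (1:ℝ) = ‖p x₀‖ := by rw [claim2 x₀ hx₀]; simp
        _ ≤ ‖p‖ := p.norm_coe_le_norm x₀
  · ext x
    constructor
    · exact fun hx => claim2 x hx
    · intro hx
      have : ‖p x‖ = 1 := by rw [Set.mem_setOf_eq] at hx; rw [hx]; simp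
      exact claim1 x this
  · ext x
    constructor
    · exact fun hx => claim1 x hx
    · intro hx
      rw [Set.mem_setOf_eq, claim2 x hx]; simp

lemma isPeakSet_sInter_finset :
    ∀ F : Finset (Set X), F.Nonempty → (∀ K ∈ F, IsPeakSet A K) →
      (⋂₀ (F : Set (Set X))).Nonempty → IsPeakSet A (⋂₀ (F : Set (Set X))) := by
  intro F
  classical
  induction F using Finset.induction_on with
  | empty => intro h; simp at h
  | @insert a s ha ih =>
    intro _ hF hne
    have hcoe : ((insert a s : Finset (Set X)) : Set (Set X)) = insert a (s : Set (Set X)) := by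
      simp
    rw [hcoe, Set.sInter_insert] at hne ⊢
    rcases s.eq_empty_or_nonempty with hs | hs
    · subst hs
      simpa using hF a (Finset.mem_insert_self a _)
    · refine isPeakSet_inter A (hF a (Finset.mem_insert_self a _)) ?_ hne
      exact ih hs (fun K hK => hF K (Finset.mem_insert_of_mem hK))
        (hne.mono Set.inter_subset_right)

lemma exists_peak_between {S : Set (Set X)} (hS : S.Nonempty) (hSp : ∀ K ∈ S, IsPeakSet A K)
    {U : Set X} (hU : IsOpen U) (hEU : ⋂₀ S ⊆ U) (hEne : (⋂₀ S).Nonempty) :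
    ∃ K, IsPeakSet A K ∧ ⋂₀ S ⊆ K ∧ K ⊆ U := by
  classical
  have hcpt : IsCompact Uᶜ := hU.isClosed_compl.isCompact
  have hempty : (Uᶜ ∩ ⋂ i : S, (i : Set X)) = ∅ := by
    rw [← Set.sInter_eq_iInter]
    rw [Set.eq_empty_iff_forall_notMem]
    rintro x ⟨hxU, hxE⟩
    exact hxU (hEU hxE)
  obtain ⟨T, hT⟩ := hcpt.elim_finite_subfamily_closed (fun i : S => (i : Set X))
    (fun i => isClosed_of_isPeakSet A (hSp i i.2)) hempty
  obtain ⟨s₀, hs₀⟩ := hS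
  set F : Finset (Set X) := insert s₀ (T.image Subtype.val) with hFdef
  have hFmem : ∀ K ∈ F, K ∈ S := by
    intro K hK
    rw [hFdef, Finset.mem_insert] at hK
    rcases hK with rfl | hK
    · exact hs₀
    · obtain ⟨i, _, rfl⟩ := Finset.mem_image.mp hK
      exact i.2
  have hsub : ⋂₀ S ⊆ ⋂₀ (F : Set (Set X)) := by
    intro x hx K hK
    exact hx K (hFmem K hK)
  refine ⟨⋂₀ (F : Set (Set X)),
    isPeakSet_sInter_finset A F ⟨s₀, Finset.mem_insert_self _ _⟩
      (fun K hK => hSp K (hFmem K hK)) (hEne.mono hsub), hsub, ?_⟩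
  intro x hx
  by_contra hxU
  have hxmem : x ∈ Uᶜ ∩ ⋂ i ∈ T, (i : Set X) := by
    refine ⟨hxU, Set.mem_iInter₂.mpr fun i hi => ?_⟩
    refine hx (i : Set X) ?_
    have : (i : Set X) ∈ F := by
      rw [hFdef]
      exact Finset.mem_insert_of_mem (Finset.mem_image_of_mem _ hi)
    exact_mod_cast this
  rw [hT] at hxmem
  exact hxmem

lemma exists_unit_small_off {E : Set X} (hE : IsWeakPeakSet A E) (hEne : E.Nonempty)
    {U : Set X} (hU : IsOpen U) (hEU : E ⊆ U) {δ : ℝ} (hδ : 0 < δ) :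
    ∃ g ∈ A, ‖g‖ ≤ 1 ∧ (∀ y ∈ E, g y = 1) ∧ ∀ x ∉ U, ‖g x‖ ≤ δ := by
  obtain ⟨S, hSne, hSp, rfl⟩ := hE
  obtain ⟨K, ⟨f, hfA, hfn, hfK, hfKa⟩, hEK, hKU⟩ :=
    exists_peak_between A hSne hSp hU hEU hEne
  have hfone : ∀ y ∈ ⋂₀ S, f y = 1 := by
    intro y hy
    have : y ∈ K := hEK hy
    rw [hfK] at this; exact this
  rcases Set.eq_empty_or_nonempty Uᶜ with hUc | hUc
  · refine ⟨f, hfA, le_of_eq hfn, hfone, fun x hx => ?_⟩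
    exact absurd hx (Set.eq_empty_iff_forall_notMem.mp hUc x)
  · have hcpt : IsCompact Uᶜ := hU.isClosed_compl.isCompact
    obtain ⟨x₀, hx₀, hmax⟩ := hcpt.exists_isMaxOn hUc
      ((continuous_norm.comp (map_continuous f)).continuousOn)
    set c := ‖f x₀‖ with hc
    have hc1 : c < 1 := by
      refine lt_of_le_of_ne (abs_le_one_of_peaking hfn x₀) fun hceq => ?_
      have : x₀ ∈ K := hfKa ▸ hceq
      exact hx₀ (hKU this)
    have hc0 : 0 ≤ c := norm_nonneg _
    obtain ⟨m, hm⟩ := exists_pow_lt_of_lt_one hδ hc1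
    refine ⟨f ^ m, pow_mem hfA m, ?_, ?_, ?_⟩
    · rw [ContinuousMap.norm_le _ zero_le_one]
      intro x
      rw [ContinuousMap.pow_apply, norm_pow]
      exact pow_le_one₀ (norm_nonneg _) (abs_le_one_of_peaking hfn x)
    · intro y hy
      rw [ContinuousMap.pow_apply, hfone y hy, one_pow]
    · intro x hx
      rw [ContinuousMap.pow_apply, norm_pow]
      calc ‖f x‖ ^ m ≤ c ^ m :=
            pow_le_pow_left₀ (norm_nonneg _) (hmax hx) m
        _ ≤ δ := le_of_lt hm

end UAAux

lemma ua_mul_bound {a p b A' : ℝ} (ha : a ≤ A') (hb : b ≤ 1) (ha0 : 0 ≤ a) (hb0 : 0 ≤ b)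
    (hp : 0 ≤ p) : a * p * b ≤ A' * p := by
  nlinarith [mul_nonneg (mul_nonneg ha0 hp) (sub_nonneg.2 hb), mul_nonneg (sub_nonneg.2 ha) hp]

/-- If `E` is a weak peak set for a uniform algebra `A` and `h ∈ A` satisfies `|h| ≤ 1`
on `E`, then there is `u ∈ A` with `‖u‖ ≤ 1`, `u = 1` on `E` and `‖h·u‖ ≤ 1`. -/
theorem exists_multiplier_of_weak_peak_set
    {X : Type*} [TopologicalSpace X] [CompactSpace X] [T2Space X] [Nonempty X]
    (A : Subalgebra ℂ C(X, ℂ)) (hA : IsClosed (A : Set C(X, ℂ)))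
    (hAsep : ∀ x₁ x₂ : X, x₁ ≠ x₂ → ∃ f ∈ A, f x₁ ≠ f x₂)
    (E : Set X) (hE : IsWeakPeakSet A E)
    (h : C(X, ℂ)) (hh : h ∈ A) (hbd : ∀ y ∈ E, ‖h y‖ ≤ 1) :
    ∃ u ∈ A, ‖u‖ ≤ 1 ∧ (∀ y ∈ E, u y = 1) ∧ ‖h * u‖ ≤ 1 := by
  classical
  rcases Set.eq_empty_or_nonempty E with hEe | hEne
  · subst hEe
    exact ⟨0, zero_mem _, by simp, by simp, by simp⟩
  set M := ‖h‖ with hM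
  have hM0 : (0:ℝ) ≤ M := norm_nonneg h
  have hM1 : (0:ℝ) < M + 1 := by linarith
  have key : ∀ n : ℕ, ∃ g ∈ A, ‖g‖ ≤ 1 ∧ (∀ y ∈ E, g y = 1) ∧
      ∀ x : X, ¬(‖h x‖ < 1 + (1/2:ℝ)^(n+1)) → ‖g x‖ ≤ (1/2)^(n+1) / (M+1) := by
    intro n
    have hUopen : IsOpen {x : X | ‖h x‖ < 1 + (1/2:ℝ)^(n+1)} :=
      isOpen_lt ((map_continuous h).norm) continuous_const
    have hEU : E ⊆ {x : X | ‖h x‖ < 1 + (1/2:ℝ)^(n+1)} := by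
      intro y hy
      have h1 := hbd y hy
      rw [Set.mem_setOf_eq]
      have h2 : (0:ℝ) < (1/2:ℝ)^(n+1) := by positivity
      linarith
    obtain ⟨g, hg1, hg2, hg3, hg4⟩ := exists_unit_small_off A hE hEne hUopen hEU
      (show (0:ℝ) < (1/2:ℝ)^(n+1)/(M+1) by positivity)
    exact ⟨g, hg1, hg2, hg3, fun x hx => hg4 x hx⟩
  choose g hgA hgn hgE hgsmall using key
  set F : ℕ → C(X, ℂ) := fun n => ((1/2:ℂ)^(n+1)) • g n with hFdef
  have hFapp : ∀ (n : ℕ) (x : X), F n x = (1/2:ℂ)^(n+1) * g n x := fun n x => rfl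
  have hgxle : ∀ (n : ℕ) (x : X), ‖g n x‖ ≤ 1 :=
    fun n x => le_trans ((g n).norm_coe_le_norm x) (hgn n)
  have h2c : ‖(1/2:ℂ)‖ = (1/2:ℝ) := by norm_num
  have hFnorm : ∀ n, ‖F n‖ ≤ (1/2:ℝ)^(n+1) := by
    intro n
    rw [hFdef]
    calc ‖(1/2:ℂ)^(n+1) • g n‖ = (1/2:ℝ)^(n+1) * ‖g n‖ := by
          rw [norm_smul, norm_pow, h2c]
      _ ≤ (1/2:ℝ)^(n+1) * 1 := by
          have hp : (0:ℝ) ≤ (1/2:ℝ)^(n+1) := by positivity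
          exact mul_le_mul_of_nonneg_left (hgn n) hp
      _ = (1/2:ℝ)^(n+1) := mul_one _
  have hFsum : Summable F := Summable.of_norm_bounded summable_half_pow hFnorm
  set u := ∑' n, F n with hu
  have huapp : ∀ x : X, u x = ∑' n, F n x := fun x => (ContinuousMap.tsum_apply hFsum x).symm
  have huA : u ∈ A := by
    refine hA.mem_of_tendsto hFsum.hasSum.tendsto_sum_nat
      (Filter.Eventually.of_forall fun N => ?_)
    exact sum_mem fun n _ => A.smul_mem (hgA n) _
  have hns : Summable fun n => ‖F n‖ :=
    Summable.of_nonneg_of_le (fun n => norm_nonneg _) hFnorm summable_half_pow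
  have hunorm : ‖u‖ ≤ 1 := by
    calc ‖u‖ ≤ ∑' n, ‖F n‖ := norm_tsum_le_tsum_norm hns
      _ ≤ ∑' n : ℕ, (1/2:ℝ)^(n+1) := Summable.tsum_le_tsum hFnorm hns summable_half_pow
      _ = 1 := tsum_half_pow
  have huE : ∀ y ∈ E, u y = 1 := by
    intro y hy
    rw [huapp y]
    have heq : ∀ n : ℕ, F n y = (1/2:ℂ)^(n+1) := by
      intro n; rw [hFapp, hgE n y hy, mul_one]
    rw [tsum_congr heq, tsum_chalf_pow]
  refine ⟨u, huA, hunorm, huE, ?_⟩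
  rw [ContinuousMap.norm_le _ zero_le_one]
  intro x
  rw [ContinuousMap.mul_apply, huapp x, ← tsum_mul_left]
  have hnorm_eq : ∀ n : ℕ, ‖h x * F n x‖ = ‖h x‖ * (1/2:ℝ)^(n+1) * ‖g n x‖ := by
    intro n
    rw [hFapp, ← mul_assoc, norm_mul, norm_mul, norm_pow, h2c]
  have hhxM : ‖h x‖ ≤ M := h.norm_coe_le_norm x
  have hterm_le : ∀ n : ℕ, ‖h x * F n x‖ ≤ M * ((1/2:ℝ)^(n+1)) := by
    intro n
    rw [hnorm_eq]
    exact ua_mul_bound hhxM (hgxle n x) (norm_nonneg _) (norm_nonneg _) (by positivity)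
  have hterm_sum : Summable fun n => ‖h x * F n x‖ :=
    Summable.of_nonneg_of_le (fun n => norm_nonneg _) hterm_le (summable_half_pow.mul_left M)
  refine le_trans (norm_tsum_le_tsum_norm hterm_sum) ?_
  by_cases hx : ∀ n : ℕ, ‖h x‖ < 1 + (1/2:ℝ)^(n+1)
  · have hhx1 : ‖h x‖ ≤ 1 := by
      by_contra hgt
      push_neg at hgt
      obtain ⟨m, hm⟩ := exists_pow_lt_of_lt_one (sub_pos.2 hgt) (show (1/2:ℝ) < 1 by norm_num)
      have h1 := hx m
      have h2 : (1/2:ℝ)^(m+1) ≤ (1/2:ℝ)^m := by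
        rw [pow_succ]
        nlinarith [pow_nonneg (show (0:ℝ) ≤ 1/2 by norm_num) m]
      linarith
    have hle : ∀ n : ℕ, ‖h x * F n x‖ ≤ (1/2:ℝ)^(n+1) := by
      intro n
      rw [hnorm_eq]
      have := ua_mul_bound hhx1 (hgxle n x) (norm_nonneg (h x)) (norm_nonneg (g n x))
        (show (0:ℝ) ≤ (1/2:ℝ)^(n+1) by positivity)
      linarith
    calc ∑' n, ‖h x * F n x‖ ≤ ∑' n : ℕ, (1/2:ℝ)^(n+1) :=
          Summable.tsum_le_tsum hle hterm_sum summable_half_pow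
      _ = 1 := tsum_half_pow
  · push_neg at hx
    set n₀ := Nat.find hx with hn₀
    have hfind : 1 + (1/2:ℝ)^(n₀+1) ≤ ‖h x‖ := Nat.find_spec hx
    have hlt : ∀ k, k < n₀ → ‖h x‖ < 1 + (1/2:ℝ)^(k+1) := fun k hk =>
      lt_of_not_ge (Nat.find_min hx hk)
    set t := (1/2:ℝ)^n₀ with ht
    have ht0 : (0:ℝ) ≤ t := by positivity
    have ht1 : t ≤ 1 := pow_le_one₀ (by norm_num) (by norm_num)
    set c : ℕ → ℝ := fun n => if n < n₀ then (1 + t) * (1/2:ℝ)^(n+1) else (1/4:ℝ)^(n+1)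
      with hc
    have hcdef : ∀ n, c n = if n < n₀ then (1 + t) * (1/2:ℝ)^(n+1) else (1/4:ℝ)^(n+1) :=
      fun n => rfl
    have hcle : ∀ n, c n ≤ 2 * (1/2:ℝ)^(n+1) := by
      intro n
      rw [hcdef]
      split_ifs with hn
      · nlinarith [pow_nonneg (show (0:ℝ) ≤ 1/2 by norm_num) (n+1)]
      · have h14 : (1/4:ℝ)^(n+1) ≤ (1/2:ℝ)^(n+1) :=
          pow_le_pow_left₀ (by norm_num) (by norm_num) _
        nlinarith [pow_nonneg (show (0:ℝ) ≤ 1/2 by norm_num) (n+1)]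
    have hc0 : ∀ n, 0 ≤ c n := by
      intro n
      rw [hcdef]
      split_ifs with hn
      · positivity
      · positivity
    have hcsum : Summable c :=
      Summable.of_nonneg_of_le hc0 hcle (summable_half_pow.mul_left 2)
    have hterm_c : ∀ n : ℕ, ‖h x * F n x‖ ≤ c n := by
      intro n
      rw [hnorm_eq, hcdef]
      split_ifs with hn
      · have hn₀pos : 0 < n₀ := lt_of_le_of_lt (Nat.zero_le n) hn
        have hhx : ‖h x‖ ≤ 1 + t := by
          have h3 := hlt (n₀ - 1) (Nat.sub_lt hn₀pos one_pos)
          rw [show n₀ - 1 + 1 = n₀ from by omega] at h3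
          exact le_of_lt h3
        exact ua_mul_bound hhx (hgxle n x) (norm_nonneg _) (norm_nonneg _) (by positivity)
      · push_neg at hn
        have hxn : ¬(‖h x‖ < 1 + (1/2:ℝ)^(n+1)) := by
          push_neg
          have hmono : (1/2:ℝ)^(n+1) ≤ (1/2:ℝ)^(n₀+1) :=
            pow_le_pow_of_le_one (by norm_num) (by norm_num) (Nat.succ_le_succ hn)
          linarith
        have hgx : ‖g n x‖ ≤ (1/2:ℝ)^(n+1)/(M+1) := by
          exact hgsmall n x hxn
        have hp : (0:ℝ) ≤ (1/2:ℝ)^(n+1) := by positivity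
        have key2 : M * ((1/2:ℝ)^(n+1)/(M+1)) ≤ (1/2:ℝ)^(n+1) := by
          have h8 : M/(M+1) ≤ 1 := by
            rw [div_le_one hM1]; linarith
          have h9 : M * ((1/2:ℝ)^(n+1)/(M+1)) = (1/2:ℝ)^(n+1) * (M/(M+1)) := by ring
          nlinarith
        have h4 : (1/4:ℝ)^(n+1) = (1/2:ℝ)^(n+1) * (1/2:ℝ)^(n+1) := by
          rw [← mul_pow]; norm_num
        rw [h4]
        calc ‖h x‖ * (1/2:ℝ)^(n+1) * ‖g n x‖
            ≤ M * (1/2:ℝ)^(n+1) * ((1/2:ℝ)^(n+1)/(M+1)) := by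
              apply mul_le_mul (mul_le_mul_of_nonneg_right hhxM hp) hgx (norm_nonneg _)
              positivity
          _ = (1/2:ℝ)^(n+1) * (M * ((1/2:ℝ)^(n+1)/(M+1))) := by ring
          _ ≤ (1/2:ℝ)^(n+1) * (1/2:ℝ)^(n+1) := mul_le_mul_of_nonneg_left key2 hp
    refine le_trans (Summable.tsum_le_tsum hterm_c hterm_sum hcsum) ?_
    rw [← Summable.sum_add_tsum_nat_add n₀ hcsum]
    have hhead : ∑ i ∈ Finset.range n₀, c i = (1 + t) * (1 - t) := by
      have hcongr : ∀ i ∈ Finset.range n₀, c i = (1 + t) * (1/2:ℝ)^(i+1) := by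
        intro i hi
        rw [hcdef, if_pos (Finset.mem_range.mp hi)]
      rw [Finset.sum_congr rfl hcongr, ← Finset.mul_sum, sum_half_pow]
    have htail : ∑' i : ℕ, c (i + n₀) = (1/3) * (t * t) := by
      have h5 : ∀ i : ℕ, c (i + n₀) = (1/4:ℝ)^(i + n₀ + 1) := by
        intro i
        rw [hcdef, if_neg (by omega)]
      have h6 : ∀ i : ℕ, c (i + n₀) = (1/4:ℝ)^i * (1/4:ℝ)^(n₀+1) := by
        intro i
        rw [h5, show i + n₀ + 1 = i + (n₀ + 1) from by omega, pow_add]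
      rw [tsum_congr h6, tsum_mul_right, tsum_geometric_of_lt_one (by norm_num) (by norm_num)]
      have h7 : t * t = (1/4:ℝ)^n₀ := by
        rw [ht, ← mul_pow]; norm_num
      rw [h7, pow_succ]
      ring
    rw [hhead, htail]
    nlinarith [mul_nonneg ht0 ht0]
end

section
/- Let A and B be uniform algebras on compact Hausdorff spaces X and Y, let T : S(A) → S(B) be a surjective isometry, and let φ : Ch(A) → Ch(B) be a bijection and τ : Ch(A) × 𝕋 → 𝕋 a map with T(F_{x,λ}) = F_{φ(x), τ(x,λ)} for all x ∈ Ch(A), λ ∈ 𝕋. Define Ch(A)₊ = {x ∈ Ch(A) : τ(x,i)/τ(x,1) = i} and Ch(A)₋ = {x ∈ Ch(A) : τ(x,i)/τ(x,1) = −i}. Then Ch(A)₊ ∪ Ch(A)₋ = Ch(A), and for every λ ∈ 𝕋 one has τ(x,λ) = λ·τ(x,1) when x ∈ Ch(A)₊ and τ(x,λ) = conj(λ)·τ(x,1) when x ∈ Ch(A)₋. -/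
open scoped ComplexConjugate

private lemma chq_exists {X : Type*} [TopologicalSpace X] [CompactSpace X]
    (A : Subalgebra ℂ C(X, ℂ)) {x : X} (hx : x ∈ choquetBdry A) :
    ∃ h : C(X, ℂ), h ∈ A ∧ ‖h‖ = 1 ∧ h x = 1 := by
  obtain ⟨S, ⟨E, hE⟩, hpeak, heq⟩ := hx
  obtain ⟨f, hfA, hf1, hfE, -⟩ := hpeak E hE
  have hxE : x ∈ E := by
    have hxI : x ∈ ⋂₀ S := heq ▸ rfl
    exact hxI E hE
  exact ⟨f, hfA, hf1, by rw [hfE] at hxE; exact hxE⟩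

private lemma unit_sq {z : ℂ} (h : ‖z‖ = 1) :
    z.re * z.re + z.im * z.im = 1 := by
  have h2 := Complex.sq_norm z
  rw [h] at h2
  simpa [Complex.normSq_apply] using h2.symm

private lemma normSq_eq_of_abs_eq {z w : ℂ} (h : ‖z‖ = ‖w‖) :
    Complex.normSq z = Complex.normSq w := by
  rw [← Complex.sq_norm, ← Complex.sq_norm, h]

/-- With `φ`, `τ` as in the correspondence `T(F_{x,λ}) = F_{φ(x),τ(x,λ)}`, every
`x ∈ Ch(A)` satisfies `τ(x,i)/τ(x,1) = ± i`, and `τ(x,λ) = λ·τ(x,1)` for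
`x ∈ Ch(A)₊` while `τ(x,λ) = conj(λ)·τ(x,1)` for `x ∈ Ch(A)₋`. -/
theorem torus_map_formula
    {X Y : Type*} [TopologicalSpace X] [CompactSpace X] [T2Space X] [Nonempty X]
    [TopologicalSpace Y] [CompactSpace Y] [T2Space Y] [Nonempty Y]
    (A : Subalgebra ℂ C(X, ℂ)) (hA : IsClosed (A : Set C(X, ℂ)))
    (hAsep : ∀ x₁ x₂ : X, x₁ ≠ x₂ → ∃ f ∈ A, f x₁ ≠ f x₂)
    (B : Subalgebra ℂ C(Y, ℂ)) (hB : IsClosed (B : Set C(Y, ℂ)))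
    (hBsep : ∀ y₁ y₂ : Y, y₁ ≠ y₂ → ∃ g ∈ B, g y₁ ≠ g y₂)
    (T : ↥(uaSphere A) → ↥(uaSphere B))
    (hTsur : Function.Surjective T)
    (hTiso : ∀ f g : ↥(uaSphere A),
      ‖(T f : C(Y, ℂ)) - (T g : C(Y, ℂ))‖ = ‖(f : C(X, ℂ)) - (g : C(X, ℂ))‖)
    (φ : X → Y) (hφ : Set.BijOn φ (choquetBdry A) (choquetBdry B))
    (τ : X → ℂ → ℂ)
    (hτ : ∀ x ∈ choquetBdry A, ∀ lam : ℂ, ‖lam‖ = 1 →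
      ‖τ x lam‖ = 1 ∧
      (fun f : ↥(uaSphere A) => (T f : C(Y, ℂ))) ''
          {f : ↥(uaSphere A) | (f : C(X, ℂ)) ∈ uaSlice A x lam} =
        uaSlice B (φ x) (τ x lam)) :
    ∀ x ∈ choquetBdry A,
      (τ x Complex.I / τ x 1 = Complex.I ∨ τ x Complex.I / τ x 1 = -Complex.I) ∧
      ∀ lam : ℂ, ‖lam‖ = 1 →
        (τ x Complex.I / τ x 1 = Complex.I → τ x lam = lam * τ x 1) ∧
        (τ x Complex.I / τ x 1 = -Complex.I → τ x lam = conj lam * τ x 1) := by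

  -- Key step: τ(x,·) is an isometry on the unit circle.
  have key : ∀ x ∈ choquetBdry A, ∀ lam mu : ℂ, ‖lam‖ = 1 → ‖mu‖ = 1 →
      ‖τ x lam - τ x mu‖ = ‖lam - mu‖ := by
    intro x hx lam mu hlam hmu
    obtain ⟨h, hhA, hh1, hhx⟩ := chq_exists A hx
    have hφx : φ x ∈ choquetBdry B := hφ.1 hx
    obtain ⟨k, hkB, hk1, hkx⟩ := chq_exists B hφx
    have mk : ∀ c : ℂ, ‖c‖ = 1 → (c • h) ∈ uaSphere A := by
      intro c hc
      refine ⟨A.smul_mem hhA c, ?_⟩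
      rw [norm_smul, hh1, mul_one, hc]
    have mkslice : ∀ c : ℂ, (hc : ‖c‖ = 1) → (c • h) ∈ uaSlice A x c := by
      intro c hc
      exact ⟨mk c hc, by simp [hhx]⟩
    have evalT : ∀ c : ℂ, (hc : ‖c‖ = 1) →
        (T ⟨c • h, mk c hc⟩ : C(Y, ℂ)) (φ x) = τ x c := by
      intro c hc
      have hmem : (T ⟨c • h, mk c hc⟩ : C(Y, ℂ)) ∈ uaSlice B (φ x) (τ x c) := by
        rw [← (hτ x hx c hc).2]
        exact ⟨⟨c • h, mk c hc⟩, mkslice c hc, rfl⟩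
      exact hmem.2
    apply le_antisymm
    · set f : ↥(uaSphere A) := ⟨lam • h, mk lam hlam⟩
      set g : ↥(uaSphere A) := ⟨mu • h, mk mu hmu⟩
      calc ‖τ x lam - τ x mu‖
          = ‖((T f : C(Y, ℂ)) - (T g : C(Y, ℂ))) (φ x)‖ := by
            rw [ContinuousMap.sub_apply, evalT lam hlam, evalT mu hmu]
        _ ≤ ‖(T f : C(Y, ℂ)) - (T g : C(Y, ℂ))‖ :=
            ContinuousMap.norm_coe_le_norm _ _
        _ = ‖(f : C(X, ℂ)) - (g : C(X, ℂ))‖ := hTiso f g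
        _ = ‖lam - mu‖ := by
            show ‖lam • h - mu • h‖ = _
            rw [← sub_smul, norm_smul, hh1, mul_one]
    · have mkB : ∀ c : ℂ, ‖c‖ = 1 → (c • k) ∈ uaSphere B := by
        intro c hc
        refine ⟨B.smul_mem hkB c, ?_⟩
        rw [norm_smul, hk1, mul_one, hc]
      have pre : ∀ c : ℂ, (hc : ‖c‖ = 1) →
          ∃ f : ↥(uaSphere A), (f : C(X, ℂ)) x = c ∧ (T f : C(Y, ℂ)) = τ x c • k := by
        intro c hc
        have hcmem : (τ x c • k) ∈ uaSlice B (φ x) (τ x c) :=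
          ⟨mkB _ (hτ x hx c hc).1, by simp [hkx]⟩
        rw [← (hτ x hx c hc).2] at hcmem
        obtain ⟨f, hf, hfT⟩ := hcmem
        exact ⟨f, hf.2, hfT⟩
      obtain ⟨f, hfx, hfT⟩ := pre lam hlam
      obtain ⟨g, hgx, hgT⟩ := pre mu hmu
      calc ‖lam - mu‖
          = ‖((f : C(X, ℂ)) - (g : C(X, ℂ))) x‖ := by
            rw [ContinuousMap.sub_apply, hfx, hgx]
        _ ≤ ‖(f : C(X, ℂ)) - (g : C(X, ℂ))‖ := ContinuousMap.norm_coe_le_norm _ _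
        _ = ‖(T f : C(Y, ℂ)) - (T g : C(Y, ℂ))‖ := (hTiso f g).symm
        _ = ‖τ x lam - τ x mu‖ := by
            rw [hfT, hgT, ← sub_smul, norm_smul, hk1, mul_one]
  -- Algebraic endgame.
  intro x hx
  have ha : ‖τ x 1‖ = 1 := (hτ x hx 1 (by simp)).1
  have hb : ‖τ x Complex.I‖ = 1 := (hτ x hx Complex.I (by simp)).1
  have ha0 : τ x 1 ≠ 0 := by
    intro h0; rw [h0] at ha; simp at ha
  set a := τ x 1 with hadef
  set b := τ x Complex.I with hbdef
  have ea : a.re * a.re + a.im * a.im = 1 := unit_sq ha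
  have eb : b.re * b.re + b.im * b.im = 1 := unit_sq hb
  have dot : b.re * a.re + b.im * a.im = 0 := by
    have h3 : Complex.normSq (b - a) = 2 := by
      rw [normSq_eq_of_abs_eq (key x hx Complex.I 1 (by simp) (by simp))]
      simp [Complex.normSq_apply]
      norm_num
    rw [Complex.normSq_apply] at h3
    simp only [Complex.sub_re, Complex.sub_im] at h3
    linear_combination (ea + eb - h3) / 2
  have hcase : b = Complex.I * a ∨ b = -(Complex.I * a) := by
    have hd : (b.re * a.im - b.im * a.re - 1) * (b.re * a.im - b.im * a.re + 1) = 0 := by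
      linear_combination (b.re * b.re + b.im * b.im) * ea + eb
        - (b.re * a.re + b.im * a.im) * dot
    rcases mul_eq_zero.1 hd with hd1 | hd1
    · -- det = 1 : b = -(I*a)
      right
      have h1 : (b.re - a.im) * (b.re - a.im) + (b.im + a.re) * (b.im + a.re) = 0 := by
        linear_combination ea + eb - 2 * hd1
      have hre : b.re = a.im := by nlinarith [sq_nonneg (b.re - a.im), sq_nonneg (b.im + a.re)]
      have him : b.im = -a.re := by nlinarith [sq_nonneg (b.re - a.im), sq_nonneg (b.im + a.re)]
      refine Complex.ext ?_ ?_
      · rw [hre]; simp [Complex.mul_re]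
      · rw [him]; simp [Complex.mul_im]
    · -- det = -1 : b = I*a
      left
      have h1 : (b.re + a.im) * (b.re + a.im) + (b.im - a.re) * (b.im - a.re) = 0 := by
        linear_combination ea + eb + 2 * hd1
      have hre : b.re = -a.im := by nlinarith [sq_nonneg (b.re + a.im), sq_nonneg (b.im - a.re)]
      have him : b.im = a.re := by nlinarith [sq_nonneg (b.re + a.im), sq_nonneg (b.im - a.re)]
      refine Complex.ext ?_ ?_
      · rw [hre]; simp [Complex.mul_re]
      · rw [him]; simp [Complex.mul_im]
  have hdiv : ∀ c : ℂ, (b / a = c ↔ b = c * a) := fun c => div_eq_iff ha0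
  refine ⟨?_, ?_⟩
  · rcases hcase with h | h
    · exact Or.inl ((hdiv _).2 h)
    · exact Or.inr ((hdiv _).2 (by rw [h]; ring))
  · intro lam hlam
    have ht : ‖τ x lam‖ = 1 := (hτ x hx lam hlam).1
    set t := τ x lam with htdef
    have et : t.re * t.re + t.im * t.im = 1 := unit_sq ht
    have el : lam.re * lam.re + lam.im * lam.im = 1 := unit_sq hlam
    have e1' : t.re * a.re + t.im * a.im = lam.re := by
      have h3 := normSq_eq_of_abs_eq (key x hx lam 1 hlam (by simp))
      rw [Complex.normSq_apply, Complex.normSq_apply] at h3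
      simp only [Complex.sub_re, Complex.sub_im, Complex.one_re, Complex.one_im] at h3
      linear_combination (et + ea - el - h3) / 2
    have e2' : t.re * b.re + t.im * b.im = lam.im := by
      have h3 := normSq_eq_of_abs_eq (key x hx lam Complex.I hlam (by simp))
      rw [Complex.normSq_apply, Complex.normSq_apply] at h3
      simp only [Complex.sub_re, Complex.sub_im, Complex.I_re, Complex.I_im] at h3
      linear_combination (et + eb - el - h3) / 2
    refine ⟨?_, ?_⟩
    · intro hpos
      have hb' : b = Complex.I * a := (hdiv _).1 hpos
      have hbre : b.re = -a.im := by rw [hb']; simp [Complex.mul_re]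
      have hbim : b.im = a.re := by rw [hb']; simp [Complex.mul_im]
      rw [hbre, hbim] at e2'
      have e2s : t.im * a.re - t.re * a.im = lam.im := by linear_combination e2'
      refine Complex.ext ?_ ?_
      · rw [Complex.mul_re]
        linear_combination a.re * e1' - a.im * e2s - t.re * ea
      · rw [Complex.mul_im]
        linear_combination a.im * e1' + a.re * e2s - t.im * ea
    · intro hneg
      have hb' : b = -(Complex.I * a) := by
        rw [(hdiv _).1 hneg]; ring
      have hbre : b.re = a.im := by rw [hb']; simp [Complex.mul_re]
      have hbim : b.im = -a.re := by rw [hb']; simp [Complex.mul_im]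
      rw [hbre, hbim] at e2'
      have e2s : t.re * a.im - t.im * a.re = lam.im := by linear_combination e2'
      refine Complex.ext ?_ ?_
      · rw [Complex.mul_re]
        simp only [Complex.conj_re, Complex.conj_im]
        linear_combination a.re * e1' + a.im * e2s - t.re * ea
      · rw [Complex.mul_im]
        simp only [Complex.conj_re, Complex.conj_im]
        linear_combination a.im * e1' - a.re * e2s - t.im * ea
end

section
/- Let R be the convex hull in ℂ of the four points 0, (√3/3)·exp(iπ/6), (√3/3)·exp(−iπ/6), 1, and let R̃ be the convex hull in ℂ of the six points 0, (1/3)·exp(iπ/3), (1/3)·exp(−iπ/3), (√3/3)·exp(iπ/6), (√3/3)·exp(−iπ/6), 1. Then: (i) for every z ∈ R̃ one has |2z − 1| ≤ 1; (ii) for all z, w ∈ R one has zw ∈ R̃. -/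
/-- The closed solid rhombus with vertices `0`, `(√3/3)·e^{±iπ/6}`, `1`. -/
noncomputable def rhombusR : Set ℂ :=
  convexHull ℝ
    {0, (Real.sqrt 3 / 3 : ℝ) * Complex.exp (Complex.I * ((Real.pi : ℂ) / 6)),
      (Real.sqrt 3 / 3 : ℝ) * Complex.exp (-(Complex.I * ((Real.pi : ℂ) / 6))), 1}

/-- The closed solid hexagon with vertices `0`, `(1/3)·e^{±iπ/3}`,
`(√3/3)·e^{±iπ/6}`, `1`. -/
noncomputable def hexagonR : Set ℂ :=
  convexHull ℝ
    {0, (1 / 3 : ℂ) * Complex.exp (Complex.I * ((Real.pi : ℂ) / 3)),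
      (1 / 3 : ℂ) * Complex.exp (-(Complex.I * ((Real.pi : ℂ) / 3))),
      (Real.sqrt 3 / 3 : ℝ) * Complex.exp (Complex.I * ((Real.pi : ℂ) / 6)),
      (Real.sqrt 3 / 3 : ℝ) * Complex.exp (-(Complex.I * ((Real.pi : ℂ) / 6))), 1}

private lemma sqrt3_sq : ((Real.sqrt 3 : ℝ) : ℂ) * ((Real.sqrt 3 : ℝ) : ℂ) = 3 := by
  rw [← Complex.ofReal_mul, Real.mul_self_sqrt (by norm_num)]
  norm_num

private lemma exp_p6 : Complex.exp (Complex.I * ((Real.pi : ℂ) / 6)) =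
    ((Real.sqrt 3 / 2 : ℝ) : ℂ) + ((1 / 2 : ℝ) : ℂ) * Complex.I := by
  rw [mul_comm, show ((Real.pi : ℂ) / 6) = ((Real.pi / 6 : ℝ) : ℂ) by push_cast; ring,
    Complex.exp_mul_I, ← Complex.ofReal_cos, ← Complex.ofReal_sin,
    Real.cos_pi_div_six, Real.sin_pi_div_six]

private lemma exp_m6 : Complex.exp (-(Complex.I * ((Real.pi : ℂ) / 6))) =
    ((Real.sqrt 3 / 2 : ℝ) : ℂ) - ((1 / 2 : ℝ) : ℂ) * Complex.I := by
  rw [show (-(Complex.I * ((Real.pi : ℂ) / 6))) = ((-(Real.pi / 6) : ℝ) : ℂ) * Complex.I by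
      push_cast; ring,
    Complex.exp_mul_I, ← Complex.ofReal_cos, ← Complex.ofReal_sin,
    Real.cos_neg, Real.sin_neg, Real.cos_pi_div_six, Real.sin_pi_div_six]
  push_cast; ring

private lemma exp_p3 : Complex.exp (Complex.I * ((Real.pi : ℂ) / 3)) =
    ((1 / 2 : ℝ) : ℂ) + ((Real.sqrt 3 / 2 : ℝ) : ℂ) * Complex.I := by
  rw [mul_comm, show ((Real.pi : ℂ) / 3) = ((Real.pi / 3 : ℝ) : ℂ) by push_cast; ring,
    Complex.exp_mul_I, ← Complex.ofReal_cos, ← Complex.ofReal_sin,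
    Real.cos_pi_div_three, Real.sin_pi_div_three]

private lemma exp_m3 : Complex.exp (-(Complex.I * ((Real.pi : ℂ) / 3))) =
    ((1 / 2 : ℝ) : ℂ) - ((Real.sqrt 3 / 2 : ℝ) : ℂ) * Complex.I := by
  rw [show (-(Complex.I * ((Real.pi : ℂ) / 3))) = ((-(Real.pi / 3) : ℝ) : ℂ) * Complex.I by
      push_cast; ring,
    Complex.exp_mul_I, ← Complex.ofReal_cos, ← Complex.ofReal_sin,
    Real.cos_neg, Real.sin_neg, Real.cos_pi_div_three, Real.sin_pi_div_three]
  push_cast; ring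

private lemma vu : ((Real.sqrt 3 / 3 : ℝ) : ℂ) * Complex.exp (Complex.I * ((Real.pi : ℂ) / 6)) =
    ((1 / 2 : ℝ) : ℂ) + ((Real.sqrt 3 / 6 : ℝ) : ℂ) * Complex.I := by
  rw [exp_p6]; push_cast
  linear_combination sqrt3_sq / 6

private lemma vu' : ((Real.sqrt 3 / 3 : ℝ) : ℂ) * Complex.exp (-(Complex.I * ((Real.pi : ℂ) / 6))) =
    ((1 / 2 : ℝ) : ℂ) - ((Real.sqrt 3 / 6 : ℝ) : ℂ) * Complex.I := by
  rw [exp_m6]; push_cast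
  linear_combination sqrt3_sq / 6

private lemma vp : (1 / 3 : ℂ) * Complex.exp (Complex.I * ((Real.pi : ℂ) / 3)) =
    ((1 / 6 : ℝ) : ℂ) + ((Real.sqrt 3 / 6 : ℝ) : ℂ) * Complex.I := by
  rw [exp_p3]; push_cast; ring

private lemma vp' : (1 / 3 : ℂ) * Complex.exp (-(Complex.I * ((Real.pi : ℂ) / 3))) =
    ((1 / 6 : ℝ) : ℂ) - ((Real.sqrt 3 / 6 : ℝ) : ℂ) * Complex.I := by
  rw [exp_m3]; push_cast; ring

private lemma hex_eq : hexagonR = convexHull ℝ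
    ({0, ((1 / 6 : ℝ) : ℂ) + ((Real.sqrt 3 / 6 : ℝ) : ℂ) * Complex.I,
      ((1 / 6 : ℝ) : ℂ) - ((Real.sqrt 3 / 6 : ℝ) : ℂ) * Complex.I,
      ((1 / 2 : ℝ) : ℂ) + ((Real.sqrt 3 / 6 : ℝ) : ℂ) * Complex.I,
      ((1 / 2 : ℝ) : ℂ) - ((Real.sqrt 3 / 6 : ℝ) : ℂ) * Complex.I, 1} : Set ℂ) := by
  simp only [hexagonR, vp, vp', vu, vu']

private lemma rh_eq : rhombusR = convexHull ℝ
    ({0, ((1 / 2 : ℝ) : ℂ) + ((Real.sqrt 3 / 6 : ℝ) : ℂ) * Complex.I,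
      ((1 / 2 : ℝ) : ℂ) - ((Real.sqrt 3 / 6 : ℝ) : ℂ) * Complex.I, 1} : Set ℂ) := by
  simp only [rhombusR, vu, vu']

private lemma abs_le_one_of (z : ℂ) (h : Complex.normSq z ≤ 1) : ‖z‖ ≤ 1 := by
  rw [Complex.norm_def]
  exact Real.sqrt_le_one.2 h

private lemma disk_convex : Convex ℝ {z : ℂ | ‖2 * z - 1‖ ≤ 1} := by
  intro x hx y hy a b ha hb hab
  simp only [Set.mem_setOf_eq] at *
  have hab' : (a : ℂ) + (b : ℂ) = 1 := by exact_mod_cast hab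
  have key : 2 * (a • x + b • y) - 1 = (a : ℂ) * (2 * x - 1) + (b : ℂ) * (2 * y - 1) := by
    simp only [Complex.real_smul]
    linear_combination hab'
  calc ‖2 * (a • x + b • y) - 1‖
      = ‖(a : ℂ) * (2 * x - 1) + (b : ℂ) * (2 * y - 1)‖ := by rw [key]
    _ ≤ ‖(a : ℂ) * (2 * x - 1)‖ + ‖(b : ℂ) * (2 * y - 1)‖ :=
        norm_add_le _ _
    _ = a * ‖2 * x - 1‖ + b * ‖2 * y - 1‖ := by
        rw [norm_mul, norm_mul, Complex.norm_of_nonneg ha, Complex.norm_of_nonneg hb]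
    _ ≤ a * 1 + b * 1 := add_le_add (mul_le_mul_of_nonneg_left hx ha)
        (mul_le_mul_of_nonneg_left hy hb)
    _ = 1 := by rw [mul_one, mul_one, hab]

private lemma third_mem : ((1 / 3 : ℝ) : ℂ) ∈ hexagonR := by
  rw [hex_eq]
  have h0 : (0 : ℂ) ∈ convexHull ℝ
      ({0, ((1 / 6 : ℝ) : ℂ) + ((Real.sqrt 3 / 6 : ℝ) : ℂ) * Complex.I,
        ((1 / 6 : ℝ) : ℂ) - ((Real.sqrt 3 / 6 : ℝ) : ℂ) * Complex.I,
        ((1 / 2 : ℝ) : ℂ) + ((Real.sqrt 3 / 6 : ℝ) : ℂ) * Complex.I,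
        ((1 / 2 : ℝ) : ℂ) - ((Real.sqrt 3 / 6 : ℝ) : ℂ) * Complex.I, 1} : Set ℂ) :=
    subset_convexHull ℝ _ (by simp)
  have h1 : (1 : ℂ) ∈ convexHull ℝ
      ({0, ((1 / 6 : ℝ) : ℂ) + ((Real.sqrt 3 / 6 : ℝ) : ℂ) * Complex.I,
        ((1 / 6 : ℝ) : ℂ) - ((Real.sqrt 3 / 6 : ℝ) : ℂ) * Complex.I,
        ((1 / 2 : ℝ) : ℂ) + ((Real.sqrt 3 / 6 : ℝ) : ℂ) * Complex.I,
        ((1 / 2 : ℝ) : ℂ) - ((Real.sqrt 3 / 6 : ℝ) : ℂ) * Complex.I, 1} : Set ℂ) :=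
    subset_convexHull ℝ _ (by simp)
  have := (convex_convexHull ℝ _) h0 h1
    (by norm_num : (0:ℝ) ≤ 2/3) (by norm_num : (0:ℝ) ≤ 1/3) (by norm_num)
  convert this using 1
  simp [Complex.real_smul]

private lemma mul_mem_hex (c : ℂ)
    (hc : ∀ v ∈ ({0, ((1 / 2 : ℝ) : ℂ) + ((Real.sqrt 3 / 6 : ℝ) : ℂ) * Complex.I,
      ((1 / 2 : ℝ) : ℂ) - ((Real.sqrt 3 / 6 : ℝ) : ℂ) * Complex.I, 1} : Set ℂ),
      c * v ∈ hexagonR) :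
    ∀ w ∈ rhombusR, c * w ∈ hexagonR := by
  intro w hw
  rw [rh_eq] at hw
  have h1 : c * w ∈ (LinearMap.mulLeft ℝ c) '' (convexHull ℝ
      ({0, ((1 / 2 : ℝ) : ℂ) + ((Real.sqrt 3 / 6 : ℝ) : ℂ) * Complex.I,
        ((1 / 2 : ℝ) : ℂ) - ((Real.sqrt 3 / 6 : ℝ) : ℂ) * Complex.I, 1} : Set ℂ)) :=
    ⟨w, hw, rfl⟩
  rw [LinearMap.image_convexHull] at h1
  refine convexHull_min ?_ (convex_convexHull ℝ _) h1
  rintro x ⟨v, hv, rfl⟩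
  exact hc v hv

/-- (i) Every `z` in the hexagon satisfies `|2z - 1| ≤ 1`; (ii) the product of two
points of the rhombus lies in the hexagon. -/
theorem rhombus_hexagon_properties :
    (∀ z ∈ hexagonR, ‖2 * z - 1‖ ≤ 1) ∧
    (∀ z ∈ rhombusR, ∀ w ∈ rhombusR, z * w ∈ hexagonR) := by
  have h3 : Real.sqrt 3 * Real.sqrt 3 = 3 := Real.mul_self_sqrt (by norm_num)
  have hsub : rhombusR ⊆ hexagonR := by
    rw [rh_eq, hex_eq]
    apply convexHull_mono
    intro x hx
    simp only [Set.mem_insert_iff, Set.mem_singleton_iff] at *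
    tauto
  have hvmem : ∀ v ∈ ({0, ((1 / 2 : ℝ) : ℂ) + ((Real.sqrt 3 / 6 : ℝ) : ℂ) * Complex.I,
      ((1 / 2 : ℝ) : ℂ) - ((Real.sqrt 3 / 6 : ℝ) : ℂ) * Complex.I, 1} : Set ℂ),
      v ∈ hexagonR := by
    intro v hv
    rw [hex_eq]
    apply subset_convexHull ℝ _
    simp only [Set.mem_insert_iff, Set.mem_singleton_iff] at *
    tauto
  constructor
  · intro z hz
    have hsub2 : hexagonR ⊆ {z : ℂ | ‖2 * z - 1‖ ≤ 1} := by
      rw [hex_eq]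
      refine convexHull_min ?_ disk_convex
      intro v hv
      simp only [Set.mem_insert_iff, Set.mem_singleton_iff] at hv
      rcases hv with rfl | rfl | rfl | rfl | rfl | rfl <;>
        · refine abs_le_one_of _ ?_
          simp only [Complex.normSq_apply, Complex.sub_re, Complex.sub_im, Complex.add_re,
            Complex.add_im, Complex.mul_re, Complex.mul_im, Complex.ofReal_re, Complex.ofReal_im,
            Complex.I_re, Complex.I_im, Complex.one_re, Complex.one_im, Complex.zero_re,
            Complex.zero_im, Complex.re_ofNat, Complex.im_ofNat]
          nlinarith [Real.sqrt_nonneg 3]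
    exact hsub2 hz
  · intro z hz w hw
    -- first: for each rhombus vertex v, v * w ∈ hexagonR
    have hvw : ∀ v ∈ ({0, ((1 / 2 : ℝ) : ℂ) + ((Real.sqrt 3 / 6 : ℝ) : ℂ) * Complex.I,
        ((1 / 2 : ℝ) : ℂ) - ((Real.sqrt 3 / 6 : ℝ) : ℂ) * Complex.I, 1} : Set ℂ),
        v * w ∈ hexagonR := by
      intro v hv
      refine mul_mem_hex v ?_ w hw
      intro v' hv'
      have h3c := sqrt3_sq
      simp only [Set.mem_insert_iff, Set.mem_singleton_iff] at hv hv'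
      rcases hv with rfl | rfl | rfl | rfl <;> rcases hv' with rfl | rfl | rfl | rfl
      all_goals first
        | (rw [zero_mul]; exact hvmem 0 (by simp))
        | (rw [mul_zero]; exact hvmem 0 (by simp))
        | (rw [one_mul]; exact hvmem _ (by simp [Set.mem_insert_iff]))
        | (rw [mul_one]; exact hvmem _ (by simp [Set.mem_insert_iff]))
        | (rw [show (((1 / 2 : ℝ) : ℂ) + ((Real.sqrt 3 / 6 : ℝ) : ℂ) * Complex.I) *
                (((1 / 2 : ℝ) : ℂ) + ((Real.sqrt 3 / 6 : ℝ) : ℂ) * Complex.I) =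
                ((1 / 6 : ℝ) : ℂ) + ((Real.sqrt 3 / 6 : ℝ) : ℂ) * Complex.I by
              push_cast; linear_combination (-(1:ℂ)/36) * sqrt3_sq + (((Real.sqrt 3 : ℝ) : ℂ) * ((Real.sqrt 3 : ℝ) : ℂ) / 36) * Complex.I_sq];
           rw [hex_eq]; exact subset_convexHull ℝ _ (by simp))
        | (rw [show (((1 / 2 : ℝ) : ℂ) - ((Real.sqrt 3 / 6 : ℝ) : ℂ) * Complex.I) *
                (((1 / 2 : ℝ) : ℂ) - ((Real.sqrt 3 / 6 : ℝ) : ℂ) * Complex.I) =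
                ((1 / 6 : ℝ) : ℂ) - ((Real.sqrt 3 / 6 : ℝ) : ℂ) * Complex.I by
              push_cast; linear_combination (-(1:ℂ)/36) * sqrt3_sq + (((Real.sqrt 3 : ℝ) : ℂ) * ((Real.sqrt 3 : ℝ) : ℂ) / 36) * Complex.I_sq];
           rw [hex_eq]; exact subset_convexHull ℝ _ (by simp))
        | (rw [show (((1 / 2 : ℝ) : ℂ) + ((Real.sqrt 3 / 6 : ℝ) : ℂ) * Complex.I) *
                (((1 / 2 : ℝ) : ℂ) - ((Real.sqrt 3 / 6 : ℝ) : ℂ) * Complex.I) =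
                ((1 / 3 : ℝ) : ℂ) by
              push_cast; linear_combination ((1:ℂ)/36) * sqrt3_sq + (-((Real.sqrt 3 : ℝ) : ℂ) * ((Real.sqrt 3 : ℝ) : ℂ) / 36) * Complex.I_sq];
           exact third_mem)
        | (rw [show (((1 / 2 : ℝ) : ℂ) - ((Real.sqrt 3 / 6 : ℝ) : ℂ) * Complex.I) *
                (((1 / 2 : ℝ) : ℂ) + ((Real.sqrt 3 / 6 : ℝ) : ℂ) * Complex.I) =
                ((1 / 3 : ℝ) : ℂ) by
              push_cast; linear_combination ((1:ℂ)/36) * sqrt3_sq + (-((Real.sqrt 3 : ℝ) : ℂ) * ((Real.sqrt 3 : ℝ) : ℂ) / 36) * Complex.I_sq];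
           exact third_mem)
    -- now z * w = w * z with z in convex hull
    rw [mul_comm]
    refine mul_mem_hex w ?_ z hz
    intro v hv
    rw [mul_comm]
    exact hvw v hv
end

section
/- Let A be a uniform algebra on a compact Hausdorff space X, let f ∈ S(A), let x ∈ Ch(A), and put α = f(x) and λ = α/|α| (where λ is read as 1 if α = 0). Then for every 0 < r < 1 there exists u ∈ A with u(x) = 1 = ‖u‖ and u⁻¹(1) = {y ∈ X : |u(y)| = 1} such that the functions g₊ = (λ − rα)·u + r·f and g₋ = (−λ − rα)·u + r·f belong to S(A) and satisfy g₊(x) = λ and g₋(x) = −λ. -/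
open scoped ComplexConjugate

set_option maxHeartbeats 1000000

lemma hasSum_abs_le {f : ℕ → ℂ} {a : ℂ} {g : ℕ → ℝ} {b : ℝ}
    (hf : HasSum f a) (hg : HasSum g b) (h : ∀ n, ‖f n‖ ≤ g n) :
    ‖a‖ ≤ b := by
  have h' : ∀ n, ‖f n‖ ≤ g n := by simpa using h
  have hsf : Summable (fun n => ‖f n‖) :=
    Summable.of_nonneg_of_le (fun n => norm_nonneg _) h' hg.summable
  calc ‖a‖ = ‖a‖ := rfl
    _ = ‖∑' n, f n‖ := by rw [hf.tsum_eq]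
    _ ≤ ∑' n, ‖f n‖ := norm_tsum_le_tsum_norm hsf
    _ ≤ ∑' n, g n := Summable.tsum_le_tsum h' hsf hg.summable
    _ = b := hg.tsum_eq

lemma hasSum_geom_half_complex : HasSum (fun n : ℕ => ((1:ℂ)/2)^(n+1)) 1 := by
  have h := hasSum_geometric_of_norm_lt_one (ξ := (1:ℂ)/2) (by norm_num)
  have h2 := h.mul_left ((1:ℂ)/2)
  norm_num at h2
  convert h2 using 2 with n
  · rfl
  ring

lemma hasSum_geom_half_real : HasSum (fun n : ℕ => ((1:ℝ)/2)^(n+1)) 1 := by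
  have h := hasSum_geometric_of_norm_lt_one (ξ := (1:ℝ)/2) (by rw [Real.norm_eq_abs, abs_of_nonneg]; norm_num; norm_num)
  have h2 := h.mul_left ((1:ℝ)/2)
  norm_num at h2
  convert h2 using 2 with n
  · rfl
  ring

lemma sum_geom_half_range (N : ℕ) :
    ∑ n ∈ Finset.range N, ((1:ℝ)/2)^(n+1) = 1 - (1/2)^N := by
  induction N with
  | zero => simp
  | succ n ih => rw [Finset.sum_range_succ, ih]; ring

lemma IsPeakingFunction.closed {X : Type*} [TopologicalSpace X] [CompactSpace X]
    {A : Subalgebra ℂ C(X, ℂ)} {E : Set X} {g : C(X, ℂ)} (h : IsPeakingFunction A g E) :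
    IsClosed E := by
  obtain ⟨-, -, hK, -⟩ := h
  exact hK ▸ isClosed_eq (map_continuous g) continuous_const

lemma IsPeakingFunction.abs_le_one {X : Type*} [TopologicalSpace X] [CompactSpace X]
    {A : Subalgebra ℂ C(X, ℂ)} {E : Set X} {g : C(X, ℂ)} (h : IsPeakingFunction A g E)
    (y : X) : ‖g y‖ ≤ 1 := by
  have := ContinuousMap.norm_coe_le_norm g y
  rwa [h.2.1] at this

lemma exists_small_peak {X : Type*} [TopologicalSpace X] [CompactSpace X]
    (A : Subalgebra ℂ C(X, ℂ)) (x : X) (hx : x ∈ choquetBdry A)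
    (U : Set X) (hU : IsOpen U) (hxU : x ∈ U) (ε : ℝ) (hε : 0 < ε) :
    ∃ g : C(X, ℂ), g ∈ A ∧ g x = 1 ∧ (∀ y, ‖g y‖ ≤ 1) ∧
      ∀ y, y ∉ U → ‖g y‖ ≤ ε := by
  classical
  obtain ⟨S, hSne, hSpeak, hSx⟩ := hx
  choose pf hpf using hSpeak
  have hxS : ∀ E (hE : E ∈ S), x ∈ E := by
    intro E hE
    have : x ∈ ⋂₀ S := by rw [← hSx]; exact rfl
    exact this E hE
  have hclosed : ∀ (i : S), IsClosed (i.1 : Set X) := fun i => (hpf i.1 i.2).closed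
  have hUc : IsCompact Uᶜ := hU.isClosed_compl.isCompact
  have hempty : Uᶜ ∩ ⋂ (i : S), (i.1 : Set X) = ∅ := by
    rw [← Set.sInter_eq_iInter, ← hSx]
    ext y; simp only [Set.mem_inter_iff, Set.mem_compl_iff, Set.mem_singleton_iff,
      Set.mem_empty_iff_false, iff_false]
    rintro ⟨hyU, rfl⟩; exact hyU hxU
  obtain ⟨F, hF⟩ := hUc.elim_finite_subfamily_closed _ hclosed hempty
  set p : C(X, ℂ) := ∏ i ∈ F, pf i.1 i.2 with hp
  have hpmem : p ∈ A := Subalgebra.prod_mem A (fun i _ => (hpf i.1 i.2).1)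
  have hpapp : ∀ y, p y = ∏ i ∈ F, pf i.1 i.2 y := by
    intro y
    rw [hp, ContinuousMap.coe_prod, Finset.prod_apply]
  have hpx : p x = 1 := by
    rw [hpapp]
    exact Finset.prod_eq_one fun i _ =>
      ((hpf i.1 i.2).2.2.1 ▸ hxS i.1 i.2 : x ∈ {z | pf i.1 i.2 z = 1})
  have hpabs : ∀ y, ‖p y‖ ≤ 1 := by
    intro y
    rw [hpapp, norm_prod]
    exact Finset.prod_le_one (fun i _ => norm_nonneg _)
      (fun i _ => (hpf i.1 i.2).abs_le_one y)
  have hplt : ∀ y, y ∉ U → ‖p y‖ < 1 := by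
    intro y hy
    have : y ∉ ⋂ i ∈ F, (i.1 : Set X) := by
      intro hmem
      have : y ∈ Uᶜ ∩ ⋂ i ∈ F, (i.1 : Set X) := ⟨hy, hmem⟩
      rw [hF] at this; exact this
    simp only [Set.mem_iInter, not_forall] at this
    obtain ⟨i, hiF, hiy⟩ := this
    have hne : ‖pf i.1 i.2 y‖ ≠ 1 := by
      intro h1
      exact hiy ((hpf i.1 i.2).2.2.2 ▸ h1 : y ∈ (i.1 : Set X))
    have hlt : ‖pf i.1 i.2 y‖ < 1 := lt_of_le_of_ne ((hpf i.1 i.2).abs_le_one y) hne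
    have key : ‖p y‖ ≤ ‖pf i.1 i.2 y‖ := by
      rw [hpapp, norm_prod, ← Finset.mul_prod_erase _ _ hiF]
      have h2 : ∏ j ∈ F.erase i, ‖pf j.1 j.2 y‖ ≤ 1 :=
        Finset.prod_le_one (fun j _ => norm_nonneg _)
          (fun j _ => (hpf j.1 j.2).abs_le_one y)
      calc ‖pf i.1 i.2 y‖ * ∏ j ∈ F.erase i, ‖pf j.1 j.2 y‖
          ≤ ‖pf i.1 i.2 y‖ * 1 :=
            mul_le_mul_of_nonneg_left h2 (norm_nonneg _)
        _ = ‖pf i.1 i.2 y‖ := mul_one _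
    exact lt_of_le_of_lt key hlt
  -- now take a power
  by_cases hne : (Uᶜ : Set X).Nonempty
  · obtain ⟨y₀, hy₀, hy₀max⟩ := hUc.exists_isMaxOn hne
      (continuous_norm.comp (map_continuous p)).continuousOn
    set m : ℝ := ‖p y₀‖ with hm
    have hm1 : m < 1 := hplt y₀ hy₀
    have hm0 : 0 ≤ m := norm_nonneg _
    obtain ⟨k, hk⟩ := exists_pow_lt_of_lt_one hε hm1
    refine ⟨p ^ k, pow_mem hpmem k, ?_, ?_, ?_⟩
    · show (p ^ k) x = 1
      rw [ContinuousMap.coe_pow, Pi.pow_apply, hpx, one_pow]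
    · intro y
      rw [ContinuousMap.coe_pow, Pi.pow_apply, norm_pow]
      exact pow_le_one₀ (norm_nonneg _) (hpabs y)
    · intro y hy
      rw [ContinuousMap.coe_pow, Pi.pow_apply, norm_pow]
      calc ‖p y‖ ^ k ≤ m ^ k :=
            pow_le_pow_left₀ (norm_nonneg _) (hy₀max hy) k
        _ ≤ ε := le_of_lt hk
  · refine ⟨1, one_mem A, rfl, ?_, ?_⟩
    · intro y; simp
    · intro y hy
      exact absurd ⟨y, hy⟩ hne

-- geometric inverse membership
lemma inv_mem_of_closed {X : Type*} [TopologicalSpace X] [CompactSpace X]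
    (A : Subalgebra ℂ C(X, ℂ)) (hA : IsClosed (A : Set C(X, ℂ)))
    (g : C(X, ℂ)) (hg : g ∈ A) (hgabs : ∀ y, ‖g y‖ ≤ 1)
    (b : ℝ) (hb0 : 0 ≤ b) (hb1 : b < 1) :
    ∃ q : C(X, ℂ), q ∈ A ∧ ∀ y, q y = (1 - (b : ℂ) * g y)⁻¹ := by
  have habsw : ∀ y, ‖((b : ℂ) * g y)‖ ≤ b := by
    intro y
    rw [norm_mul, Complex.norm_real, Real.norm_eq_abs, abs_of_nonneg hb0]
    calc b * ‖g y‖ ≤ b * 1 := by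
          exact mul_le_mul_of_nonneg_left (hgabs y) hb0
      _ = b := mul_one b
  have hden : ∀ y, 1 - b ≤ ‖(1 - (b : ℂ) * g y)‖ := by
    intro y
    have := norm_sub_norm_le (1 : ℂ) ((b : ℂ) * g y)
    simp only [norm_one] at this
    linarith [habsw y]
  have hden0 : ∀ y, (1 : ℂ) - (b : ℂ) * g y ≠ 0 := by
    intro y h0
    have := hden y
    rw [h0, norm_zero] at this
    linarith
  set q : C(X, ℂ) := ⟨fun y => (1 - (b : ℂ) * g y)⁻¹, by
    apply Continuous.inv₀
    · exact continuous_const.sub (continuous_const.mul (map_continuous g))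
    · exact hden0⟩ with hq
  have hqy : ∀ y, q y = (1 - (b : ℂ) * g y)⁻¹ := fun y => rfl
  refine ⟨q, ?_, hqy⟩
  set s : ℕ → C(X, ℂ) := fun n => ∑ k ∈ Finset.range n, ((b : ℂ) • g) ^ k with hs
  have hsmem : ∀ n, s n ∈ A := fun n =>
    Subalgebra.sum_mem A fun k _ => pow_mem (Subalgebra.smul_mem A hg _) k
  have hsy : ∀ n y, s n y = ∑ k ∈ Finset.range n, ((b : ℂ) * g y) ^ k := by
    intro n y
    rw [hs]
    simp only [ContinuousMap.coe_sum, Finset.sum_apply, ContinuousMap.coe_pow,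
      Pi.pow_apply, ContinuousMap.coe_smul, Pi.smul_apply, smul_eq_mul]
  have hdiff : ∀ n, ‖s n - q‖ ≤ b ^ n / (1 - b) := by
    intro n
    rw [ContinuousMap.norm_le _ (div_nonneg (pow_nonneg hb0 n) (by linarith))]
    intro y
    rw [ContinuousMap.sub_apply, hsy, hqy]
    set w : ℂ := (b : ℂ) * g y with hw
    have hw1 : w ≠ 1 := by
      intro h1
      have := habsw y
      rw [← hw, h1, norm_one] at this
      linarith
    have h1w : (1 : ℂ) - w ≠ 0 := hden0 y
    have h2 : w - 1 ≠ 0 := sub_ne_zero.mpr hw1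
    have key : (∑ k ∈ Finset.range n, w ^ k) - (1 - w)⁻¹ = -(w ^ n) * (1 - w)⁻¹ := by
      rw [geom_sum_eq hw1]
      field_simp [h1w, h2]
      ring
    rw [key, norm_mul, norm_neg, norm_pow, norm_inv]
    apply div_le_div₀ (by positivity) (pow_le_pow_left₀ (norm_nonneg _) (habsw y) n)
      (by linarith) (hden y)
  have htend : Filter.Tendsto s Filter.atTop (nhds q) := by
    rw [tendsto_iff_norm_sub_tendsto_zero]
    apply squeeze_zero (fun n => norm_nonneg _) hdiff
    simpa using Filter.Tendsto.div_const (tendsto_pow_atTop_nhds_zero_of_lt_one hb0 hb1) (1-b)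
  exact hA.mem_of_tendsto htend (Filter.Eventually.of_forall hsmem)


lemma abs_sub_le_abs_one_sub_mul (z : ℂ) (b : ℝ) (hz : ‖z‖ ≤ 1)
    (hb0 : 0 ≤ b) (hb1 : b ≤ 1) :
    ‖(z - (b : ℂ))‖ ≤ ‖(1 - (b : ℂ) * z)‖ := by
  rw [Complex.norm_def, Complex.norm_def]
  apply Real.sqrt_le_sqrt
  have hz2 : z.re ^ 2 + z.im ^ 2 ≤ 1 := by
    have := Complex.sq_norm z
    have h1 : ‖z‖ ^ 2 ≤ 1 := by nlinarith [norm_nonneg z]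
    rw [Complex.normSq_apply] at this
    nlinarith
  simp only [Complex.normSq_apply, Complex.sub_re, Complex.sub_im, Complex.one_re,
    Complex.one_im, Complex.mul_re, Complex.mul_im, Complex.ofReal_re, Complex.ofReal_im]
  nlinarith [mul_nonneg (by nlinarith : (0:ℝ) ≤ 1 - b*b) (by nlinarith : (0:ℝ) ≤ 1 - (z.re^2+z.im^2))]

lemma exists_disc_peak {X : Type*} [TopologicalSpace X] [CompactSpace X] (A : Subalgebra ℂ C(X, ℂ)) (hA : IsClosed (A : Set C(X, ℂ)))
    (x : X) (hx : x ∈ choquetBdry A)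
    (U : Set X) (hU : IsOpen U) (hxU : x ∈ U) (ε : ℝ) (hε : 0 < ε) :
    ∃ h : C(X, ℂ), h ∈ A ∧ h x = 1 ∧ (∀ y, ‖h y - 1/2‖ ≤ 1/2) ∧
      ∀ y, y ∉ U → ‖h y‖ ≤ ε := by
  obtain ⟨g, hg, hgx, hgabs, hgsmall⟩ := exists_small_peak A x hx U hU hxU (1/2) (by norm_num)
  obtain ⟨e, he⟩ : ∃ e : ℝ, e = min ε 1 := ⟨_, rfl⟩
  have he0 : 0 < e := he ▸ lt_min hε one_pos
  have he1 : e ≤ 1 := he ▸ min_le_right _ _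
  have heε : e ≤ ε := he ▸ min_le_left _ _
  obtain ⟨b, hb⟩ : ∃ b : ℝ, b = 1 - e / 2 := ⟨_, rfl⟩
  have hb0 : 0 ≤ b := by rw [hb]; linarith
  have hb1 : b < 1 := by rw [hb]; linarith
  have hb1' : b ≤ 1 := le_of_lt hb1
  obtain ⟨q, hq, hqy⟩ := inv_mem_of_closed A hA g hg hgabs b hb0 hb1
  set h : C(X, ℂ) := (((1 - b : ℝ) : ℂ) / 2) • ((1 + g) * q) with hh
  have hden0 : ∀ y, (1 : ℂ) - (b : ℂ) * g y ≠ 0 := by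
    intro y h0
    have h1 : ‖(1 - (b : ℂ) * g y)‖ = 0 := by rw [h0, norm_zero]
    have h2 := norm_sub_norm_le (1 : ℂ) ((b : ℂ) * g y)
    rw [norm_one] at h2
    have h3 : ‖((b : ℂ) * g y)‖ ≤ b := by
      rw [norm_mul, Complex.norm_real, Real.norm_eq_abs, _root_.abs_of_nonneg hb0]
      nlinarith [hgabs y, norm_nonneg (g y)]
    rw [h1] at h2
    linarith
  have hval : ∀ y, h y = ((1 - b : ℝ) : ℂ) / 2 * ((1 + g y) * (1 - (b : ℂ) * g y)⁻¹) := by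
    intro y
    rw [hh]
    simp only [ContinuousMap.smul_apply, ContinuousMap.mul_apply, ContinuousMap.add_apply,
      ContinuousMap.one_apply, smul_eq_mul, hqy y]
  refine ⟨h, ?_, ?_, ?_, ?_⟩
  · exact Subalgebra.smul_mem A (mul_mem (add_mem (one_mem A) hg) hq) _
  · rw [hval, hgx]
    have : (1 : ℂ) - (b : ℂ) * 1 = ((1 - b : ℝ) : ℂ) := by push_cast; ring
    rw [this]
    have hne : ((1 - b : ℝ) : ℂ) ≠ 0 := by
      simp only [ne_eq, Complex.ofReal_eq_zero]
      linarith
    rw [show (1:ℂ) + 1 = 2 by norm_num]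
    field_simp
  · intro y
    have hkey : h y - 1/2 = (g y - (b : ℂ)) / (2 * (1 - (b : ℂ) * g y)) := by
      rw [hval]
      field_simp [hden0 y, show (1:ℂ) - g y * b ≠ 0 by rw [mul_comm]; exact hden0 y]
      push_cast
      ring
    rw [hkey, norm_div]
    have h1 : ‖(g y - (b : ℂ))‖ ≤ ‖(1 - (b : ℂ) * g y)‖ :=
      abs_sub_le_abs_one_sub_mul (g y) b (hgabs y) hb0 hb1'
    have h2 : ‖(2 * (1 - (b : ℂ) * g y))‖ = 2 * ‖(1 - (b : ℂ) * g y)‖ := by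
      rw [norm_mul, Complex.norm_two]
    have h3 : 0 < ‖(1 - (b : ℂ) * g y)‖ :=
      (norm_pos_iff).mpr (hden0 y)
    rw [h2, div_le_iff₀ (by linarith)]
    linarith
  · intro y hy
    have hgs := hgsmall y hy
    have hdlow : 1/2 ≤ ‖(1 - (b : ℂ) * g y)‖ := by
      have h2 := norm_sub_norm_le (1 : ℂ) ((b : ℂ) * g y)
      rw [norm_one] at h2
      have h3 : ‖((b : ℂ) * g y)‖ ≤ 1/2 := by
        rw [norm_mul, Complex.norm_real, Real.norm_eq_abs, _root_.abs_of_nonneg hb0]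
        nlinarith [norm_nonneg (g y)]
      linarith
    have hnum : ‖1 + g y‖ ≤ 3/2 := by
      calc ‖1 + g y‖ ≤ ‖1‖ + ‖g y‖ := norm_add_le _ _
        _ ≤ 3/2 := by rw [norm_one]; linarith
    rw [hval, norm_mul, norm_mul, norm_div, Complex.norm_real, Real.norm_eq_abs, Complex.norm_two, norm_inv,
      _root_.abs_of_nonneg (by linarith : (0:ℝ) ≤ 1 - b)]
    have h3 : 0 < ‖(1 - (b : ℂ) * g y)‖ := by linarith
    have hinv : (‖(1 - (b : ℂ) * g y)‖)⁻¹ ≤ 2 :=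
      (inv_le_comm₀ h3 (by norm_num)).mpr (by simpa using hdlow)
    calc (1 - b) / 2 * (‖1 + g y‖ * (‖(1 - (b : ℂ) * g y)‖)⁻¹)
        ≤ (1 - b) / 2 * ((3/2) * 2) := by
          apply mul_le_mul_of_nonneg_left _ (by linarith)
          apply mul_le_mul hnum hinv (by positivity) (by norm_num)
      _ = (3/2) * (e/2) := by rw [hb]; ring
      _ ≤ ε := by linarith


lemma claim_crude (lam α w fv : ℂ) (r : ℝ) (hr0 : 0 < r) (hr1 : r < 1)
    (hlam : ‖lam‖ = 1) (hα : ‖α‖ ≤ 1) (hfv : ‖fv‖ ≤ 1)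
    (hw : ‖w‖ ≤ (1 - r) / 2) :
    ‖((lam - (r:ℂ) * α) * w + (r:ℂ) * fv)‖ ≤ 1 ∧
    ‖((-lam - (r:ℂ) * α) * w + (r:ℂ) * fv)‖ ≤ 1 := by
  have habs : ∀ l : ℂ, ‖l‖ = 1 →
      ‖((l - (r:ℂ) * α) * w + (r:ℂ) * fv)‖ ≤ 1 := by
    intro l hl
    have h1 : ‖(l - (r:ℂ) * α)‖ ≤ 1 + r := by
      calc ‖(l - (r:ℂ) * α)‖ ≤ ‖l‖ + ‖((r:ℂ) * α)‖ :=
            norm_sub_le _ _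
        _ ≤ 1 + r := by
            rw [hl, norm_mul, Complex.norm_real, Real.norm_eq_abs, _root_.abs_of_nonneg hr0.le]
            nlinarith [norm_nonneg α]
    calc ‖((l - (r:ℂ) * α) * w + (r:ℂ) * fv)‖
        ≤ ‖((l - (r:ℂ) * α) * w)‖ + ‖((r:ℂ) * fv)‖ :=
          norm_add_le _ _
      _ = ‖(l - (r:ℂ) * α)‖ * ‖w‖ + r * ‖fv‖ := by
          rw [norm_mul, norm_mul, Complex.norm_real, Real.norm_eq_abs, _root_.abs_of_nonneg hr0.le]
      _ ≤ (1 + r) * ((1 - r) / 2) + r * 1 := by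
          apply add_le_add
          · exact mul_le_mul h1 hw (norm_nonneg _) (by linarith)
          · exact mul_le_mul_of_nonneg_left hfv hr0.le
      _ ≤ 1 := by nlinarith
  refine ⟨habs lam hlam, habs (-lam) (by rw [norm_neg, hlam])⟩

lemma claim_fine (lam α w fv : ℂ) (r t : ℝ) (hr0 : 0 < r) (hr1 : r < 1)
    (hlam : ‖lam‖ = 1) (ht : t = ‖α‖) (ht1 : t ≤ 1)
    (hαlam : (t : ℂ) * lam = α)
    (hw1 : ‖w‖ ≤ 1) (hdisc : ‖w - 1/2‖ ≤ 1/2)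
    (hfine : 2 * r * ‖fv - α‖ ≤ (1 - r)^2 * (1 - ‖w‖)) :
    ‖((lam - (r:ℂ) * α) * w + (r:ℂ) * fv)‖ ≤ 1 ∧
    ‖((-lam - (r:ℂ) * α) * w + (r:ℂ) * fv)‖ ≤ 1 := by
  have ht0 : 0 ≤ t := ht ▸ norm_nonneg α
  obtain ⟨s, hs⟩ : ∃ s : ℝ, s = ‖w‖ := ⟨_, rfl⟩
  obtain ⟨d, hd⟩ : ∃ d : ℝ, d = ‖fv - α‖ := ⟨_, rfl⟩
  rw [← hs] at hw1
  rw [← hd, ← hs] at hfine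
  have hs0 : 0 ≤ s := hs ▸ norm_nonneg _
  have hd0 : 0 ≤ d := hd ▸ norm_nonneg _
  have hrt0 : 0 ≤ r * t := mul_nonneg hr0.le ht0
  have hrt1 : r * t ≤ 1 := by nlinarith
  have hwre : (w.re)^2 + (w.im)^2 ≤ w.re := by
    have h := hdisc
    rw [Complex.norm_def] at h
    have h2 : Complex.normSq (w - 1/2) ≤ (1/2)^2 := by
      have := Real.sqrt_le_sqrt (le_of_eq (rfl : Complex.normSq (w - 1/2) = _))
      nlinarith [Real.sq_sqrt (Complex.normSq_nonneg (w - 1/2)),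
        Real.sqrt_nonneg (Complex.normSq (w - 1/2))]
    rw [Complex.normSq_apply] at h2
    simp only [Complex.sub_re, Complex.sub_im] at h2
    have hre : ((1:ℂ)/2).re = 1/2 := by norm_num
    have him : ((1:ℂ)/2).im = 0 := by norm_num
    rw [hre, him] at h2
    nlinarith
  have hsq : s^2 = (w.re)^2 + (w.im)^2 := by
    rw [hs, Complex.sq_norm, Complex.normSq_apply]; ring
  constructor
  · -- g₊
    have key : (lam - (r:ℂ) * α) * w + (r:ℂ) * fv
        = lam * (((1 - r*t : ℝ) : ℂ) * w + ((r*t : ℝ) : ℂ)) + (r:ℂ) * (fv - α) := by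
      rw [← hαlam]; push_cast; ring
    rw [key]
    calc ‖_‖ ≤ ‖(lam * (((1 - r*t : ℝ) : ℂ) * w + ((r*t : ℝ) : ℂ)))‖
          + ‖((r:ℂ) * (fv - α))‖ := norm_add_le _ _
      _ = ‖(((1 - r*t : ℝ) : ℂ) * w + ((r*t : ℝ) : ℂ))‖ + r * d := by
          rw [norm_mul, norm_mul, hlam, one_mul, Complex.norm_real, Real.norm_eq_abs,
            _root_.abs_of_nonneg hr0.le, ← hd]
      _ ≤ ((1 - r*t) * s + r*t) + r * d := by
          apply add_le_add_left
          calc ‖(((1 - r*t : ℝ) : ℂ) * w + ((r*t : ℝ) : ℂ))‖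
              ≤ ‖(((1 - r*t : ℝ) : ℂ) * w)‖ + ‖(((r*t : ℝ) : ℂ))‖ :=
                norm_add_le _ _
            _ = (1 - r*t) * s + r*t := by
                rw [norm_mul, Complex.norm_real, Real.norm_eq_abs, Complex.norm_real, Real.norm_eq_abs,
                  _root_.abs_of_nonneg (by linarith : (0:ℝ) ≤ 1 - r*t),
                  _root_.abs_of_nonneg hrt0, ← hs]
      _ ≤ 1 := by
          have hts : r * t ≤ r := by nlinarith
          have h2 : (1 - r)^2 * (1 - s) ≤ (1 - r*t) * (1 - s) :=
            mul_le_mul_of_nonneg_right (by nlinarith) (by linarith)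
          nlinarith [hfine, h2, hd0, mul_nonneg hr0.le hd0]
  · -- g₋
    have key : (-lam - (r:ℂ) * α) * w + (r:ℂ) * fv
        = lam * (-(((1 + r*t : ℝ) : ℂ) * w - ((r*t : ℝ) : ℂ))) + (r:ℂ) * (fv - α) := by
      rw [← hαlam]; push_cast; ring
    rw [key]
    have hz : ‖(((1 + r*t : ℝ) : ℂ) * w - ((r*t : ℝ) : ℂ))‖ ≤ 1 - r * d := by
      have hrd1 : 2 * (r*d) ≤ 1 := by nlinarith
      apply le_of_pow_le_pow_left₀ (by norm_num : (2:ℕ) ≠ 0) (by linarith)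
      rw [Complex.sq_norm, Complex.normSq_apply]
      simp only [Complex.sub_re, Complex.sub_im, Complex.mul_re, Complex.mul_im,
        Complex.ofReal_re, Complex.ofReal_im]
      have e1 : 2*r*d ≤ (1 - r^2*t^2) * (1 - s^2) := by
        have hA : (1-r)^2 ≤ 1 - r^2*t^2 := by nlinarith
        have hB : (1-s) ≤ 1 - s^2 := by nlinarith
        have hC := mul_le_mul hA hB (by linarith) (by nlinarith)
        linarith
      have hres : s^2 ≤ w.re := by nlinarith [hwre, hsq]
      have hP : 0 ≤ (r*t*(1+r*t)) * (w.re - s^2) :=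
        mul_nonneg (mul_nonneg hrt0 (by linarith)) (by linarith)
      have e3 : (1+r*t)^2 * s^2 = (1+r*t)^2*(w.re^2+w.im^2) := by rw [hsq]
      linarith [e1, hP, e3, sq_nonneg (r*d)]
    calc ‖_‖ ≤ ‖(lam * (-(((1 + r*t : ℝ) : ℂ) * w - ((r*t : ℝ) : ℂ))))‖
          + ‖((r:ℂ) * (fv - α))‖ := norm_add_le _ _
      _ = ‖(((1 + r*t : ℝ) : ℂ) * w - ((r*t : ℝ) : ℂ))‖ + r * d := by
          rw [norm_mul, norm_neg, norm_mul, hlam, one_mul, Complex.norm_real, Real.norm_eq_abs,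
            _root_.abs_of_nonneg hr0.le, ← hd]
      _ ≤ (1 - r*d) + r*d := by linarith [hz]
      _ = 1 := by ring

/-- **An additive Bishop's lemma.** For `f ∈ S(A)`, `x ∈ Ch(A)`, `α = f(x)`,
`λ = α/|α|` (`λ = 1` if `α = 0`) and `0 < r < 1`, there is a peaking function `u` for
`x` such that `g₊ = (λ - rα)·u + r·f` and `g₋ = (-λ - rα)·u + r·f` lie in `S(A)` with
`g₊(x) = λ` and `g₋(x) = -λ`. -/
theorem additive_bishop_lemma
    {X : Type*} [TopologicalSpace X] [CompactSpace X] [T2Space X] [Nonempty X]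
    (A : Subalgebra ℂ C(X, ℂ)) (hA : IsClosed (A : Set C(X, ℂ)))
    (hAsep : ∀ x₁ x₂ : X, x₁ ≠ x₂ → ∃ f ∈ A, f x₁ ≠ f x₂)
    (f : C(X, ℂ)) (hf : f ∈ uaSphere A)
    (x : X) (hx : x ∈ choquetBdry A)
    (α : ℂ) (hα : α = f x)
    (lam : ℂ) (hlam : lam = if α = 0 then 1 else α / (‖α‖ : ℂ))
    (r : ℝ) (hr0 : 0 < r) (hr1 : r < 1) :
    ∃ u : C(X, ℂ), u ∈ A ∧
      (u x = 1 ∧ ‖u‖ = 1 ∧ {y | u y = 1} = {y | ‖u y‖ = 1}) ∧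
      (lam - (r : ℂ) * α) • u + (r : ℂ) • f ∈ uaSphere A ∧
      (-lam - (r : ℂ) * α) • u + (r : ℂ) • f ∈ uaSphere A ∧
      ((lam - (r : ℂ) * α) • u + (r : ℂ) • f) x = lam ∧
      ((-lam - (r : ℂ) * α) • u + (r : ℂ) • f) x = -lam := by
  classical
  obtain ⟨hfA, hfnorm⟩ := hf
  have hfabs : ∀ y, ‖f y‖ ≤ 1 := fun y => by
    have := ContinuousMap.norm_coe_le_norm f y
    rwa [hfnorm] at this
  obtain ⟨t, ht⟩ : ∃ t : ℝ, t = ‖α‖ := ⟨_, rfl⟩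
  have ht0 : 0 ≤ t := ht ▸ norm_nonneg α
  have ht1 : t ≤ 1 := by rw [ht, hα]; exact hfabs x
  have hlamabs : ‖lam‖ = 1 := by
    rw [hlam]; split_ifs with h0
    · simp
    · rw [norm_div, Complex.norm_real, Real.norm_eq_abs, _root_.abs_of_nonneg (norm_nonneg α),
        div_self (by simpa [norm_eq_zero] using h0)]
  have hαlam : (t : ℂ) * lam = α := by
    rw [hlam]; split_ifs with h0
    · rw [h0] at ht ⊢
      rw [ht]; simp
    · rw [ht]
      have hne : (‖α‖ : ℂ) ≠ 0 := by
        simpa [Complex.ofReal_eq_zero, norm_eq_zero] using h0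
      field_simp
  -- constants
  obtain ⟨c, hcdef⟩ : ∃ c : ℝ, c = (1 - r)^2 / (2*r) := ⟨_, rfl⟩
  have hc : 0 < c := by
    rw [hcdef]; exact div_pos (pow_pos (by linarith) 2) (by linarith)
  have h2rc : 2 * r * c = (1 - r)^2 := by rw [hcdef]; field_simp
  obtain ⟨ε, hεdef⟩ : ∃ ε : ℝ, ε = (1 - r)/2 := ⟨_, rfl⟩
  have hε0 : 0 < ε := by rw [hεdef]; linarith
  have hε2 : ε ≤ 1/2 := by rw [hεdef]; linarith
  -- neighborhoods
  have hWopen : ∀ n : ℕ, IsOpen {y | ‖f y - α‖ < c * (1/2)^(n+2)} := by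
    intro n
    have hcont : Continuous fun y => ‖f y - α‖ :=
      continuous_norm.comp ((map_continuous f).sub continuous_const)
    exact isOpen_lt hcont continuous_const
  have hWx : ∀ n : ℕ, x ∈ {y | ‖f y - α‖ < c * (1/2)^(n+2)} := by
    intro n
    have : ‖f x - α‖ = 0 := by rw [hα]; simp
    simp only [Set.mem_setOf_eq, this]
    positivity
  choose h hmem hx1 hball hsmall using fun n : ℕ =>
    exists_disc_peak A hA x hx _ (hWopen n) (hWx n) ε hε0
  have habs1 : ∀ n y, ‖h n y‖ ≤ 1 := by
    intro n y
    calc ‖h n y‖ ≤ ‖h n y - 1/2‖ + ‖(1/2 : ℂ)‖ := by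
          have := norm_add_le (h n y - 1/2) (1/2)
          simpa using this
      _ ≤ 1/2 + 1/2 := by
          have h2 : ‖(1/2 : ℂ)‖ = 1/2 := by
            rw [norm_div, norm_one, Complex.norm_two]
          rw [h2]; exact add_le_add_left (hball n y) _
      _ = 1 := by norm_num
  -- the series
  set F : ℕ → C(X, ℂ) := fun n => ((1:ℂ)/2)^(n+1) • h n with hF
  have hFnorm : ∀ n, ‖F n‖ ≤ (1/2 : ℝ)^(n+1) := by
    intro n
    rw [hF]
    simp only [norm_smul, norm_pow]
    have h1 : ‖(1:ℂ)/2‖ = (1/2 : ℝ) := by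
      rw [norm_div, norm_one, Complex.norm_ofNat]
    rw [h1]
    have h2 : ‖h n‖ ≤ 1 := by
      rw [ContinuousMap.norm_le _ zero_le_one]
      intro y; exact habs1 n y
    calc (1/2 : ℝ)^(n+1) * ‖h n‖ ≤ (1/2 : ℝ)^(n+1) * 1 :=
          mul_le_mul_of_nonneg_left h2 (by positivity)
      _ = (1/2 : ℝ)^(n+1) := mul_one _
  have hsummable : Summable F :=
    Summable.of_norm_bounded hasSum_geom_half_real.summable hFnorm
  set u : C(X, ℂ) := ∑' n, F n with hu
  have hasumF : HasSum F u := hsummable.hasSum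
  have humem : u ∈ A := by
    apply hA.mem_of_tendsto hasumF.tendsto_sum_nat
    apply Filter.Eventually.of_forall
    intro n
    exact Subalgebra.sum_mem A fun k _ => Subalgebra.smul_mem A (hmem k) _
  have hu_app : ∀ y, HasSum (fun n => ((1:ℂ)/2)^(n+1) * h n y) (u y) := by
    intro y
    have := (ContinuousMap.evalCLM ℂ y).hasSum hasumF
    simpa [hF] using this
  have hux : u x = 1 := by
    have h1 : HasSum (fun n => ((1:ℂ)/2)^(n+1)) (u x) := by
      have := hu_app x
      simpa [hx1] using this
    exact h1.unique hasSum_geom_half_complex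
  have huball : ∀ y, ‖u y - 1/2‖ ≤ 1/2 := by
    intro y
    have h1 : HasSum (fun n => ((1:ℂ)/2)^(n+1) * (h n y - 1/2)) (u y - 1/2) := by
      have h2 := (hu_app y).sub (hasSum_geom_half_complex.mul_right (1/2))
      rw [one_mul] at h2
      convert h2 using 2 with n
      · rfl
      ring
    have h3 : HasSum (fun n : ℕ => ((1:ℝ)/2)^(n+1) * (1/2)) (1/2 : ℝ) := by
      have := hasSum_geom_half_real.mul_right (1/2 : ℝ)
      rwa [one_mul] at this
    apply hasSum_abs_le h1 h3
    intro n
    rw [norm_mul, norm_pow]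
    have e1 : ‖((1:ℂ)/2)‖ = 1/2 := by
      rw [norm_div, norm_one, Complex.norm_two]
    rw [e1]
    exact mul_le_mul_of_nonneg_left (hball n y) (by positivity)
  have hule : ∀ y, ‖u y‖ ≤ 1 := by
    intro y
    calc ‖u y‖ ≤ ‖u y - 1/2‖ + ‖(1/2 : ℂ)‖ := by
          have := norm_add_le (u y - 1/2) (1/2)
          simpa using this
      _ ≤ 1/2 + 1/2 := by
          rw [show ‖(1/2 : ℂ)‖ = 1/2 by rw [norm_div, norm_one, Complex.norm_two]]
          exact add_le_add_left (huball y) _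
      _ = 1 := by norm_num
  have hunorm : ‖u‖ = 1 := by
    apply le_antisymm
    · rw [ContinuousMap.norm_le _ zero_le_one]
      intro y; exact hule y
    · have := ContinuousMap.norm_coe_le_norm u x
      rwa [hux, norm_one] at this
  have hupeak : {y | u y = 1} = {y | ‖u y‖ = 1} := by
    ext y
    simp only [Set.mem_setOf_eq]
    constructor
    · intro h1; rw [h1, norm_one]
    · intro h1
      have hb := huball y
      have h2 : ‖u y - 1/2‖ ^ 2 ≤ (1/2)^2 := by
        apply pow_le_pow_left₀ (norm_nonneg _) hb
      rw [Complex.sq_norm, Complex.normSq_apply] at h2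
      have h3 : ‖u y‖ ^ 2 = 1 := by rw [h1]; norm_num
      rw [Complex.sq_norm, Complex.normSq_apply] at h3
      simp only [Complex.sub_re, Complex.sub_im] at h2
      have hre : ((1:ℂ)/2).re = 1/2 := by norm_num
      have him : ((1:ℂ)/2).im = 0 := by norm_num
      rw [hre, him] at h2
      have hre1 : 1 ≤ (u y).re := by nlinarith
      have hre2 : (u y).re ≤ 1 := by
        have := Complex.re_le_norm (u y); rw [h1] at this; exact this
      have him0 : (u y).im = 0 := by nlinarith
      exact Complex.ext (by rw [Complex.one_re]; linarith) (by rw [Complex.one_im]; exact him0)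
  -- tail estimate
  have htail : ∀ (y : X) (N : ℕ), (∀ n, N ≤ n → ‖h n y‖ ≤ ε) →
      ‖u y‖ ≤ ε + (1 - ε) * (1 - (1/2)^N) := by
    intro y N hN
    have hg1 : HasSum (fun n : ℕ => ((1:ℝ)/2)^(n+1) * ε) ε := by
      have := hasSum_geom_half_real.mul_right ε
      rwa [one_mul] at this
    have hg2 : HasSum (fun n : ℕ => if n < N then ((1:ℝ)/2)^(n+1) * (1 - ε) else 0)
        ((1 - ε) * (1 - (1/2)^N)) := by
      have hsupp : ∀ n ∉ Finset.range N,
          (if n < N then ((1:ℝ)/2)^(n+1) * (1 - ε) else 0) = 0 := by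
        intro n hn
        rw [if_neg (by simpa using hn)]
      have := hasSum_sum_of_ne_finset_zero (L := SummationFilter.unconditional ℕ) hsupp
      convert this using 1
      rw [Finset.sum_congr rfl (fun n hn => if_pos (Finset.mem_range.mp hn))]
      rw [← Finset.sum_mul, sum_geom_half_range]
      ring
    have hg : HasSum (fun n : ℕ => ((1:ℝ)/2)^(n+1) * ε
        + if n < N then ((1:ℝ)/2)^(n+1) * (1 - ε) else 0)
        (ε + (1 - ε) * (1 - (1/2)^N)) := hg1.add hg2
    apply hasSum_abs_le (hu_app y) hg
    intro n
    rw [norm_mul, norm_pow, show ‖((1:ℂ)/2)‖ = 1/2 by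
      rw [norm_div, norm_one, Complex.norm_two]]
    by_cases hn : n < N
    · rw [if_pos hn]
      have : ((1:ℝ)/2)^(n+1) * ε + ((1:ℝ)/2)^(n+1) * (1-ε) = ((1:ℝ)/2)^(n+1) := by ring
      rw [this]
      calc ((1:ℝ)/2)^(n+1) * ‖h n y‖ ≤ ((1:ℝ)/2)^(n+1) * 1 :=
            mul_le_mul_of_nonneg_left (habs1 n y) (by positivity)
        _ = ((1:ℝ)/2)^(n+1) := mul_one _
    · rw [if_neg hn, add_zero]
      exact mul_le_mul_of_nonneg_left (hN n (le_of_not_gt hn)) (by positivity)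
  -- the main pointwise bound
  have hGbound : ∀ y, ‖((lam - (r:ℂ) * α) * u y + (r:ℂ) * f y)‖ ≤ 1 ∧
      ‖((-lam - (r:ℂ) * α) * u y + (r:ℂ) * f y)‖ ≤ 1 := by
    intro y
    by_cases hally : ∀ n : ℕ, ‖f y - α‖ < c * (1/2)^(n+2)
    · -- f y = α case
      have hd0 : ‖f y - α‖ = 0 := by
        by_contra hne
        have hpos : 0 < ‖f y - α‖ :=
          lt_of_le_of_ne (norm_nonneg _) (Ne.symm hne)
        obtain ⟨n, hn⟩ := exists_pow_lt_of_lt_one (div_pos hpos hc)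
          (by norm_num : (1:ℝ)/2 < 1)
        have h1 : ((1:ℝ)/2)^(n+2) ≤ ((1:ℝ)/2)^n :=
          pow_le_pow_of_le_one (by norm_num) (by norm_num) (by omega)
        have h2 := hally (n)
        have h3 : c * (1/2)^(n+2) < ‖f y - α‖ := by
          calc c * (1/2)^(n+2) ≤ c * (1/2)^n :=
                mul_le_mul_of_nonneg_left h1 hc.le
            _ < c * (‖f y - α‖ / c) :=
                mul_lt_mul_of_pos_left hn hc
            _ = ‖f y - α‖ := by field_simp
        linarith
      apply claim_fine lam α (u y) (f y) r t hr0 hr1 hlamabs ht ht1 hαlam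
        (hule y) (huball y)
      rw [hd0]
      have := hule y
      nlinarith
    · push_neg at hally
      set N₀ := Nat.find hally with hN₀
      have hspec : c * (1/2)^(N₀+2) ≤ ‖f y - α‖ := Nat.find_spec hally
      have hmin : ∀ m, m < N₀ → ‖f y - α‖ < c * (1/2)^(m+2) := by
        intro m hm
        have := Nat.find_min hally hm
        push_neg at this
        linarith [this]
      have hsmalltail : ∀ n, N₀ ≤ n → ‖h n y‖ ≤ ε := by
        intro n hn
        apply hsmall n y
        intro hmem'
        have h1 : ((1:ℝ)/2)^(n+2) ≤ ((1:ℝ)/2)^(N₀+2) :=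
          pow_le_pow_of_le_one (by norm_num) (by norm_num) (by omega)
        have h2 : ‖f y - α‖ < c * (1/2)^(n+2) := hmem'
        have h3 : c * (1/2)^(n+2) ≤ c * (1/2)^(N₀+2) :=
          mul_le_mul_of_nonneg_left h1 hc.le
        linarith
      have hutail := htail y N₀ hsmalltail
      rcases Nat.eq_zero_or_pos N₀ with hN0 | hNpos
      · -- crude case
        rw [hN0] at hutail
        simp only [pow_zero] at hutail
        have hcr : ‖u y‖ ≤ (1 - r)/2 := by
          rw [← hεdef]; linarith
        exact claim_crude lam α (u y) (f y) r hr0 hr1 hlamabs (ht ▸ ht1) (hfabs y) hcr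
      · -- fine case
        obtain ⟨m, hm⟩ : ∃ m, N₀ = m + 1 := ⟨N₀ - 1, by omega⟩
        have hd : ‖f y - α‖ < c * (1/2)^(m+2) := hmin m (by omega)
        apply claim_fine lam α (u y) (f y) r t hr0 hr1 hlamabs ht ht1 hαlam
          (hule y) (huball y)
        have hslack : (1/2 : ℝ)^(m+2) ≤ 1 - ‖u y‖ := by
          have h1 : ‖u y‖ ≤ ε + (1 - ε) * (1 - (1/2)^(m+1)) := hm ▸ hutail
          have h2 : (1 - ε) * (1 - (1 - (1/2:ℝ)^(m+1))) = (1-ε) * (1/2)^(m+1) := by ring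
          have h3 : (1/2 : ℝ) ≤ 1 - ε := by linarith
          have h4 : ((1:ℝ)/2) * (1/2)^(m+1) ≤ (1-ε) * (1/2)^(m+1) :=
            mul_le_mul_of_nonneg_right h3 (by positivity)
          have h5 : ((1:ℝ)/2) * (1/2)^(m+1) = (1/2)^(m+2) := by ring
          nlinarith [h1, h4]
        calc 2 * r * ‖f y - α‖ ≤ 2 * r * (c * (1/2)^(m+2)) := by
              apply mul_le_mul_of_nonneg_left hd.le (by positivity)
          _ = (1 - r)^2 * (1/2)^(m+2) := by rw [← h2rc]; ring
          _ ≤ (1 - r)^2 * (1 - ‖u y‖) := by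
              apply mul_le_mul_of_nonneg_left hslack (by positivity)
  -- assemble the result
  have happ : ∀ (l : ℂ) (y : X), ((l - (r:ℂ) * α) • u + (r:ℂ) • f) y
      = (l - (r:ℂ) * α) * u y + (r:ℂ) * f y := by
    intro l y
    simp [ContinuousMap.add_apply, ContinuousMap.smul_apply, smul_eq_mul]
  have hvalx : ∀ l : ℂ, ((l - (r:ℂ) * α) • u + (r:ℂ) • f) x = l := by
    intro l
    rw [happ, hux, ← hα]
    ring
  have hnormG : ∀ l : ℂ, ‖l‖ = 1 →
      (∀ y, ‖((l - (r:ℂ) * α) * u y + (r:ℂ) * f y)‖ ≤ 1) →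
      ‖(l - (r:ℂ) * α) • u + (r:ℂ) • f‖ = 1 := by
    intro l hl hb
    apply le_antisymm
    · rw [ContinuousMap.norm_le _ zero_le_one]
      intro y
      rw [happ]
      exact hb y
    · have := ContinuousMap.norm_coe_le_norm ((l - (r:ℂ) * α) • u + (r:ℂ) • f) x
      rwa [hvalx, hl] at this
  have hGmem : ∀ l : ℂ, (l - (r:ℂ) * α) • u + (r:ℂ) • f ∈ A := fun l =>
    add_mem (Subalgebra.smul_mem A humem _) (Subalgebra.smul_mem A hfA _)
  refine ⟨u, humem, ⟨hux, hunorm, hupeak⟩, ?_, ?_, hvalx lam, ?_⟩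
  · exact ⟨hGmem lam, hnormG lam hlamabs (fun y => (hGbound y).1)⟩
  · refine ⟨hGmem (-lam), hnormG (-lam) (by rw [norm_neg, hlamabs])
      (fun y => ?_)⟩
    have := (hGbound y).2
    convert this using 3
  · have := hvalx (-lam)
    exact this
end
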